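/- arXiv:1405.7859 — 12 statements merged into one kernel-verified Lean document; each statement's English description precedes it below -/
import Mathlib

section
/- Let G be a simple graph and let H be a shortest hole of G (i.e., an induced cycle of minimum length among all induced cycles of length at least 4) with |V(H)| ≥ 5. Then every vertex v of G that is not adjacent to all vertices of H is adjacent to at most three vertices of H, and the vertices of H adjacent to v are consecutive on H. -/
open SimpleGraph

variable {V : Type*}

/-- A *hole* is an induced cycle on at least 4 vertices, given as a closed walk:
the walk is a cycle of length at least 4, and any edge of `G` between support
vertices is an edge of the cycle. -/
def IsHole (G : SimpleGraph V) {v : V} (c : G.Walk v v) : Prop :=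
  c.IsCycle ∧ 4 ≤ c.length ∧
    ∀ x y : V, x ∈ c.support → y ∈ c.support → G.Adj x y → c.toSubgraph.Adj x y

/-- A graph is *chordal* if it contains no hole. -/
def ChordalGraph (G : SimpleGraph V) : Prop :=
  ∀ (v : V) (c : G.Walk v v), ¬ IsHole G c

/-- `N(X)`: the set of vertices outside `X` having a neighbor in `X`. -/
def extNbhd (G : SimpleGraph V) (X : Set V) : Set V :=
  {v | v ∉ X ∧ ∃ x ∈ X, G.Adj v x}


section Aux

variable {V : Type*} {G : SimpleGraph V} {u v w : V}

namespace SimpleGraph.Walk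



/-- take the first `n` steps of a walk -/
def wtake : {u v : V} → (p : G.Walk u v) → (n : ℕ) → G.Walk u (p.getVert n)
  | _, _, .nil, _ => .nil
  | _, _, .cons _ _, 0 => .nil
  | _, _, .cons h q, n+1 => .cons h (wtake q n)

/-- drop the first `n` steps of a walk -/
def wdrop : {u v : V} → (p : G.Walk u v) → (n : ℕ) → G.Walk (p.getVert n) v
  | _, _, .nil, _ => .nil
  | _, _, .cons h q, 0 => .cons h q
  | _, _, .cons _ q, n+1 => wdrop q n

@[simp] lemma wtake_length (p : G.Walk u v) (n : ℕ) (hn : n ≤ p.length) :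
    (p.wtake n).length = n := by
  induction p generalizing n with
  | nil => simp at hn; simp [hn, wtake]
  | cons h q ih =>
    cases n with
    | zero => rfl
    | succ n => simpa [wtake] using ih n (by simpa using hn)

@[simp] lemma wdrop_length (p : G.Walk u v) (n : ℕ) :
    (p.wdrop n).length = p.length - n := by
  induction p generalizing n with
  | nil => simp [wdrop]
  | cons h q ih =>
    cases n with
    | zero => rfl
    | succ n => simpa [wdrop] using ih n

lemma getVert_wtake (p : G.Walk u v) (n i : ℕ) (hi : i ≤ n) :
    (p.wtake n).getVert i = p.getVert i := by
  induction p generalizing n i with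
  | nil => simp [wtake]
  | cons h q ih =>
    cases n with
    | zero => interval_cases i; rfl
    | succ n =>
      cases i with
      | zero => rfl
      | succ i => simpa [wtake, getVert_cons_succ] using ih n i (by omega)

lemma getVert_wdrop (p : G.Walk u v) (n i : ℕ) :
    (p.wdrop n).getVert i = p.getVert (n + i) := by
  induction p generalizing n i with
  | nil => simp [wdrop, Walk.getVert]
  | cons h q ih =>
    cases n with
    | zero => simp [wdrop, Nat.zero_add]; rfl
    | succ n =>
      show (q.wdrop n).getVert i = (Walk.cons h q).getVert (n + 1 + i)
      rw [show n + 1 + i = (n + i) + 1 from by omega, getVert_cons_succ]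
      exact ih n i

lemma wtake_append_wdrop (p : G.Walk u v) (n : ℕ) :
    (p.wtake n).append (p.wdrop n) = p := by
  induction p generalizing n with
  | nil => simp [wtake, wdrop]
  | cons h q ih =>
    cases n with
    | zero => rfl
    | succ n => simp [wtake, wdrop, ih]

lemma support_eq_map (p : G.Walk u v) :
    p.support = (List.range (p.length + 1)).map p.getVert := by
  induction p with
  | nil => rfl
  | cons h q ih =>
    rw [support_cons, ih, length_cons]
    conv_rhs => rw [List.range_succ_eq_map]
    simp only [List.map_cons, List.map_map, Function.comp_def, getVert_cons_succ, getVert_zero]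

lemma edges_eq_map (p : G.Walk u v) :
    p.edges = (List.range p.length).map (fun i => s(p.getVert i, p.getVert (i+1))) := by
  induction p with
  | nil => rfl
  | cons h q ih =>
    rw [edges_cons, ih, length_cons]
    conv_rhs => rw [List.range_succ_eq_map]
    simp only [List.map_cons, List.map_map, Function.comp_def, getVert_cons_succ, getVert_zero]

lemma mem_edges_iff (p : G.Walk u v) {e : Sym2 V} :
    e ∈ p.edges ↔ ∃ i < p.length, e = s(p.getVert i, p.getVert (i+1)) := by
  rw [edges_eq_map]
  simp [eq_comm]



lemma support_tail_eq_map (p : G.Walk u v) :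
    p.support.tail = (List.range p.length).map (fun k => p.getVert (k + 1)) := by
  rw [support_eq_map, List.range_succ_eq_map]
  simp [List.map_map, Function.comp_def]

lemma IsCycle.getVert_injOn'' {c : G.Walk u u} (hc : c.IsCycle) {i j : ℕ}
    (hi : i < c.length) (hj : j < c.length) (hij : c.getVert i = c.getVert j) : i = j := by
  have hnd : c.support.tail.Nodup := hc.2
  rw [support_tail_eq_map] at hnd
  have hinj := List.inj_on_of_nodup_map hnd
  simp only [List.mem_range] at hinj
  have key : ∀ k l, k < c.length → l < c.length →
      c.getVert (k + 1) = c.getVert (l + 1) → k = l := fun k l hk hl h =>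
    hinj hk hl h
  rcases Nat.eq_zero_or_pos i with hi0 | hi0
  · rcases Nat.eq_zero_or_pos j with hj0 | hj0
    · omega
    · subst hi0
      rw [getVert_zero] at hij
      have hij : c.getVert c.length = c.getVert j := by rw [getVert_length]; exact hij
      have := key (c.length - 1) (j - 1) (by have := hc.three_le_length; omega) (by omega)
        (by rw [show c.length - 1 + 1 = c.length from by have := hc.three_le_length; omega,
          show j - 1 + 1 = j from by omega]; exact hij)
      omega
  · rcases Nat.eq_zero_or_pos j with hj0 | hj0
    · subst hj0
      rw [getVert_zero] at hij
      have hij : c.getVert i = c.getVert c.length := by rw [getVert_length]; exact hij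
      have := key (i - 1) (c.length - 1) (by omega) (by have := hc.three_le_length; omega)
        (by rw [show c.length - 1 + 1 = c.length from by have := hc.three_le_length; omega,
          show i - 1 + 1 = i from by omega]; exact hij)
      omega
    · have := key (i - 1) (j - 1) (by omega) (by omega)
        (by rw [show i - 1 + 1 = i from by omega, show j - 1 + 1 = j from by omega]; exact hij)
      omega

lemma toSubgraph_adj_iff_mem_edges (p : G.Walk u v) {x y : V} :
    p.toSubgraph.Adj x y ↔ s(x, y) ∈ p.edges := by
  rw [← Subgraph.mem_edgeSet, mem_edges_toSubgraph]

lemma toSubgraph_adj_getVert_mod {c : G.Walk u u} (hc : 2 ≤ c.length) (i : ℕ) :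
    c.toSubgraph.Adj (c.getVert (i % c.length)) (c.getVert ((i + 1) % c.length)) := by
  have hmod : i % c.length < c.length := Nat.mod_lt _ (by omega)
  have hadd : (i + 1) % c.length = (i % c.length + 1) % c.length := by
    conv_lhs => rw [Nat.add_mod, Nat.mod_eq_of_lt (show 1 < c.length by omega)]
  rcases Nat.lt_or_ge (i % c.length + 1) c.length with h | h
  · rw [hadd, Nat.mod_eq_of_lt h]
    exact toSubgraph_adj_getVert c hmod
  · have h1 : i % c.length = c.length - 1 := by omega
    have h2 : (i + 1) % c.length = 0 := by
      rw [hadd, h1, show c.length - 1 + 1 = c.length from by omega, Nat.mod_self]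
    rw [h1, h2, getVert_zero]
    have := toSubgraph_adj_getVert c (show c.length - 1 < c.length by omega)
    rwa [show c.length - 1 + 1 = c.length from by omega, getVert_length] at this

/-- Rotation of a closed walk by `r` steps. -/
def wrot (c : G.Walk u u) (r : ℕ) : G.Walk (c.getVert r) (c.getVert r) :=
  (c.wdrop r).append (c.wtake r)

lemma wrot_length (c : G.Walk u u) {r : ℕ} (hr : r ≤ c.length) :
    (c.wrot r).length = c.length := by
  rw [wrot, length_append, wdrop_length, wtake_length _ _ hr]; omega

lemma getVert_wrot (c : G.Walk u u) {r i : ℕ} (hr : r ≤ c.length) (hi : i < c.length) :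
    (c.wrot r).getVert i = c.getVert ((r + i) % c.length) := by
  rw [wrot, getVert_append, wdrop_length]
  split_ifs with h
  · rw [getVert_wdrop, Nat.mod_eq_of_lt (by omega)]
  · rw [getVert_wtake _ _ _ (by omega)]
    congr 1
    have : r + i - c.length = i - (c.length - r) := by omega
    rw [Nat.mod_eq_sub_mod (by omega), Nat.mod_eq_of_lt (by omega), this]

lemma support_tail_wrot_perm (c : G.Walk u u) (r : ℕ) :
    (c.wrot r).support.tail.Perm c.support.tail := by
  conv_rhs => rw [← wtake_append_wdrop c r]
  rw [wrot, tail_support_append, tail_support_append]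
  exact List.perm_append_comm

lemma edges_wrot_perm (c : G.Walk u u) (r : ℕ) :
    (c.wrot r).edges.Perm c.edges := by
  conv_rhs => rw [← wtake_append_wdrop c r]
  rw [wrot, edges_append, edges_append]
  exact List.perm_append_comm

lemma toSubgraph_wrot (c : G.Walk u u) (r : ℕ) :
    (c.wrot r).toSubgraph = c.toSubgraph := by
  conv_rhs => rw [← wtake_append_wdrop c r]
  rw [wrot, toSubgraph_append, toSubgraph_append, sup_comm]

lemma mem_support_wrot (c : G.Walk u u) {r : ℕ} (hr : r ≤ c.length) {x : V} :
    x ∈ (c.wrot r).support ↔ x ∈ c.support := by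
  rw [← mem_verts_toSubgraph, toSubgraph_wrot, mem_verts_toSubgraph]

lemma IsCycle.wrot {c : G.Walk u u} (hc : c.IsCycle) {r : ℕ} (hr : r ≤ c.length) :
    (c.wrot r).IsCycle := by
  rw [isCycle_def]
  refine ⟨⟨((edges_wrot_perm c r).nodup_iff).mpr hc.isTrail.edges_nodup⟩, ?_, ?_⟩
  · intro h
    have := wrot_length c hr
    rw [h] at this
    simp only [length_nil] at this
    have := hc.three_le_length
    omega
  · exact ((support_tail_wrot_perm c r).nodup_iff).mpr hc.2

lemma IsHole.wrot {c : G.Walk u u} (hc : IsHole G c) {r : ℕ} (hr : r ≤ c.length) :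
    IsHole G (c.wrot r) := by
  obtain ⟨h1, h2, h3⟩ := hc
  refine ⟨h1.wrot hr, by rw [wrot_length c hr]; exact h2, ?_⟩
  intro x y hx hy hadj
  rw [toSubgraph_wrot]
  exact h3 x y ((mem_support_wrot c hr).mp hx) ((mem_support_wrot c hr).mp hy) hadj

end SimpleGraph.Walk

namespace SimpleGraph.Walk

lemma mem_support_wtake {c : G.Walk u w} {j : ℕ} (hj : j ≤ c.length) {x : V} :
    x ∈ (c.wtake j).support ↔ ∃ i ≤ j, c.getVert i = x := by
  rw [mem_support_iff_exists_getVert]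
  constructor
  · rintro ⟨i, hx, hi⟩
    rw [wtake_length _ _ hj] at hi
    exact ⟨i, hi, by rw [← getVert_wtake _ _ _ hi]; exact hx⟩
  · rintro ⟨i, hi, hx⟩
    exact ⟨i, by rw [getVert_wtake _ _ _ hi]; exact hx, by rw [wtake_length _ _ hj]; exact hi⟩

end SimpleGraph.Walk

open SimpleGraph Walk in
lemma spliceFalse {G : SimpleGraph V} {h₀ : V} {c : G.Walk h₀ h₀}
    (hhole : IsHole G c)
    (hshortest : ∀ (w : V) (d : G.Walk w w), IsHole G d → c.length ≤ d.length)
    (hlen : 5 ≤ c.length) {v : V} (hv : v ∉ c.support)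
    {j : ℕ} (hj2 : 2 ≤ j) (hj3 : j + 3 ≤ c.length)
    (h0 : G.Adj v h₀) (hjadj : G.Adj v (c.getVert j))
    (hgap : ∀ k, 0 < k → k < j → ¬ G.Adj v (c.getVert k)) : False := by
  obtain ⟨hcyc, hc4, hind⟩ := hhole
  set n := c.length with hn
  have hjn : j ≤ n := by omega
  -- injectivity
  have inj : ∀ {i k : ℕ}, i < n → k < n → c.getVert i = c.getVert k → i = k :=
    fun hi hk h => hcyc.getVert_injOn'' hi hk h
  -- the path P
  set P : G.Walk h₀ (c.getVert j) := c.wtake j with hP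
  have hPlen : P.length = j := wtake_length _ _ hjn
  have hPget : ∀ i ≤ j, P.getVert i = c.getVert i := fun i hi => getVert_wtake _ _ _ hi
  have hPmem : ∀ {x : V}, x ∈ P.support ↔ ∃ i ≤ j, c.getVert i = x :=
    fun {x} => mem_support_wtake hjn
  have hPsubc : ∀ {x : V}, x ∈ P.support → x ∈ c.support := by
    intro x hx
    obtain ⟨i, hi, hix⟩ := hPmem.mp hx
    exact mem_support_iff_exists_getVert.mpr ⟨i, hix, by omega⟩
  have hvP : v ∉ P.support := fun h => hv (hPsubc h)
  have hPnodup : P.support.Nodup := by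
    rw [support_eq_map]
    refine (List.nodup_range).map_on ?_
    intro a ha b hb hab
    rw [List.mem_range] at ha hb
    rw [hPlen] at ha hb
    rw [hPget a (by omega), hPget b (by omega)] at hab
    exact inj (by omega) (by omega) hab
  -- the new closed walk W
  set W : G.Walk v v := Walk.cons h0 (P.append (Walk.cons hjadj.symm Walk.nil)) with hW
  have hWlen : W.length = j + 2 := by
    simp [hW, length_append, hPlen]
  have hWsupp : W.support = v :: (P.support ++ [v]) := by
    simp [hW, support_append]
  have hWedges : W.edges = s(v, h₀) :: (P.edges ++ [s(c.getVert j, v)]) := by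
    simp [hW, edges_append]
  have hness : h₀ = c.getVert 0 := (getVert_zero c).symm
  have h0j : h₀ ≠ c.getVert j := by
    intro h
    have h' : c.getVert 0 = c.getVert j := by rw [getVert_zero]; exact h
    have := inj (show 0 < n by omega) (show j < n by omega) h'
    omega
  -- W is a cycle
  have hWcyc : W.IsCycle := by
    rw [isCycle_def]
    refine ⟨⟨?_⟩, by simp [hW], ?_⟩
    · rw [hWedges]
      refine List.nodup_cons.mpr ⟨?_, ?_⟩
      · intro hmem
        rcases List.mem_append.mp hmem with hm | hm
        · exact hvP (fst_mem_support_of_mem_edges P hm)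
        · rw [List.mem_singleton] at hm
          rw [Sym2.eq_iff] at hm
          rcases hm with ⟨h1, h2⟩ | ⟨h1, h2⟩
          · exact h0.ne h2.symm
          · exact h0j h2
      · refine List.Nodup.append ?_ (List.nodup_singleton _) ?_
        · exact (isPath_def P).mpr hPnodup |>.isTrail.edges_nodup
        · intro e he he'
          rw [List.mem_singleton] at he'
          subst he'
          exact hvP (snd_mem_support_of_mem_edges P he)
    · rw [hWsupp]
      simp only [List.tail_cons]
      refine List.Nodup.append hPnodup (List.nodup_singleton _) ?_
      intro x hx hx'
      rw [List.mem_singleton] at hx'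
      subst hx'
      exact hvP hx
  -- W is a hole
  have hWhole : IsHole G W := by
    refine ⟨hWcyc, by omega, ?_⟩
    intro x y hx hy hxy
    rw [toSubgraph_adj_iff_mem_edges, hWedges]
    rw [hWsupp] at hx hy
    simp only [List.mem_cons, List.mem_append, List.mem_singleton] at hx hy
    have hx' : x = v ∨ x ∈ P.support := by tauto
    have hy' : y = v ∨ y ∈ P.support := by tauto
    -- helper: if v is adjacent to a vertex of P, it's an endpoint edge
    have hend : ∀ z ∈ P.support, G.Adj v z → z = h₀ ∨ z = c.getVert j := by
      intro z hz hadj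
      obtain ⟨i, hi, hiz⟩ := hPmem.mp hz
      rcases Nat.eq_zero_or_pos i with h' | h'
      · left; rw [← hiz, h', getVert_zero]
      · rcases Nat.lt_or_ge i j with h'' | h''
        · exact absurd hadj (hiz ▸ hgap i h' h'')
        · right; rw [← hiz]; congr 1; omega
    rcases hx' with rfl | hxP
    · rcases hy' with rfl | hyP
      · exact absurd hxy (G.loopless.irrefl _)
      · rcases hend y hyP hxy with rfl | rfl
        · exact List.mem_cons_self
        · simp
    · rcases hy' with rfl | hyP
      · rcases hend x hxP hxy.symm with rfl | rfl
        · rw [Sym2.eq_swap]; exact List.mem_cons_self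
        · simp
      · -- both on P: use that c is induced
        have hcadj : c.toSubgraph.Adj x y := hind x y (hPsubc hxP) (hPsubc hyP) hxy
        rw [toSubgraph_adj_iff_mem_edges, mem_edges_iff] at hcadj
        obtain ⟨i, hin, hie⟩ := hcadj
        obtain ⟨k, hk, hkx⟩ := hPmem.mp hxP
        obtain ⟨l, hl, hly⟩ := hPmem.mp hyP
        -- show the edge is an edge of P
        have hedge : ∀ m, m + 1 ≤ j → s(c.getVert m, c.getVert (m+1)) ∈ P.edges := by
          intro m hm
          rw [mem_edges_iff]
          exact ⟨m, by omega, by rw [hPget m (by omega), hPget (m+1) hm]⟩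
        rw [← hkx, ← hly] at hie
        rw [Sym2.eq_iff] at hie
        have main : ∀ k l : ℕ, k ≤ j → l ≤ j → c.getVert k = c.getVert i →
            c.getVert l = c.getVert (i+1) → s(c.getVert i, c.getVert (i+1)) ∈ P.edges := by
          intro k l hk hl h1 h2
          have hki : k = i := inj (by omega) hin h1
          rcases Nat.lt_or_ge (i+1) n with h' | h'
          · have hli : l = i + 1 := inj (by omega) h' h2
            exact hedge i (by omega)
          · have hin' : i + 1 = n := by omega
            have : c.getVert (i+1) = c.getVert 0 := by
              rw [hin', getVert_length, getVert_zero]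
            rw [this] at h2
            have : l = 0 := inj (by omega) (by omega) h2
            omega
        rcases hie with ⟨h1, h2⟩ | ⟨h1, h2⟩
        · have hmem := main k l hk hl h1 h2
          rw [← hkx, ← hly, h1, h2]
          exact List.mem_cons_of_mem _ (List.mem_append_left _ hmem)
        · have hmem := main l k hl hk h2 h1
          rw [Sym2.eq_swap] at hmem
          rw [← hkx, ← hly, h1, h2]
          exact List.mem_cons_of_mem _ (List.mem_append_left _ hmem)
  have := hshortest v W hWhole
  omega

open SimpleGraph Walk in
lemma spliceFalseRot {G : SimpleGraph V} {h₀ : V} {c : G.Walk h₀ h₀}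
    (hhole : IsHole G c)
    (hshortest : ∀ (w : V) (d : G.Walk w w), IsHole G d → c.length ≤ d.length)
    (hlen : 5 ≤ c.length) {v : V} (hv : v ∉ c.support)
    {r j : ℕ} (hr : r < c.length) (hj2 : 2 ≤ j) (hj3 : j + 3 ≤ c.length)
    (hradj : G.Adj v (c.getVert r))
    (hjadj : G.Adj v (c.getVert ((r + j) % c.length)))
    (hgap : ∀ k, 0 < k → k < j → ¬ G.Adj v (c.getVert ((r + k) % c.length))) : False := by
  have hrle : r ≤ c.length := hr.le
  have hlen' : (c.wrot r).length = c.length := wrot_length c hrle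
  have hhole' : IsHole G (c.wrot r) := Walk.IsHole.wrot hhole hrle
  refine spliceFalse hhole' (fun w d hd => by rw [hlen']; exact hshortest w d hd)
    (by rw [hlen']; omega) (by rw [mem_support_wrot c hrle]; exact hv) hj2
    (by rw [hlen']; omega) hradj ?_ ?_
  · rw [getVert_wrot c hrle (by omega)]; exact hjadj
  · intro k hk hkj
    rw [getVert_wrot c hrle (by omega)]
    exact hgap k hk hkj

lemma combiCore {n : ℕ} (hn : 5 ≤ n) (I : ℕ → Prop)
    (hIlt : ∀ i, I i → i < n)
    (hne : ∃ i, I i)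
    (hnotfull : ∃ i, i < n ∧ ¬ I i)
    (hB : ∀ r j, I r → I ((r + j) % n) → 2 ≤ j → j + 3 ≤ n →
         (∀ k, 0 < k → k < j → ¬ I ((r + k) % n)) → False) :
    ∃ r, I r ∧ ∀ i, I i → ∃ s ≤ 2, i = (r + s) % n := by
  classical
  have npos : 0 < n := by omega
  have hmodadd : ∀ a b : ℕ, b < n → ((a % n) + b) % n = (a + b) % n := by
    intro a b hb
    conv_rhs => rw [Nat.add_mod]
    rw [Nat.mod_eq_of_lt hb]
  -- the gap function
  have hgex : ∀ r, I r → ∃ j, 1 ≤ j ∧ I ((r + j) % n) := by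
    intro r hr
    exact ⟨n, by omega, by rw [Nat.add_mod_right, Nat.mod_eq_of_lt (hIlt r hr)]; exact hr⟩
  set g : ℕ → ℕ := fun r => if h : I r then Nat.find (hgex r h) else 0 with hg
  have hgspec : ∀ r, I r → 1 ≤ g r ∧ I ((r + g r) % n) ∧
      ∀ k, 0 < k → k < g r → ¬ I ((r + k) % n) := by
    intro r hr
    simp only [hg, dif_pos hr]
    obtain ⟨h1, h2⟩ := Nat.find_spec (hgex r hr)
    refine ⟨h1, h2, ?_⟩
    intro k hk hklt hIk
    exact absurd ⟨hk, hIk⟩ (Nat.find_min (hgex r hr) hklt)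
  have hgle : ∀ r, I r → g r ≤ n := by
    intro r hr
    simp only [hg, dif_pos hr]
    exact Nat.find_le ⟨by omega, by rw [Nat.add_mod_right, Nat.mod_eq_of_lt (hIlt r hr)]; exact hr⟩
  -- each gap is 1 or ≥ n - 2
  have hdich : ∀ r, I r → g r = 1 ∨ n - 2 ≤ g r := by
    intro r hr
    by_contra hcon
    push_neg at hcon
    obtain ⟨h1, h2⟩ := hcon
    obtain ⟨hg1, hg2, hg3⟩ := hgspec r hr
    exact hB r (g r) hr hg2 (by omega) (by omega) hg3
  -- if all gaps were 1, I would be everything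
  have hbig : ∃ m, I m ∧ n - 2 ≤ g m := by
    by_contra hcon
    push_neg at hcon
    have hall1 : ∀ r, I r → g r = 1 := by
      intro r hr
      rcases hdich r hr with h | h
      · exact h
      · exact absurd h (by have := hcon r hr; omega)
    obtain ⟨r0, hr0⟩ := hne
    have hstep : ∀ t, I ((r0 + t) % n) := by
      intro t
      induction t with
      | zero => rw [Nat.add_zero, Nat.mod_eq_of_lt (hIlt r0 hr0)]; exact hr0
      | succ t ih =>
        have := (hgspec _ ih).2.1
        rw [hall1 _ ih] at this
        have heq : ((r0 + t) % n + 1) % n = (r0 + (t + 1)) % n := by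
          rw [hmodadd _ _ (show 1 < n by omega), show r0 + t + 1 = r0 + (t + 1) from by omega]
        rwa [heq] at this
    obtain ⟨i, hi, hiI⟩ := hnotfull
    have hr0n := hIlt r0 hr0
    apply hiI
    have := hstep (n + i - r0)
    rwa [show r0 + (n + i - r0) = n + i from by omega, Nat.add_mod_left,
      Nat.mod_eq_of_lt hi] at this
  obtain ⟨m, hm, hmbig⟩ := hbig
  obtain ⟨hg1, hg2, hg3⟩ := hgspec m hm
  have hglen : g m ≤ n := hgle m hm
  refine ⟨(m + g m) % n, hg2, ?_⟩
  intro i hi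
  have him : i < n := hIlt i hi
  have hmn : m < n := hIlt m hm
  -- express i as (m + t) % n with t < n
  obtain ⟨t, htlt, hti⟩ : ∃ t, t < n ∧ (m + t) % n = i := by
    rcases Nat.lt_or_ge i m with h | h
    · exact ⟨n + i - m, by omega, by
        rw [show m + (n + i - m) = n + i from by omega, Nat.add_mod_left,
          Nat.mod_eq_of_lt him]⟩
    · exact ⟨i - m, by omega, by
        rw [show m + (i - m) = i from by omega, Nat.mod_eq_of_lt him]⟩
  rcases Nat.eq_zero_or_pos t with ht0 | ht0
  · -- i = m
    have him' : i = m := by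
      rw [ht0, Nat.add_zero, Nat.mod_eq_of_lt hmn] at hti
      omega
    refine ⟨n - g m, by omega, ?_⟩
    rw [hmodadd _ _ (by omega), show m + g m + (n - g m) = n + m from by omega,
      Nat.add_mod_left, Nat.mod_eq_of_lt hmn, him']
  · -- t ≥ g m, write i = (r + (t - g m)) % n
    have htg : g m ≤ t := by
      by_contra hcon
      exact (hg3 t ht0 (by omega)) (hti ▸ hi)
    refine ⟨t - g m, by omega, ?_⟩
    rw [hmodadd _ _ (by omega), show m + g m + (t - g m) = m + t from by omega, hti]

end Aux

open SimpleGraph.Walk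

/-- Let `H` (given as the closed walk `c`) be a shortest hole of `G`
with at least 5 vertices.  Every vertex `v` of `G` that is not adjacent to all
vertices of `H` is adjacent to at most three vertices of `H`, and these vertices
are consecutive on `H`: they are contained in a consecutive triple `a, b, d`. -/
theorem stmt0 {V : Type*} (G : SimpleGraph V) {h₀ : V} (c : G.Walk h₀ h₀)
    (hhole : IsHole G c)
    (hshortest : ∀ (w : V) (d : G.Walk w w), IsHole G d → c.length ≤ d.length)
    (hlen : 5 ≤ c.length) (v : V)
    (hv : ¬ ∀ x ∈ c.support, G.Adj v x) :
    ∃ a b d : V, a ∈ c.support ∧ b ∈ c.support ∧ d ∈ c.support ∧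
      c.toSubgraph.Adj a b ∧ c.toSubgraph.Adj b d ∧ a ≠ d ∧
      ∀ x ∈ c.support, G.Adj v x → (x = a ∨ x = b ∨ x = d) := by
  obtain ⟨hcyc, hc4, hind⟩ := hhole
  set n := c.length with hn
  have npos : 0 < n := by omega
  have inj : ∀ {i k : ℕ}, i < n → k < n → c.getVert i = c.getVert k → i = k :=
    fun hi hk h => hcyc.getVert_injOn'' hi hk h
  have hmodadd : ∀ a b : ℕ, b < n → ((a % n) + b) % n = (a + b) % n := by
    intro a b hb
    conv_rhs => rw [Nat.add_mod]
    rw [Nat.mod_eq_of_lt hb]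
  have fmod : ∀ i ≤ n, c.getVert i = c.getVert (i % n) := by
    intro i hi
    rcases Nat.lt_or_ge i n with h | h
    · rw [Nat.mod_eq_of_lt h]
    · have : i = n := by omega
      rw [this, Nat.mod_self, getVert_length, getVert_zero]
  have fmem : ∀ i, c.getVert (i % n) ∈ c.support := fun i =>
    mem_support_iff_exists_getVert.mpr ⟨i % n, rfl, by have := Nat.mod_lt i npos; omega⟩
  have adjmod : ∀ i, c.toSubgraph.Adj (c.getVert (i % n)) (c.getVert ((i + 1) % n)) :=
    fun i => toSubgraph_adj_getVert_mod (by omega) i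
  have memf : ∀ {x : V}, x ∈ c.support → ∃ i < n, c.getVert i = x := by
    intro x hx
    obtain ⟨i, hix, hi⟩ := mem_support_iff_exists_getVert.mp hx
    exact ⟨i % n, Nat.mod_lt _ npos, by rw [← fmod i hi]; exact hix⟩
  by_cases hvmem : v ∈ c.support
  · -- v is on the cycle: its neighbors on c are its two cycle-neighbors
    obtain ⟨p, hpn, hpv⟩ := memf hvmem
    refine ⟨c.getVert ((p + (n - 1)) % n), v, c.getVert ((p + 1) % n),
      fmem _, hvmem, fmem _, ?_, ?_, ?_, ?_⟩
    · have := adjmod (p + (n - 1))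
      rwa [show p + (n - 1) + 1 = p + n from by omega, Nat.add_mod_right,
        Nat.mod_eq_of_lt hpn, hpv] at this
    · have := adjmod p
      rwa [Nat.mod_eq_of_lt hpn, hpv] at this
    · -- a ≠ d
      intro h
      have h1 : (p + (n - 1)) % n < n := Nat.mod_lt _ npos
      have h2 : (p + 1) % n < n := Nat.mod_lt _ npos
      have := inj h1 h2 h
      -- compute the two mods by cases
      rcases Nat.lt_or_ge (p + 1) n with hp1 | hp1
      · rw [Nat.mod_eq_of_lt hp1] at this
        rcases Nat.eq_zero_or_pos p with hp0 | hp0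
        · rw [hp0] at this
          rw [show (0 + (n-1)) % n = n - 1 from by
            rw [Nat.zero_add, Nat.mod_eq_of_lt (by omega)]] at this
          omega
        · rw [show (p + (n-1)) % n = p - 1 from by
            rw [show p + (n - 1) = n + (p - 1) from by omega, Nat.add_mod_left,
              Nat.mod_eq_of_lt (by omega)]] at this
          omega
      · have hp1' : p + 1 = n := by omega
        rw [show (p + 1) % n = 0 from by rw [hp1', Nat.mod_self]] at this
        rw [show (p + (n-1)) % n = p - 1 from by
          rw [show p + (n - 1) = n + (p - 1) from by omega, Nat.add_mod_left,
            Nat.mod_eq_of_lt (by omega)]] at this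
        omega
    · -- all neighbors of v on c are among these
      intro x hx hadj
      have hc := hind v x hvmem hx hadj
      rw [toSubgraph_adj_iff_mem_edges, mem_edges_iff] at hc
      obtain ⟨i, hi, hie⟩ := hc
      rw [Sym2.eq_iff] at hie
      rcases hie with ⟨h1, h2⟩ | ⟨h1, h2⟩
      · -- v = f i, x = f (i+1)
        have hip : i = p := inj (by omega) hpn (by rw [← h1, ← hpv])
        right; right
        rw [h2, fmod (i+1) (by omega), hip]
      · -- x = f i, v = f (i+1)
        have hip : (i + 1) % n = p := by
          refine inj (Nat.mod_lt _ npos) hpn ?_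
          rw [← fmod (i+1) (by omega), ← h1]
          exact hpv.symm
        left
        rw [h2, ← hip, hmodadd _ _ (by omega),
          show i + 1 + (n - 1) = i + n from by omega, Nat.add_mod_right,
          Nat.mod_eq_of_lt (by omega)]
  · -- v is off the cycle
    set I : ℕ → Prop := fun i => i < n ∧ G.Adj v (c.getVert i) with hI
    by_cases hne : ∃ i, I i
    · -- nonempty neighbor set: use the combinatorial core
      have hnotfull : ∃ i, i < n ∧ ¬ I i := by
        push_neg at hv
        obtain ⟨x, hx, hxadj⟩ := hv
        obtain ⟨i, hi, hix⟩ := memf hx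
        exact ⟨i, hi, fun hIi => hxadj (hix ▸ hIi.2)⟩
      have hB : ∀ r j, I r → I ((r + j) % n) → 2 ≤ j → j + 3 ≤ n →
          (∀ k, 0 < k → k < j → ¬ I ((r + k) % n)) → False := by
        intro r j hr hj h2 h3 hgap
        exact spliceFalseRot ⟨hcyc, hc4, hind⟩ hshortest hlen hvmem hr.1 h2 h3 hr.2 hj.2
          (fun k hk hkj h => (hgap k hk hkj) ⟨Nat.mod_lt _ npos, h⟩)
      obtain ⟨r, hrI, hrall⟩ := combiCore hlen I (fun i hi => hi.1) hne hnotfull hB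
      have hrn : r < n := hrI.1
      refine ⟨c.getVert r, c.getVert ((r + 1) % n), c.getVert ((r + 2) % n),
        mem_support_iff_exists_getVert.mpr ⟨r, rfl, by omega⟩, fmem _, fmem _, ?_, ?_, ?_, ?_⟩
      · have := adjmod r
        rwa [Nat.mod_eq_of_lt hrn] at this
      · have := adjmod (r + 1)
        rwa [show r + 1 + 1 = r + 2 from by omega] at this
      · intro h
        have h2 : (r + 2) % n < n := Nat.mod_lt _ npos
        have := inj hrn h2 h
        rcases Nat.lt_or_ge (r + 2) n with h' | h'
        · rw [Nat.mod_eq_of_lt h'] at this; omega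
        · rw [show (r + 2) % n = r + 2 - n from by
            rw [Nat.mod_eq_sub_mod (by omega), Nat.mod_eq_of_lt (by omega)]] at this
          omega
      · intro x hx hadj
        obtain ⟨i, hi, hix⟩ := memf hx
        obtain ⟨s, hs, hsr⟩ := hrall i ⟨hi, hix ▸ hadj⟩
        interval_cases s
        · left; rw [← hix, hsr, Nat.add_zero, Nat.mod_eq_of_lt hrn]
        · right; left; rw [← hix, hsr]
        · right; right; rw [← hix, hsr]
    · -- no neighbors at all: any consecutive triple works
      push_neg at hne
      refine ⟨c.getVert 0, c.getVert 1, c.getVert 2,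
        mem_support_iff_exists_getVert.mpr ⟨0, rfl, by omega⟩,
        mem_support_iff_exists_getVert.mpr ⟨1, rfl, by omega⟩,
        mem_support_iff_exists_getVert.mpr ⟨2, rfl, by omega⟩,
        toSubgraph_adj_getVert c (by omega), toSubgraph_adj_getVert c (by omega), ?_, ?_⟩
      · intro h
        have := inj (show 0 < n by omega) (show 2 < n by omega) h
        omega
      · intro x hx hadj
        obtain ⟨i, hi, hix⟩ := memf hx
        exact absurd ⟨hi, hix ▸ hadj⟩ (hne i)
end

section
/- Let G be a simple graph and let H be a shortest hole of G with |V(H)| ≥ 5. Then the set A of vertices of G that are adjacent to every vertex of H induces a clique in G (every two distinct vertices of A are adjacent). -/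
open SimpleGraph

variable {V : Type*}

lemma support_eq_map {G : SimpleGraph V} {u v : V} (p : G.Walk u v) :
    p.support = (List.range (p.length + 1)).map p.getVert := by
  induction p with
  | nil => simp [List.range_succ]
  | cons h q ih =>
    rw [Walk.support_cons, ih, Walk.length_cons, List.range_succ_eq_map (n := q.length + 1),
      List.map_cons, List.map_map]
    simp [Function.comp, Walk.getVert_cons_succ]

lemma cycle_getVert_injOn {G : SimpleGraph V} {v : V} {c : G.Walk v v} (hc : c.IsCycle) :
    ∀ i j, 1 ≤ i → i ≤ c.length → 1 ≤ j → j ≤ c.length →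
      c.getVert i = c.getVert j → i = j := by
  intro i j hi1 hi2 hj1 hj2 hij
  have hnd := hc.2
  rw [support_eq_map, List.range_succ_eq_map, List.map_cons, List.tail_cons,
    List.map_map] at hnd
  have := (List.nodup_map_iff_inj_on List.nodup_range).mp hnd
    (i - 1) (by simp; omega) (j - 1) (by simp; omega)
  have h1 : i - 1 + 1 = i := by omega
  have h2 : j - 1 + 1 = j := by omega
  have := this (by simp [Function.comp, h1, h2, hij])
  omega

lemma four_hole {G : SimpleGraph V} {a x b y : V}
    (hax : G.Adj a x) (hbx : G.Adj b x) (hby : G.Adj b y) (hay : G.Adj a y)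
    (hab : ¬ G.Adj a b) (hxy : ¬ G.Adj x y) (hnab : a ≠ b) (hnxy : x ≠ y) :
    ∃ d : G.Walk a a, IsHole G d ∧ d.length = 4 := by
  have n1 : a ≠ x := hax.ne
  have n2 : x ≠ a := hax.ne'
  have n3 : a ≠ y := hay.ne
  have n4 : y ≠ a := hay.ne'
  have n5 : b ≠ x := hbx.ne
  have n6 : x ≠ b := hbx.ne'
  have n7 : b ≠ y := hby.ne
  have n8 : y ≠ b := hby.ne'
  have n9 : b ≠ a := hnab.symm
  have n10 : y ≠ x := hnxy.symm
  refine ⟨.cons hax (.cons hbx.symm (.cons hby (.cons hay.symm .nil))), ⟨?_, by simp, ?_⟩, rfl⟩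
  · rw [Walk.isCycle_def, Walk.isTrail_def]
    refine ⟨?_, by simp, ?_⟩
    · simp only [Walk.edges_cons, Walk.edges_nil, List.nodup_cons, List.mem_cons,
        List.not_mem_nil, or_false, List.nodup_nil, and_true, Sym2.eq_iff, not_or]
      tauto
    · simp only [Walk.support_cons, Walk.support_nil, List.tail_cons, List.nodup_cons,
        List.mem_cons, List.not_mem_nil, or_false, List.nodup_nil, and_true,
        List.mem_singleton, not_or]
      tauto
  · intro p q hp hq hpq
    simp only [Walk.support_cons, Walk.support_nil, List.mem_cons,
      List.not_mem_nil, or_false] at hp hq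
    simp only [Walk.toSubgraph, Subgraph.sup_adj, subgraphOfAdj_adj]
    rcases hp with rfl | rfl | rfl | rfl | rfl <;>
      rcases hq with rfl | rfl | rfl | rfl | rfl <;>
      first
      | exact absurd hpq G.irrefl
      | exact absurd hpq hab | exact absurd hpq (fun h => hab h.symm)
      | exact absurd hpq hxy | exact absurd hpq (fun h => hxy h.symm)
      | exact Or.inl rfl | exact Or.inl Sym2.eq_swap
      | exact Or.inr (Or.inl rfl) | exact Or.inr (Or.inl Sym2.eq_swap)
      | exact Or.inr (Or.inr (Or.inl rfl)) | exact Or.inr (Or.inr (Or.inl Sym2.eq_swap))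
      | exact Or.inr (Or.inr (Or.inr (Or.inl rfl)))
      | exact Or.inr (Or.inr (Or.inr (Or.inl Sym2.eq_swap)))

/-- Let `H` (given as the closed walk `c`) be a shortest hole of `G`
with at least 5 vertices.  The set of vertices adjacent to every vertex of `H`
induces a clique. -/
theorem stmt1 {V : Type*} (G : SimpleGraph V) {h₀ : V} (c : G.Walk h₀ h₀)
    (hhole : IsHole G c)
    (hshortest : ∀ (w : V) (d : G.Walk w w), IsHole G d → c.length ≤ d.length)
    (hlen : 5 ≤ c.length) :
    G.IsClique {v : V | ∀ x ∈ c.support, G.Adj v x} := by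
  intro a ha b hb hab
  by_contra hnadj
  obtain ⟨hcyc, -, hind⟩ := hhole
  have hinj := cycle_getVert_injOn hcyc
  have hans : a ∉ c.support := fun h => (ha _ h).ne rfl
  have hbns : b ∉ c.support := fun h => (hb _ h).ne rfl
  set x := c.getVert 0 with hxdef
  set y := c.getVert 2 with hydef
  have hgl : c.getVert c.length = x := by rw [Walk.getVert_length, hxdef, Walk.getVert_zero]
  have hxmem : x ∈ c.support := Walk.mem_support_iff_exists_getVert.mpr ⟨0, rfl, by omega⟩
  have hymem : y ∈ c.support := Walk.mem_support_iff_exists_getVert.mpr ⟨2, rfl, by omega⟩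
  have hxy : x ≠ y := by
    intro h
    have := hinj c.length 2 (by omega) le_rfl (by omega) (by omega) (by rw [hgl, h])
    omega
  have hnxy : ¬ G.Adj x y := by
    intro hadj
    obtain ⟨i, hs, hil⟩ := (Walk.toSubgraph_adj_iff c).mp (hind x y hxmem hymem hadj)
    rw [Sym2.eq_iff] at hs
    rcases hs with ⟨h1, h2⟩ | ⟨h1, h2⟩
    · have hi1 : i + 1 = 2 :=
        hinj (i + 1) 2 (by omega) (by omega) (by omega) (by omega) h2
      have hi1' : i = 1 := by omega
      rw [hi1'] at h1
      have := hinj 1 c.length (by omega) (by omega) (by omega) le_rfl (by rw [hgl]; exact h1)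
      omega
    · rcases Nat.eq_zero_or_pos i with rfl | hi0
      · exact hxy (hxdef.trans h1)
      · have hil' : i + 1 = c.length :=
          hinj (i + 1) c.length (by omega) (by omega) (by omega) le_rfl (by rw [h2, hgl])
        have : i = 2 := hinj i 2 (by omega) (by omega) (by omega) (by omega) h1
        omega
  have hax : G.Adj a x := ha _ hxmem
  have hay : G.Adj a y := ha _ hymem
  have hbx : G.Adj b x := hb _ hxmem
  have hby : G.Adj b y := hb _ hymem
  obtain ⟨d, hd, hdl⟩ := four_hole hax hbx hby hay hnadj hnxy hab hxy
  have := hshortest a d hd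
  omega
end

section
/- Let G be a simple graph and X a set of vertices of G such that N(X) induces a clique in G. Then every hole of G that contains a vertex of X is entirely contained in N[X], i.e., all vertices of such a hole belong to X ∪ N(X). -/
open SimpleGraph

variable {V : Type*}

private lemma getVert_eq_getElem {G : SimpleGraph V} {u v : V} (p : G.Walk u v) :
    ∀ i (hi : i ≤ p.length), p.getVert i = p.support[i]'(by rw [p.length_support]; omega) := by
  induction p with
  | nil => intro i hi; simp at hi; subst hi; simp
  | cons h q ih =>
    intro i hi
    cases i with
    | zero => simp
    | succ m =>
      have := ih m (by simpa using hi)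
      simpa using this

private lemma mem_support_iff_mem_tail {G : SimpleGraph V} {v : V} (c : G.Walk v v)
    (hn : ¬ c.Nil) : ∀ z, z ∈ c.support ↔ z ∈ c.support.tail := by
  cases c with
  | nil => simp at hn
  | cons h q =>
    intro z
    simp only [SimpleGraph.Walk.support_cons, List.tail_cons, List.mem_cons]
    constructor
    · rintro (rfl | hz)
      · exact q.end_mem_support
      · exact hz
    · exact Or.inr

private lemma key {G : SimpleGraph V} {X : Set V}
    (hclique : G.IsClique (extNbhd G X)) {x : V} (hxX : x ∈ X)
    (c : G.Walk x x) (hc : c.IsCycle)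
    (hedge : ∀ u v : V, u ∈ c.support → v ∈ c.support → G.Adj u v → c.toSubgraph.Adj u v)
    {y : V} (hy : y ∈ c.support) (hyX : y ∉ X) (hyN : y ∉ extNbhd G X) : False := by
  classical
  set n := c.length with hn
  have hsuplen : c.support.length = n + 1 := c.length_support
  have htaillen : c.support.tail.length = n := by
    rw [List.length_tail, hsuplen]; omega
  have htailnd : c.support.tail.Nodup := hc.support_nodup
  -- injectivity of getVert on [1, n]
  have hinj : ∀ i j, 1 ≤ i → i ≤ n → 1 ≤ j → j ≤ n → c.getVert i = c.getVert j → i = j := by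
    intro i j hi1 hin hj1 hjn hij
    have h1 : c.getVert i = c.support.tail[i-1]'(by omega) := by
      rw [getVert_eq_getElem c i hin, List.getElem_tail]
      congr 1; omega
    have h2 : c.getVert j = c.support.tail[j-1]'(by omega) := by
      rw [getVert_eq_getElem c j hjn, List.getElem_tail]
      congr 1; omega
    rw [h1, h2, htailnd.getElem_inj_iff] at hij
    omega
  obtain ⟨k, hky, hkn⟩ := SimpleGraph.Walk.mem_support_iff_exists_getVert.mp hy
  set S : Finset ℕ := (Finset.range (n+1)).filter (fun i => c.getVert i ∉ X) with hS
  have hmemS : ∀ i, i ∈ S ↔ i ≤ n ∧ c.getVert i ∉ X := by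
    intro i; simp [hS, Finset.mem_filter, Finset.mem_range]
  have hkS : k ∈ S := (hmemS k).mpr ⟨hkn, by rwa [hky]⟩
  have hSne : S.Nonempty := ⟨k, hkS⟩
  set i₀ := S.min' hSne with hi₀
  set j₀ := S.max' hSne with hj₀
  obtain ⟨hi₀n, hi₀X⟩ := (hmemS i₀).mp (S.min'_mem hSne)
  obtain ⟨hj₀n, hj₀X⟩ := (hmemS j₀).mp (S.max'_mem hSne)
  have h0 : c.getVert 0 = x := c.getVert_zero
  have hlastv : c.getVert n = x := c.getVert_length
  have hi₀1 : 1 ≤ i₀ := by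
    rcases Nat.eq_zero_or_pos i₀ with h | h
    · rw [h, h0] at hi₀X; exact absurd hxX hi₀X
    · exact h
  have hj₀lt : j₀ < n := by
    rcases eq_or_lt_of_le hj₀n with h | h
    · rw [h, hlastv] at hj₀X; exact absurd hxX hj₀X
    · exact h
  have hmin : ∀ i, i ≤ n → c.getVert i ∉ X → i₀ ≤ i := fun i h1 h2 =>
    S.min'_le i ((hmemS i).mpr ⟨h1, h2⟩)
  have hmax : ∀ i, i ≤ n → c.getVert i ∉ X → i ≤ j₀ := fun i h1 h2 =>
    S.le_max' i ((hmemS i).mpr ⟨h1, h2⟩)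
  -- predecessor of i₀ and successor of j₀ are in X
  have hpred : c.getVert (i₀ - 1) ∈ X := by
    by_contra h
    have := hmin (i₀ - 1) (by omega) h
    omega
  have hsucc : c.getVert (j₀ + 1) ∈ X := by
    by_contra h
    have := hmax (j₀ + 1) (by omega) h
    omega
  set a := c.getVert i₀ with ha
  set b := c.getVert j₀ with hb
  have hadja : G.Adj (c.getVert (i₀ - 1)) a := by
    have := c.adj_getVert_succ (i := i₀ - 1) (by omega)
    rwa [show i₀ - 1 + 1 = i₀ by omega] at this
  have hadjb : G.Adj b (c.getVert (j₀ + 1)) := c.adj_getVert_succ (by omega)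
  have haN : a ∈ extNbhd G X := ⟨hi₀X, c.getVert (i₀ - 1), hpred, hadja.symm⟩
  have hbN : b ∈ extNbhd G X := ⟨hj₀X, c.getVert (j₀ + 1), hsucc, hadjb⟩
  -- y's index is strictly between i₀ and j₀
  have hki : i₀ ≤ k := hmin k hkn (by rwa [hky])
  have hkj : k ≤ j₀ := hmax k hkn (by rwa [hky])
  have hkne1 : k ≠ i₀ := by
    intro h; apply hyN; rw [← hky, h]; exact haN
  have hkne2 : k ≠ j₀ := by
    intro h; apply hyN; rw [← hky, h]; exact hbN
  have hij₀ : i₀ < j₀ := by omega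
  have hab : a ≠ b := by
    intro h
    have := hinj i₀ j₀ hi₀1 hi₀n (by omega) hj₀n h
    omega
  have hGab : G.Adj a b := hclique haN hbN hab
  have has : a ∈ c.support :=
    SimpleGraph.Walk.mem_support_iff_exists_getVert.mpr ⟨i₀, rfl, hi₀n⟩
  have hbs : b ∈ c.support :=
    SimpleGraph.Walk.mem_support_iff_exists_getVert.mpr ⟨j₀, rfl, hj₀n⟩
  obtain ⟨i, hiedge, hilt⟩ := (SimpleGraph.Walk.toSubgraph_adj_iff c).mp (hedge a b has hbs hGab)
  rw [Sym2.eq_iff] at hiedge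
  rcases hiedge with ⟨h1, h2⟩ | ⟨h1, h2⟩
  · -- getVert i = a, getVert (i+1) = b
    have hi1 : 1 ≤ i := by
      rcases Nat.eq_zero_or_pos i with h | h
      · rw [h, h0] at h1; rw [h1] at hxX; exact absurd hxX hi₀X
      · exact h
    have hii₀ : i = i₀ := hinj i i₀ hi1 (by omega) hi₀1 hi₀n (by rw [h1])
    rw [hii₀] at h2
    have : i₀ + 1 = j₀ := hinj (i₀ + 1) j₀ (by omega) (by omega) (by omega) hj₀n (by rw [h2])
    omega
  · -- getVert i = b, getVert (i+1) = a
    have hi1 : 1 ≤ i := by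
      rcases Nat.eq_zero_or_pos i with h | h
      · rw [h, h0] at h1; rw [h1] at hxX; exact absurd hxX hj₀X
      · exact h
    have hij : i = j₀ := hinj i j₀ hi1 (by omega) (by omega) hj₀n (by rw [h1])
    rw [hij] at h2
    rw [h2] at hsucc
    exact hi₀X hsucc

/-- If `N(X)` induces a clique, then every hole of `G` containing a
vertex of `X` is entirely contained in `N[X] = X ∪ N(X)`. -/
theorem stmt2 {V : Type*} (G : SimpleGraph V) (X : Set V)
    (hclique : G.IsClique (extNbhd G X))
    {h₀ : V} (c : G.Walk h₀ h₀) (hhole : IsHole G c)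
    (hX : ∃ x ∈ c.support, x ∈ X) :
    ∀ y ∈ c.support, y ∈ X ∪ extNbhd G X := by
  classical
  intro y hy
  by_contra hyM
  rw [Set.mem_union, not_or] at hyM
  obtain ⟨hyX, hyN⟩ := hyM
  obtain ⟨x, hxs, hxX⟩ := hX
  obtain ⟨hc, -, hedge⟩ := hhole
  set c' := c.rotate x hxs with hc'def
  have hc'cyc : c'.IsCycle := hc.rotate hxs
  have hrot := c.support_rotate x hxs
  have hmem : ∀ z, z ∈ c'.support ↔ z ∈ c.support := by
    intro z
    rw [mem_support_iff_mem_tail c' hc'cyc.not_nil z,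
      mem_support_iff_mem_tail c hc.not_nil z]
    exact hrot.mem_iff
  have hedge' : ∀ u v : V, u ∈ c'.support → v ∈ c'.support → G.Adj u v →
      c'.toSubgraph.Adj u v := by
    intro u v hu hv hadj
    rw [hc'def, SimpleGraph.Walk.toSubgraph_rotate]
    exact hedge u v ((hmem u).mp hu) ((hmem v).mp hv) hadj
  exact key hclique hxX c' hc'cyc hedge' ((hmem y).mpr hy) hyX hyN
end

section
/- Let G be a simple graph and U a set of vertices of G such that N(U) induces a clique in G, the subgraph of G induced by N[U] is chordal, and the subgraph G − U obtained by deleting the vertices of U is chordal. Then G itself is chordal. -/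
open SimpleGraph

variable {V : Type*}

def induceLift {G : SimpleGraph V} {S : Set V} :
    ∀ {v w : V} (p : G.Walk v w), (∀ x ∈ p.support, x ∈ S) →
      ∀ (hv : v ∈ S) (hw : w ∈ S), (G.induce S).Walk ⟨v, hv⟩ ⟨w, hw⟩
  | _, _, SimpleGraph.Walk.nil, _, _, _ => SimpleGraph.Walk.nil
  | _, _, @SimpleGraph.Walk.cons _ _ a b c h q, hp, hv, hw =>
      SimpleGraph.Walk.cons
        (show (G.induce S).Adj ⟨a, hv⟩ ⟨b, hp b (by simp)⟩ from h)
        (induceLift q (fun x hx => hp x (by simp [hx])) _ hw)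

lemma induceLift_map {G : SimpleGraph V} {S : Set V} {v w : V} (p : G.Walk v w) :
    ∀ (hp : ∀ x ∈ p.support, x ∈ S) (hv : v ∈ S) (hw : w ∈ S),
      (induceLift p hp hv hw).map (SimpleGraph.Embedding.induce S).toHom = p := by
  induction p with
  | nil => intro _ _ _; simp [induceLift]
  | cons h q ih =>
    intro hp hv hw
    simp only [induceLift, SimpleGraph.Walk.map_cons, ih]
    rfl

lemma hole_induce {G : SimpleGraph V} {S : Set V} {v : V} {c : G.Walk v v}
    (hc : IsHole G c) (hS : ∀ x ∈ c.support, x ∈ S) :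
    ∃ (v' : S) (c' : (G.induce S).Walk v' v'), IsHole (G.induce S) c' := by
  obtain ⟨hcyc, hlen, hind⟩ := hc
  have hv : v ∈ S := hS v c.start_mem_support
  set f := (SimpleGraph.Embedding.induce (G := G) S)
  have hinj : Function.Injective f.toHom := f.injective
  set c' := induceLift c hS hv hv with hc'
  have hmap : c'.map f.toHom = c := induceLift_map c hS hv hv
  refine ⟨⟨v, hv⟩, c', ?_, ?_, ?_⟩
  · rw [← SimpleGraph.Walk.map_isCycle_iff_of_injective hinj, hmap]; exact hcyc
  · have : (c'.map f.toHom).length = c'.length := SimpleGraph.Walk.length_map _ _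
    rw [hmap] at this; exact le_of_le_of_eq hlen this
  · rintro ⟨x, hx⟩ ⟨y, hy⟩ hxs hys hadj
    have hxc : x ∈ c.support := by
      have h1 : x ∈ (c'.map f.toHom).support := by
        rw [SimpleGraph.Walk.support_map]
        exact List.mem_map.2 ⟨⟨x, hx⟩, hxs, rfl⟩
      rw [hmap] at h1; exact h1
    have hyc : y ∈ c.support := by
      have h1 : y ∈ (c'.map f.toHom).support := by
        rw [SimpleGraph.Walk.support_map]
        exact List.mem_map.2 ⟨⟨y, hy⟩, hys, rfl⟩
      rw [hmap] at h1; exact h1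
    have : c.toSubgraph.Adj x y := hind x y hxc hyc hadj
    have this : (c'.map f.toHom).toSubgraph.Adj x y := by rw [hmap]; exact this
    rw [SimpleGraph.Walk.toSubgraph_map] at this
    obtain ⟨a, b, hab, ha, hb⟩ := this
    have ha' : a = ⟨x, hx⟩ := Subtype.ext ha
    have hb' : b = ⟨y, hy⟩ := Subtype.ext hb
    rwa [ha', hb'] at hab

lemma exists_crossing {G : SimpleGraph V} {S : Set V} :
    ∀ {v w : V} (p : G.Walk v w), v ∈ S → w ∉ S →
      ∃ a b, G.Adj a b ∧ a ∈ p.support ∧ a ∈ S ∧ b ∉ S := by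
  intro v w p
  induction p with
  | nil => intro hv hw; exact absurd hv hw
  | cons h q ih =>
    intro hv hw
    rename_i a b w' 
    by_cases hb : b ∈ S
    · obtain ⟨a, b, hab, has, haS, hbS⟩ := ih hb hw
      exact ⟨a, b, hab, by simp [has], haS, hbS⟩
    · exact ⟨_, _, h, by simp, hv, hb⟩

/-- If `N(U)` induces a clique, `G[N[U]]` is chordal, and `G − U`
is chordal, then `G` is chordal. -/
theorem stmt4 {V : Type*} (G : SimpleGraph V) (U : Set V)
    (hclique : G.IsClique (extNbhd G U))
    (hchordal₁ : ChordalGraph (G.induce (U ∪ extNbhd G U)))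
    (hchordal₂ : ChordalGraph (G.induce Uᶜ)) :
    ChordalGraph G := by
  classical
  intro v c hc
  by_cases hU : ∀ x ∈ c.support, x ∉ U
  · obtain ⟨v', c', hc'⟩ := hole_induce hc (fun x hx => hU x hx)
    exact hchordal₂ v' c' hc'
  push_neg at hU
  obtain ⟨u, huc, huU⟩ := hU
  by_cases hSall : ∀ x ∈ c.support, x ∈ U ∪ extNbhd G U
  · obtain ⟨v', c', hc'⟩ := hole_induce hc hSall
    exact hchordal₁ v' c' hc'
  push_neg at hSall
  obtain ⟨w, hwc, hwS⟩ := hSall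
  obtain ⟨hcyc, hlen, hind⟩ := hc
  set S := U ∪ extNbhd G U with hSdef
  set c₁ := c.rotate u huc with hc₁
  have htsub : c₁.toSubgraph = c.toSubgraph := SimpleGraph.Walk.toSubgraph_rotate c huc
  have hsupp : ∀ x, x ∈ c₁.support ↔ x ∈ c.support := fun x => by
    rw [← SimpleGraph.Walk.mem_verts_toSubgraph, htsub, SimpleGraph.Walk.mem_verts_toSubgraph]
  have hcyc₁ : c₁.IsCycle := hcyc.rotate huc
  have hw₁ : w ∈ c₁.support := (hsupp w).2 hwc
  set p := c₁.takeUntil w hw₁ with hpdef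
  set q := c₁.dropUntil w hw₁ with hqdef
  have hspec : p.append q = c₁ := (c₁.take_spec hw₁)
  have huS : u ∈ S := Or.inl huU
  have extmem : ∀ a b, G.Adj a b → a ∈ S → b ∉ S → a ∈ extNbhd G U := by
    intro a b hab haS hbS
    rcases haS with haU | hext
    · exact absurd (Or.inr ⟨fun hbU => hbS (Or.inl hbU), a, haU, hab.symm⟩) hbS
    · exact hext
  obtain ⟨a, b, hab, hap, haS, hbS⟩ := exists_crossing p huS hwS
  have haE : a ∈ extNbhd G U := extmem a b hab haS hbS
  obtain ⟨a', b', hab', hap', haS', hbS'⟩ := exists_crossing q.reverse huS hwS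
  have haE' : a' ∈ extNbhd G U := extmem a' b' hab' haS' hbS'
  have haq' : a' ∈ q.support := by
    rw [SimpleGraph.Walk.support_reverse] at hap'
    exact List.mem_reverse.1 hap'
  have hane : a ≠ u := fun h => haE.1 (by rw [h]; exact huU)
  have hane' : a' ≠ u := fun h => haE'.1 (by rw [h]; exact huU)
  have hanw : a ≠ w := fun h => hwS (h ▸ haS)
  have hanw' : a' ≠ w := fun h => hwS (h ▸ haS')
  have hpt : a ∈ p.support.tail := by
    rw [SimpleGraph.Walk.support_eq_cons p] at hap
    rcases List.mem_cons.1 hap with h | h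
    · exact absurd h hane
    · exact h
  have hqt : a' ∈ q.support.tail := by
    rw [SimpleGraph.Walk.support_eq_cons q] at haq'
    rcases List.mem_cons.1 haq' with h | h
    · exact absurd h hanw'
    · exact h
  have hnd : c₁.support.tail.Nodup := hcyc₁.support_nodup
  have hps : c₁.support = p.support ++ q.support.tail := by
    rw [← hspec]; exact SimpleGraph.Walk.support_append p q
  have htail : c₁.support.tail = p.support.tail ++ q.support.tail := by
    rw [hps]; rw [SimpleGraph.Walk.support_eq_cons p]; rfl
  rw [htail, List.nodup_append] at hnd
  have hdisj : List.Disjoint p.support.tail q.support.tail := fun x hx1 hx2 => hnd.2.2 x hx1 x hx2 rfl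
  have hne : a ≠ a' := by
    intro h
    exact hdisj hpt (h ▸ hqt)
  have hadj : G.Adj a a' := hclique haE haE' hne
  have hac : a ∈ c.support := (hsupp a).1 (by
    rw [hps]; exact List.mem_append_left _ hap)
  have hac' : a' ∈ c.support := (hsupp a').1 (by
    rw [hps]; exact List.mem_append_right _ hqt)
  have hsub : c₁.toSubgraph.Adj a a' := by
    rw [htsub]; exact hind a a' hac hac' hadj
  have hedge : s(a, a') ∈ c₁.edges :=
    (SimpleGraph.Walk.mem_edges_toSubgraph c₁).1 (SimpleGraph.Subgraph.mem_edgeSet.2 hsub)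
  rw [← hspec, SimpleGraph.Walk.edges_append] at hedge
  rcases List.mem_append.1 hedge with h | h
  · have : a' ∈ p.support := p.snd_mem_support_of_mem_edges h
    rw [SimpleGraph.Walk.support_eq_cons p] at this
    rcases List.mem_cons.1 this with h' | h'
    · exact absurd h' hane'
    · exact hdisj h' hqt
  · have : a ∈ q.support := q.fst_mem_support_of_mem_edges h
    rw [SimpleGraph.Walk.support_eq_cons q] at this
    rcases List.mem_cons.1 this with h' | h'
    · exact absurd h' hanw
    · exact hdisj hpt h'
end

section
/- Let G be a simple graph, let U be a simplicial set of vertices of G, and let (V_-, E_-, E_+) be a minimal chordal editing set of G such that E_- contains no edge with both endpoints in N(U). Then (V_-, E_-, E_+) does not edit U; that is, V_- contains no vertex of U and no pair in E_- ∪ E_+ has an element in U. Equivalently: a minimal chordal editing set edits a simplicial set U only if it deletes at least one edge induced by N(U). -/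
open SimpleGraph

variable {V : Type*}

/-- The graph obtained from `G` by deleting the edges in `Em` and adding the
(non-diagonal) pairs in `Ep` as edges. -/
def editGraph (G : SimpleGraph V) (Em Ep : Set (Sym2 V)) : SimpleGraph V where
  Adj x y := x ≠ y ∧ ((G.Adj x y ∧ s(x, y) ∉ Em) ∨ s(x, y) ∈ Ep)
  symm := by
    constructor
    intro x y h
    obtain ⟨hne, h⟩ := h
    refine ⟨hne.symm, ?_⟩
    rcases h with ⟨ha, hm⟩ | hp
    · exact Or.inl ⟨ha.symm, by rwa [Sym2.eq_swap]⟩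
    · exact Or.inr (by rwa [Sym2.eq_swap])
  loopless := by constructor; intro x h; exact h.1 rfl

/-- `(Vm, Em, Ep)` is a chordal editing set of `G`: `Em` consists of edges of `G`,
`Ep` consists of non-adjacent (non-diagonal) vertex pairs of `G`, and the graph
obtained from `G` by deleting the vertices of `Vm`, deleting the edges of `Em`,
and adding the pairs of `Ep` as edges is chordal. -/
def IsChordalEditingSet (G : SimpleGraph V) (Vm : Set V) (Em Ep : Set (Sym2 V)) : Prop :=
  Em ⊆ G.edgeSet ∧ (∀ e ∈ Ep, ¬ e.IsDiag ∧ e ∉ G.edgeSet) ∧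
    ChordalGraph ((editGraph G Em Ep).induce Vmᶜ)

def stmt5OnSet (H : SimpleGraph V) (s : Set V) : SimpleGraph V where
  Adj x y := H.Adj x y ∧ x ∈ s ∧ y ∈ s
  symm := ⟨fun _ _ ⟨h, hx, hy⟩ => ⟨h.symm, hy, hx⟩⟩
  loopless := ⟨fun x ⟨h, _, _⟩ => H.irrefl h⟩

lemma stmt5_toSub_adj {G : SimpleGraph V} {u v x y : V} (p : G.Walk u v) :
    p.toSubgraph.Adj x y ↔ s(x, y) ∈ p.edges := by
  induction p with
  | nil => simp [Walk.toSubgraph, singletonSubgraph_adj, Pi.bot_apply]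
  | cons h q ih =>
    simp only [Walk.toSubgraph, Subgraph.sup_adj, subgraphOfAdj_adj, Walk.edges_cons,
      List.mem_cons, ih]
    constructor
    · rintro (h' | h')
      · exact Or.inl h'.symm
      · exact Or.inr h'
    · rintro (h' | h')
      · exact Or.inl h'.symm
      · exact Or.inr h'

lemma stmt5_isCycle_transfer {G H : SimpleGraph V} {u : V} {p : G.Walk u u}
    (hp : ∀ e ∈ p.edges, e ∈ H.edgeSet) (hc : p.IsCycle) : (p.transfer H hp).IsCycle := by
  refine ⟨⟨⟨?_⟩, ?_⟩, ?_⟩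
  · rw [Walk.edges_transfer]; exact hc.edges_nodup
  · cases p with
    | nil => exact absurd rfl hc.ne_nil
    | cons h q => exact fun h' => by cases h'
  · rw [Walk.support_transfer]; exact hc.support_nodup

lemma stmt5_walk_support_mem {H : SimpleGraph V} {s : Set V} {a b : V}
    (p : (stmt5OnSet H s).Walk a b) : ∀ x ∈ p.support, x ∈ s ∨ x = b := by
  induction p with
  | nil => intro x hx; right; simpa using hx
  | cons h q ih =>
    intro x hx
    rw [Walk.support_cons, List.mem_cons] at hx
    rcases hx with rfl | hx
    · exact Or.inl h.2.1
    · exact ih x hx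

lemma stmt5_cycle_support_mem {H : SimpleGraph V} {s : Set V} {v : V}
    (c : (stmt5OnSet H s).Walk v v) (hc : c.IsCycle) : ∀ x ∈ c.support, x ∈ s := by
  have hv : v ∈ s := by
    cases c with
    | nil => exact absurd rfl hc.ne_nil
    | cons h q => exact h.2.1
  intro x hx
  rcases stmt5_walk_support_mem c x hx with h | rfl
  · exact h
  · exact hv

def stmt5ValHom (H : SimpleGraph V) (s : Set V) : H.induce s →g H :=
  ⟨Subtype.val, fun {a b} h => h⟩

def stmt5ToInduceWalk {H : SimpleGraph V} {s : Set V} :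
    ∀ {a b : V} (p : H.Walk a b) (hp : ∀ x ∈ p.support, x ∈ s),
      (H.induce s).Walk ⟨a, hp a p.start_mem_support⟩ ⟨b, hp b p.end_mem_support⟩
  | _, _, Walk.nil, _ => Walk.nil
  | _, _, Walk.cons h q, hp =>
      Walk.cons (by exact h)
        (stmt5ToInduceWalk q (fun x hx => hp x (by rw [Walk.support_cons]; exact List.mem_cons_of_mem _ hx)))

lemma stmt5ToInduceWalk_map {H : SimpleGraph V} {s : Set V} {a b : V} (p : H.Walk a b)
    (hp : ∀ x ∈ p.support, x ∈ s) :
    (stmt5ToInduceWalk p hp).map (stmt5ValHom H s) = p := by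
  induction p with
  | nil => rfl
  | cons h q ih =>
    simp only [stmt5ToInduceWalk, Walk.map_cons]
    exact congrArg (Walk.cons h) (ih _)

lemma stmt5_no_onSet_hole {H : SimpleGraph V} {s : Set V} (hch : ChordalGraph (H.induce s))
    {v : V} (c : (stmt5OnSet H s).Walk v v) : ¬ IsHole (stmt5OnSet H s) c := by
  rintro ⟨hcyc, hlen, hind⟩
  have hsup : ∀ x ∈ c.support, x ∈ s := stmt5_cycle_support_mem c hcyc
  have hedges : ∀ e ∈ c.edges, e ∈ H.edgeSet := by
    intro e he
    have h1 := c.edges_subset_edgeSet he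
    revert h1
    refine Sym2.ind (fun x y h1 => ?_) e
    exact h1.1
  have hsup' : ∀ x ∈ (c.transfer H hedges).support, x ∈ s := by
    rw [Walk.support_transfer]; exact hsup
  have hc' : (c.transfer H hedges).IsCycle := stmt5_isCycle_transfer hedges hcyc
  refine hch _ (stmt5ToInduceWalk (c.transfer H hedges) hsup') ⟨?_, ?_, ?_⟩
  · have hm : ((stmt5ToInduceWalk (c.transfer H hedges) hsup').map (stmt5ValHom H s)).IsCycle := by
      rw [stmt5ToInduceWalk_map]; exact hc'
    exact (Walk.map_isCycle_iff_of_injective Subtype.val_injective).mp hm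
  · have hm := congrArg Walk.length (stmt5ToInduceWalk_map (c.transfer H hedges) hsup')
    rw [Walk.length_map] at hm
    rw [hm.trans (Walk.length_transfer c hedges)]
    exact hlen
  · intro x y hx hy hadj
    have hxv : (x : V) ∈ c.support := by
      have : (x : V) ∈ ((stmt5ToInduceWalk (c.transfer H hedges) hsup').map (stmt5ValHom H s)).support := by
        rw [Walk.support_map]; exact List.mem_map_of_mem hx
      rw [stmt5ToInduceWalk_map] at this
      rwa [← Walk.support_transfer c hedges]
    have hyv : (y : V) ∈ c.support := by
      have : (y : V) ∈ ((stmt5ToInduceWalk (c.transfer H hedges) hsup').map (stmt5ValHom H s)).support := by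
        rw [Walk.support_map]; exact List.mem_map_of_mem hy
      rw [stmt5ToInduceWalk_map] at this
      rwa [← Walk.support_transfer c hedges]
    have hKadj : (stmt5OnSet H s).Adj (x : V) (y : V) := ⟨hadj, x.2, y.2⟩
    have hmem := hind _ _ hxv hyv hKadj
    rw [stmt5_toSub_adj] at hmem
    rw [stmt5_toSub_adj]
    have hme := congrArg Walk.edges (stmt5ToInduceWalk_map (c.transfer H hedges) hsup')
    rw [Walk.edges_map] at hme
    replace hme := hme.trans (Walk.edges_transfer c hedges)
    have hmem2 : s((x : V), (y : V)) ∈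
        ((stmt5ToInduceWalk (c.transfer H hedges) hsup').edges).map (Sym2.map (stmt5ValHom H s)) := by
      rw [hme]; exact hmem
    obtain ⟨e, he, heq⟩ := List.mem_map.mp hmem2
    have : e = s(x, y) := by
      have hinj : Function.Injective (stmt5ValHom H s) := Subtype.val_injective
      apply Sym2.map.injective hinj
      rw [heq, Sym2.map_pair_eq]
      rfl
    rwa [this] at he

lemma stmt5_hole_transfer {K₁ K₂ : SimpleGraph V} {v : V} {c : K₁.Walk v v} (h : IsHole K₁ c)
    (hagree : ∀ x ∈ c.support, ∀ y ∈ c.support, (K₁.Adj x y ↔ K₂.Adj x y)) :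
    ∃ c₂ : K₂.Walk v v, IsHole K₂ c₂ := by
  obtain ⟨hcyc, hlen, hind⟩ := h
  have hedges : ∀ e ∈ c.edges, e ∈ K₂.edgeSet := by
    intro e he
    induction e with
    | h x y =>
      have hx := c.fst_mem_support_of_mem_edges he
      have hy := c.snd_mem_support_of_mem_edges he
      exact (hagree x hx y hy).mp (c.edges_subset_edgeSet he)
  refine ⟨c.transfer K₂ hedges, stmt5_isCycle_transfer hedges hcyc,
    by rwa [Walk.length_transfer], ?_⟩
  intro x y hx hy hadj
  rw [Walk.support_transfer] at hx hy
  have h1 : K₁.Adj x y := (hagree x hx y hy).mpr hadj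
  have h2 := hind x y hx hy h1
  rw [stmt5_toSub_adj] at h2
  rw [stmt5_toSub_adj, Walk.edges_transfer]
  exact h2

lemma stmt5_IsHole_rotate {K : SimpleGraph V} [DecidableEq V] {v u : V} {c : K.Walk v v}
    (hc : IsHole K c) (hu : u ∈ c.support) : IsHole K (c.rotate u hu) := by
  obtain ⟨h1, h2, h3⟩ := hc
  have hts : (c.rotate u hu).toSubgraph = c.toSubgraph := c.toSubgraph_rotate hu
  have hsup : ∀ x, x ∈ (c.rotate u hu).support ↔ x ∈ c.support := by
    intro x
    rw [← Walk.mem_verts_toSubgraph, hts, Walk.mem_verts_toSubgraph]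
  have hlen : (c.rotate u hu).length = c.length := by
    have h4 := congrArg Walk.length (c.take_spec hu)
    rw [Walk.length_append] at h4
    show ((c.dropUntil u hu).append (c.takeUntil u hu)).length = c.length
    rw [Walk.length_append]
    omega
  refine ⟨h1.rotate hu, by omega, ?_⟩
  intro x y hx hy hadj
  rw [hts]
  exact h3 x y ((hsup x).mp hx) ((hsup y).mp hy) hadj

lemma stmt5_crossing {K : SimpleGraph V} {U N : Set V}
    (hstep : ∀ x y, K.Adj x y → x ∈ U → y ∈ U ∪ N)
    {a b : V} (r : K.Walk a b) (ha : a ∈ U) (hb : b ∉ U ∪ N) : ∃ n ∈ r.support, n ∈ N := by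
  revert ha hb
  induction r with
  | nil => intro ha hb; exact absurd (Or.inl ha) hb
  | cons h q ih =>
    intro ha hb
    rcases hstep _ _ h ha with hc | hc
    · obtain ⟨n, hn, hnN⟩ := ih hc hb
      exact ⟨n, by rw [Walk.support_cons]; exact List.mem_cons_of_mem _ hn, hnN⟩
    · exact ⟨_, by rw [Walk.support_cons]; exact List.mem_cons_of_mem _ q.start_mem_support, hc⟩


lemma stmt5_ambient {V : Type*} [DecidableEq V] (G : SimpleGraph V) (U : Set V)
    (hchordal : ChordalGraph (G.induce (U ∪ extNbhd G U)))
    (hclique : G.IsClique (extNbhd G U))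
    (Vm : Set V) (Em Ep : Set (Sym2 V))
    (hces : IsChordalEditingSet G Vm Em Ep)
    (hEm : ∀ e ∈ Em, ¬ ∀ x ∈ e, x ∈ extNbhd G U)
    (Vm' : Set V) (Em' Ep' : Set (Sym2 V))
    (hVm' : ∀ x, x ∈ Vm' ↔ x ∈ Vm ∧ x ∉ U)
    (hEm' : ∀ e, e ∈ Em' ↔ e ∈ Em ∧ ∀ x ∈ e, x ∉ U)
    (hEp' : ∀ e, e ∈ Ep' ↔ e ∈ Ep ∧ ∀ x ∈ e, x ∉ U)
    {v : V} (c : (stmt5OnSet (editGraph G Em' Ep') Vm'ᶜ).Walk v v) :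
    ¬ IsHole (stmt5OnSet (editGraph G Em' Ep') Vm'ᶜ) c := by
  intro hc
  have hsupV : ∀ x ∈ c.support, x ∈ Vm'ᶜ := stmt5_cycle_support_mem c hc.1
  have hE : ∀ (A A' : Set (Sym2 V)) (x y : V), (∀ e, e ∈ A' ↔ e ∈ A ∧ ∀ z ∈ e, z ∉ U) →
      x ∉ U → y ∉ U → (s(x, y) ∈ A' ↔ s(x, y) ∈ A) := by
    intro A A' x y hA hxU hyU
    rw [hA]
    refine ⟨fun h => h.1, fun h => ⟨h, ?_⟩⟩
    intro z hz
    rcases Sym2.mem_iff.mp hz with rfl | rfl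
    exacts [hxU, hyU]
  by_cases hU : ∀ x ∈ c.support, x ∉ U
  · have hagree : ∀ x ∈ c.support, ∀ y ∈ c.support,
        ((stmt5OnSet (editGraph G Em' Ep') Vm'ᶜ).Adj x y ↔
          (stmt5OnSet (editGraph G Em Ep) Vmᶜ).Adj x y) := by
      intro x hx y hy
      have hxU := hU x hx
      have hyU := hU y hy
      have hxV : x ∈ Vmᶜ := fun hxVm => (hsupV x hx) ((hVm' x).mpr ⟨hxVm, hxU⟩)
      have hyV : y ∈ Vmᶜ := fun hyVm => (hsupV y hy) ((hVm' y).mpr ⟨hyVm, hyU⟩)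
      constructor
      · rintro ⟨⟨hne, hor⟩, _, _⟩
        refine ⟨⟨hne, ?_⟩, hxV, hyV⟩
        rcases hor with ⟨ha, hm⟩ | hp
        · exact Or.inl ⟨ha, fun hmem => hm ((hE Em Em' x y hEm' hxU hyU).mpr hmem)⟩
        · exact Or.inr ((hE Ep Ep' x y hEp' hxU hyU).mp hp)
      · rintro ⟨⟨hne, hor⟩, _, _⟩
        refine ⟨⟨hne, ?_⟩, hsupV x hx, hsupV y hy⟩
        rcases hor with ⟨ha, hm⟩ | hp
        · exact Or.inl ⟨ha, fun hmem => hm ((hE Em Em' x y hEm' hxU hyU).mp hmem)⟩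
        · exact Or.inr ((hE Ep Ep' x y hEp' hxU hyU).mpr hp)
    obtain ⟨c₂, hc₂⟩ := stmt5_hole_transfer hc hagree
    exact stmt5_no_onSet_hole hces.2.2 c₂ hc₂
  · push_neg at hU
    obtain ⟨u, husup, huU⟩ := hU
    have hc₃ : IsHole _ (c.rotate u husup) := stmt5_IsHole_rotate hc husup
    set c₃ : (stmt5OnSet (editGraph G Em' Ep') Vm'ᶜ).Walk u u := c.rotate u husup with hc₃def
    clear_value c₃
    clear hc₃def hc hsupV husup c
    have hsupV₃ : ∀ x ∈ c₃.support, x ∈ Vm'ᶜ := stmt5_cycle_support_mem c₃ hc₃.1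
    have hstep : ∀ x y, (stmt5OnSet (editGraph G Em' Ep') Vm'ᶜ).Adj x y → x ∈ U →
        y ∈ U ∪ extNbhd G U := by
      rintro x y ⟨⟨hne, hor⟩, _, _⟩ hxU
      have hG : G.Adj x y := by
        rcases hor with ⟨ha, _⟩ | hp
        · exact ha
        · exact absurd hxU (((hEp' _).mp hp).2 x (Sym2.mem_mk_left x y))
      by_cases hyU : y ∈ U
      · exact Or.inl hyU
      · exact Or.inr ⟨hyU, x, hxU, hG.symm⟩
    have hsupW : ∀ x ∈ c₃.support, x ∈ U ∪ extNbhd G U := by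
      by_contra hx
      push_neg at hx
      obtain ⟨x, hxsup, hxW⟩ := hx
      obtain ⟨n₁, hn₁p, hn₁N⟩ := stmt5_crossing hstep (c₃.takeUntil x hxsup) huU hxW
      obtain ⟨n₂, hn₂q, hn₂N⟩ := stmt5_crossing hstep (c₃.dropUntil x hxsup).reverse huU hxW
      rw [Walk.support_reverse, List.mem_reverse] at hn₂q
      have hnodup : ((c₃.takeUntil x hxsup).append (c₃.dropUntil x hxsup)).support.tail.Nodup := by
        rw [Walk.take_spec]
        exact hc₃.1.support_nodup
      rw [Walk.tail_support_append] at hnodup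
      have hdisj := (List.nodup_append.mp hnodup).2.2
      have hn₁t : n₁ ∈ (c₃.takeUntil x hxsup).support.tail := by
        rw [Walk.support_eq_cons] at hn₁p
        rcases List.mem_cons.mp hn₁p with rfl | h'
        · exact absurd huU hn₁N.1
        · exact h'
      have hn₂t : n₂ ∈ (c₃.dropUntil x hxsup).support.tail := by
        rw [Walk.support_eq_cons] at hn₂q
        rcases List.mem_cons.mp hn₂q with rfl | h'
        · exact absurd (Or.inr hn₂N) hxW
        · exact h'
      have hn₁sup : n₁ ∈ c₃.support := Walk.support_takeUntil_subset c₃ hxsup hn₁p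
      have hn₂sup : n₂ ∈ c₃.support :=
        Walk.support_dropUntil_subset c₃ hxsup (List.mem_of_mem_tail hn₂t)
      have hne : n₁ ≠ n₂ := fun hEq => hdisj _ hn₁t _ hn₂t hEq
      have hKadj : (stmt5OnSet (editGraph G Em' Ep') Vm'ᶜ).Adj n₁ n₂ := by
        refine ⟨⟨hne, Or.inl ⟨hclique hn₁N hn₂N hne, fun hmem => ?_⟩⟩,
          hsupV₃ _ hn₁sup, hsupV₃ _ hn₂sup⟩
        refine hEm _ ((hEm' _).mp hmem).1 (fun z hz => ?_)
        rcases Sym2.mem_iff.mp hz with rfl | rfl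
        exacts [hn₁N, hn₂N]
      have hedge := hc₃.2.2 n₁ n₂ hn₁sup hn₂sup hKadj
      rw [stmt5_toSub_adj] at hedge
      rw [show c₃.edges = ((c₃.takeUntil x hxsup).append (c₃.dropUntil x hxsup)).edges from by
        rw [Walk.take_spec], Walk.edges_append, List.mem_append] at hedge
      rcases hedge with h | h
      · have hmem : n₂ ∈ (c₃.takeUntil x hxsup).support := Walk.snd_mem_support_of_mem_edges _ h
        have hmt : n₂ ∈ (c₃.takeUntil x hxsup).support.tail := by
          rw [Walk.support_eq_cons] at hmem
          rcases List.mem_cons.mp hmem with rfl | h'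
          · exact absurd huU hn₂N.1
          · exact h'
        exact hdisj _ hmt _ hn₂t rfl
      · have hmem : n₁ ∈ (c₃.dropUntil x hxsup).support := Walk.fst_mem_support_of_mem_edges _ h
        have hmt : n₁ ∈ (c₃.dropUntil x hxsup).support.tail := by
          rw [Walk.support_eq_cons] at hmem
          rcases List.mem_cons.mp hmem with rfl | h'
          · exact absurd (Or.inr hn₁N) hxW
          · exact h'
        exact hdisj _ hn₁t _ hmt rfl
    have hagree : ∀ a ∈ c₃.support, ∀ b ∈ c₃.support,
        ((stmt5OnSet (editGraph G Em' Ep') Vm'ᶜ).Adj a b ↔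
          (stmt5OnSet G (U ∪ extNbhd G U)).Adj a b) := by
      intro a ha b hb
      have haW := hsupW a ha
      have hbW := hsupW b hb
      constructor
      · rintro ⟨⟨hne, hor⟩, _, _⟩
        refine ⟨?_, haW, hbW⟩
        rcases hor with ⟨hG, _⟩ | hp
        · exact hG
        · obtain ⟨hpEp, hpU⟩ := (hEp' _).mp hp
          have haN : a ∈ extNbhd G U := haW.resolve_left (hpU a (Sym2.mem_mk_left a b))
          have hbN : b ∈ extNbhd G U := hbW.resolve_left (hpU b (Sym2.mem_mk_right a b))
          exact absurd ((G.mem_edgeSet).mpr (hclique haN hbN hne)) (hces.2.1 _ hpEp).2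
      · rintro ⟨hG, _, _⟩
        refine ⟨⟨hG.ne, Or.inl ⟨hG, fun hmem => ?_⟩⟩, hsupV₃ a ha, hsupV₃ b hb⟩
        obtain ⟨hmEm, hmU⟩ := (hEm' _).mp hmem
        have haN : a ∈ extNbhd G U := haW.resolve_left (hmU a (Sym2.mem_mk_left a b))
        have hbN : b ∈ extNbhd G U := hbW.resolve_left (hmU b (Sym2.mem_mk_right a b))
        refine hEm _ hmEm (fun z hz => ?_)
        rcases Sym2.mem_iff.mp hz with rfl | rfl
        exacts [haN, hbN]
    obtain ⟨c₄, hc₄⟩ := stmt5_hole_transfer hc₃ hagree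
    exact stmt5_no_onSet_hole hchordal c₄ hc₄

/-- Let `U` be a simplicial set of vertices of `G` and let
`(Vm, Em, Ep)` be a minimal chordal editing set of `G` such that `Em` contains no
edge with both endpoints in `N(U)`.  Then `(Vm, Em, Ep)` does not edit `U`:
`Vm` contains no vertex of `U`, and no pair of `Em ∪ Ep` has an element in `U`. -/
theorem stmt5 {V : Type*} (G : SimpleGraph V) (U : Set V)
    (hchordal : ChordalGraph (G.induce (U ∪ extNbhd G U)))
    (hclique : G.IsClique (extNbhd G U))
    (Vm : Set V) (Em Ep : Set (Sym2 V))
    (hces : IsChordalEditingSet G Vm Em Ep)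
    (hmin : ∀ (Vm' : Set V) (Em' Ep' : Set (Sym2 V)),
      IsChordalEditingSet G Vm' Em' Ep' → Vm' ⊆ Vm → Em' ⊆ Em → Ep' ⊆ Ep →
      Vm' = Vm ∧ Em' = Em ∧ Ep' = Ep)
    (hEm : ∀ e ∈ Em, ¬ ∀ x ∈ e, x ∈ extNbhd G U) :
    (∀ x ∈ Vm, x ∉ U) ∧ (∀ e ∈ Em ∪ Ep, ∀ x ∈ e, x ∉ U) := by
  classical
  set Vm' : Set V := {x | x ∈ Vm ∧ x ∉ U} with hVm'def
  set Em' : Set (Sym2 V) := {e | e ∈ Em ∧ ∀ x ∈ e, x ∉ U} with hEm'def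
  set Ep' : Set (Sym2 V) := {e | e ∈ Ep ∧ ∀ x ∈ e, x ∉ U} with hEp'def
  have hVsub : Vm' ⊆ Vm := fun x hx => hx.1
  have hEmsub : Em' ⊆ Em := fun e he => he.1
  have hEpsub : Ep' ⊆ Ep := fun e he => he.1
  have hces' : IsChordalEditingSet G Vm' Em' Ep' := by
    refine ⟨fun e he => hces.1 (hEmsub he), fun e he => hces.2.1 e (hEpsub he), ?_⟩
    intro v₀ c hc
    obtain ⟨hcyc, hlen, hind⟩ := hc
    let f : ((editGraph G Em' Ep').induce Vm'ᶜ) →g stmt5OnSet (editGraph G Em' Ep') Vm'ᶜ :=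
      ⟨Subtype.val, fun {a b} h => ⟨h, a.2, b.2⟩⟩
    have hfinj : Function.Injective f := Subtype.val_injective
    have hc₂ : IsHole (stmt5OnSet (editGraph G Em' Ep') Vm'ᶜ) (c.map f) := by
      refine ⟨(Walk.map_isCycle_iff_of_injective hfinj).mpr hcyc, by rwa [Walk.length_map], ?_⟩
      intro x y hx hy hadj
      rw [Walk.support_map] at hx hy
      obtain ⟨x', hx', rfl⟩ := List.mem_map.mp hx
      obtain ⟨y', hy', rfl⟩ := List.mem_map.mp hy
      have hadj' : ((editGraph G Em' Ep').induce Vm'ᶜ).Adj x' y' := hadj.1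
      have hmem := hind x' y' hx' hy' hadj'
      rw [stmt5_toSub_adj] at hmem
      rw [stmt5_toSub_adj, Walk.edges_map]
      have hm2 := List.mem_map_of_mem (f := Sym2.map f) hmem
      rwa [Sym2.map_pair_eq] at hm2
    exact stmt5_ambient G U hchordal hclique Vm Em Ep hces hEm Vm' Em' Ep'
      (fun x => Iff.rfl) (fun e => Iff.rfl) (fun e => Iff.rfl) (c.map f) hc₂
  obtain ⟨hVeq, hEmeq, hEpeq⟩ := hmin Vm' Em' Ep' hces' hVsub hEmsub hEpsub
  constructor
  · intro x hxVm hxU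
    rw [← hVeq] at hxVm
    exact hxVm.2 hxU
  · intro e he x hxe hxU
    rcases he with he | he
    · rw [← hEmeq] at he
      exact he.2 x hxe hxU
    · rw [← hEpeq] at he
      exact he.2 x hxe hxU
end

section
/- Let F be a simple graph, let x and y be nonadjacent vertices of F, and let (V_S, E_S) be an inclusion-wise minimal mixed x–y separator of F. Then no edge of E_S has both endpoints in the same connected component of the graph F − V_S − E_S obtained by deleting the vertices V_S and the edges E_S; consequently, every connected component of F − V_S − E_S is an induced subgraph of F. -/
open SimpleGraph

variable {V : Type*}

/-- The graph `F − Vs − Es` obtained from `F` by deleting the vertices of `Vs`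
(all edges incident to them are removed) and deleting the edges of `Es`. -/
def deleteVE (F : SimpleGraph V) (Vs : Set V) (Es : Set (Sym2 V)) : SimpleGraph V where
  Adj a b := F.Adj a b ∧ a ∉ Vs ∧ b ∉ Vs ∧ s(a, b) ∉ Es
  symm := by
    constructor
    intro a b h
    exact ⟨h.1.symm, h.2.2.1, h.2.1, by rw [Sym2.eq_swap]; exact h.2.2.2⟩
  loopless := by constructor; intro a h; exact F.irrefl h.1

/-- `(Vs, Es)` is a mixed `x`–`y` separator of `F`: `Vs` avoids `x` and `y`,
`Es` consists of edges of `F`, and `x` and `y` lie in different connected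
components of `F − Vs − Es`. -/
def IsMixedSeparator (F : SimpleGraph V) (x y : V) (Vs : Set V) (Es : Set (Sym2 V)) : Prop :=
  Vs ⊆ ({x, y} : Set V)ᶜ ∧ Es ⊆ F.edgeSet ∧ ¬ (deleteVE F Vs Es).Reachable x y

/-- If `(Vs, Es)` is an inclusion-wise minimal mixed `x`–`y`
separator of `F` (with `x`, `y` nonadjacent), then no edge of `Es` has both
endpoints in the same connected component of `F − Vs − Es`; consequently, every
connected component of `F − Vs − Es` is an induced subgraph of `F`. -/
theorem stmt6 {V : Type*} (F : SimpleGraph V) (x y : V) (hxy : ¬ F.Adj x y)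
    (Vs : Set V) (Es : Set (Sym2 V))
    (hsep : IsMixedSeparator F x y Vs Es)
    (hmin : ∀ (Vs' : Set V) (Es' : Set (Sym2 V)),
      IsMixedSeparator F x y Vs' Es' → Vs' ⊆ Vs → Es' ⊆ Es → Vs' = Vs ∧ Es' = Es) :
    (∀ a b : V, s(a, b) ∈ Es → ¬ (deleteVE F Vs Es).Reachable a b) ∧
    (∀ a b : V, (deleteVE F Vs Es).Reachable a b → F.Adj a b →
      (deleteVE F Vs Es).Adj a b) := by
  have reach_mono : ∀ {G G' : SimpleGraph V}, (∀ u v, G'.Adj u v → G.Reachable u v) →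
      ∀ {p q : V}, G'.Reachable p q → G.Reachable p q := by
    intro G G' h p q hr
    obtain ⟨w⟩ := hr
    induction w with
    | nil => exact Reachable.refl _
    | cons hadj p ih => exact (h _ _ hadj).trans ih
  have key : ∀ a b : V, s(a, b) ∈ Es → ¬ (deleteVE F Vs Es).Reachable a b := by
    intro a b hab hreach
    have hEedge := hsep.2.1 hab
    rw [SimpleGraph.mem_edgeSet] at hEedge
    have hsep' : IsMixedSeparator F x y Vs (Es \ {s(a, b)}) := by
      refine ⟨hsep.1, fun e he => hsep.2.1 he.1, ?_⟩
      intro hxyr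
      apply hsep.2.2
      refine reach_mono ?_ hxyr
      intro u v huv
      obtain ⟨hF, hu, hv, hEs⟩ := huv
      by_cases hmem : s(u, v) ∈ Es
      · have heq : s(u, v) = s(a, b) := by
          by_contra hne'
          exact hEs ⟨hmem, hne'⟩
        rw [Sym2.eq_iff] at heq
        rcases heq with ⟨rfl, rfl⟩ | ⟨rfl, rfl⟩
        · exact hreach
        · exact hreach.symm
      · exact SimpleGraph.Adj.reachable ⟨hF, hu, hv, hmem⟩
    have hEq := (hmin Vs _ hsep' subset_rfl Set.diff_subset).2
    have : s(a, b) ∈ Es \ {s(a, b)} := by rw [hEq]; exact hab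
    exact this.2 rfl
  refine ⟨key, ?_⟩
  have hVs : ∀ a b : V, (deleteVE F Vs Es).Reachable a b → a ≠ b → a ∉ Vs := by
    intro a b hr hne
    obtain ⟨w⟩ := hr
    cases w with
    | nil => exact absurd rfl hne
    | cons h p => exact h.2.1
  intro a b hreach hFab
  exact ⟨hFab, hVs a b hreach hFab.ne, hVs b a hreach.symm hFab.ne.symm,
    fun h => key a b h hreach⟩
end

section
/- Let F be a chordal simple graph, let x and y be nonadjacent vertices of F, and let (V_S, E_S) be an inclusion-wise minimal mixed x–y separator of F. Then every connected component of the graph F − V_S − E_S, obtained by deleting the vertices V_S and the edges E_S, induces a chordal graph. -/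
open SimpleGraph

variable {V : Type*}

private lemma reach_of_adj_reach {V : Type*} {G1 G2 : SimpleGraph V}
    (h : ∀ u v, G1.Adj u v → G2.Reachable u v) {u v : V}
    (r : G1.Reachable u v) : G2.Reachable u v := by
  obtain ⟨w⟩ := r
  induction w with
  | nil => exact Reachable.refl _
  | cons hadj p ih => exact (h _ _ hadj).trans ih

private lemma key_adj {V : Type*} (F : SimpleGraph V)
    (x y : V)
    (Vs : Set V) (Es : Set (Sym2 V))
    (hsep : IsMixedSeparator F x y Vs Es)
    (hmin : ∀ (Vs' : Set V) (Es' : Set (Sym2 V)),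
      IsMixedSeparator F x y Vs' Es' → Vs' ⊆ Vs → Es' ⊆ Es → Vs' = Vs ∧ Es' = Es)
    {a b : V} (hr : (deleteVE F Vs Es).Reachable a b) (hab : F.Adj a b) :
    (deleteVE F Vs Es).Adj a b := by
  set H := deleteVE F Vs Es with hH
  have hiso : ∀ c : V, c ∈ Vs → ∀ d, H.Reachable c d → c = d := by
    intro c hc d hrd
    obtain ⟨w⟩ := hrd
    cases w with
    | nil => rfl
    | cons hadj p => exact absurd hc hadj.2.1
  have haV : a ∉ Vs := fun h => hab.ne (hiso a h b hr)
  have hbV : b ∉ Vs := fun h => hab.ne' (hiso b h a hr.symm)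
  refine ⟨hab, haV, hbV, ?_⟩
  intro hEs
  -- removing s(a,b) from Es still separates
  have hsep' : IsMixedSeparator F x y Vs (Es \ {s(a, b)}) := by
    refine ⟨hsep.1, fun e he => hsep.2.1 he.1, ?_⟩
    intro hreach
    refine hsep.2.2 (reach_of_adj_reach ?_ hreach)
    intro u v huv
    by_cases h : s(u, v) ∈ Es
    · have : s(u, v) = s(a, b) := by
        by_contra hne
        exact huv.2.2.2 ⟨h, hne⟩
      rw [Sym2.eq_iff] at this
      rcases this with ⟨rfl, rfl⟩ | ⟨rfl, rfl⟩
      · exact hr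
      · exact hr.symm
    · exact SimpleGraph.Adj.reachable ⟨huv.1, huv.2.1, huv.2.2.1, h⟩
  have := (hmin Vs (Es \ {s(a, b)}) hsep' (le_refl _) Set.diff_subset).2
  rw [← this] at hEs
  exact hEs.2 rfl

/-- Let `F` be a chordal graph and `(Vs, Es)` an inclusion-wise
minimal mixed `x`–`y` separator of `F` (with `x`, `y` nonadjacent).  Then every
connected component of `F − Vs − Es` induces a chordal graph. -/
theorem stmt7 {V : Type*} (F : SimpleGraph V) (hF : ChordalGraph F)
    (x y : V) (hxy : ¬ F.Adj x y)
    (Vs : Set V) (Es : Set (Sym2 V))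
    (hsep : IsMixedSeparator F x y Vs Es)
    (hmin : ∀ (Vs' : Set V) (Es' : Set (Sym2 V)),
      IsMixedSeparator F x y Vs' Es' → Vs' ⊆ Vs → Es' ⊆ Es → Vs' = Vs ∧ Es' = Es) :
    ∀ C : (deleteVE F Vs Es).ConnectedComponent,
      ChordalGraph ((deleteVE F Vs Es).induce C.supp) := by
  set H := deleteVE F Vs Es with hH
  intro C v c hc
  obtain ⟨hcyc, hlen, hind⟩ := hc
  have hle : H ≤ F := fun a b h => h.1
  let f : H.induce C.supp ↪g H := SimpleGraph.Embedding.induce C.supp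
  let g : H →g F := SimpleGraph.Hom.ofLE hle
  have hginj : Function.Injective g := fun a b h => h
  let c' : F.Walk (v : V) (v : V) := (c.map f.toHom).map g
  refine hF (v : V) c' ⟨(hcyc.map f.injective).map hginj, ?_, ?_⟩
  · show 4 ≤ ((c.map f.toHom).map g).length
    rw [SimpleGraph.Walk.length_map, SimpleGraph.Walk.length_map]; exact hlen
  · intro p q hp hq hpq
    change p ∈ ((c.map f.toHom).map g).support at hp
    change q ∈ ((c.map f.toHom).map g).support at hq
    simp only [c', SimpleGraph.Walk.support_map, List.mem_map] at hp hq
    obtain ⟨p1, hp1, rfl⟩ := hp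
    obtain ⟨p0, hp0, rfl⟩ := hp1
    obtain ⟨q1, hq1, rfl⟩ := hq
    obtain ⟨q0, hq0, rfl⟩ := hq1
    -- p0 q0 : subtype; they are in C.supp, so reachable in H
    have hreach : H.Reachable (p0 : V) (q0 : V) := by
      have hp' : (p0 : V) ∈ C.supp := p0.2
      have hq' : (q0 : V) ∈ C.supp := q0.2
      rw [SimpleGraph.ConnectedComponent.mem_supp_iff] at hp' hq'
      exact SimpleGraph.ConnectedComponent.eq.mp (hp'.trans hq'.symm)
    have hHadj : H.Adj (p0 : V) (q0 : V) := key_adj F x y Vs Es hsep hmin hreach hpq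
    have hiadj : (H.induce C.supp).Adj p0 q0 := hHadj
    have := hind p0 q0 hp0 hq0 hiadj
    show ((c.map f.toHom).map g).toSubgraph.Adj _ _
    simp only [c', SimpleGraph.Walk.toSubgraph_map]
    exact ⟨(p0 : V), (q0 : V), ⟨p0, q0, this, rfl, rfl⟩, rfl, rfl⟩
end

section
/- Let F be a chordal simple graph, let P be an induced path in F with endpoints u and v, and let y be a vertex of F that does not lie on P and is adjacent to both u and v. Then y is adjacent to every vertex of P. -/
open SimpleGraph

variable {V : Type*}

private lemma stmt8_aux {V : Type*} [DecidableEq V] (F : SimpleGraph V) (hF : ChordalGraph F)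
    (y : V) : ∀ n {u v : V} (p : F.Walk u v), p.length = n → p.IsPath →
    (∀ a b : V, a ∈ p.support → b ∈ p.support → F.Adj a b → s(a, b) ∈ p.edges) →
    y ∉ p.support → F.Adj y u → F.Adj y v →
    ∀ a ∈ p.support, F.Adj y a := by
  intro n
  induction n using Nat.strong_induction_on with
  | _ n ih =>
  intro u v p hlen hpath hind hy hyu hyv a ha
  cases p with
  | nil =>
      simp only [Walk.support_nil, List.mem_singleton] at ha
      subst ha; exact hyu
  | cons hadj q =>
    cases q with
    | nil =>
        simp only [Walk.support_cons, Walk.support_nil, List.mem_cons,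
          List.mem_singleton, List.not_mem_nil, or_false] at ha
        rcases ha with rfl | rfl
        · exact hyu
        · exact hyv
    | cons hadj' q' =>
      have hlen2 : 2 ≤ (Walk.cons hadj (Walk.cons hadj' q')).length := by
        simp only [Walk.length_cons]; omega
      generalize hgen : Walk.cons hadj (Walk.cons hadj' q') = p at hlen hpath hind hy hyv ha hlen2
      clear hgen hadj hadj' q'
      -- `u ≠ v`
      have huv : u ≠ v := by
        rintro rfl
        rw [Walk.isPath_iff_eq_nil] at hpath
        subst hpath
        simp at hlen2
      -- build the cycle `y - u - … - v - y`
      set q : F.Walk u y := p.concat hyv.symm with hq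
      have hqsupp : q.support = p.support ++ [y] := by
        rw [hq, Walk.support_concat]
      have hqpath : q.IsPath := by
        rw [Walk.isPath_def, hqsupp, List.nodup_append']
        refine ⟨hpath.support_nodup, List.nodup_singleton y, ?_⟩
        intro t ht ht'
        simp only [List.mem_singleton] at ht'
        subst ht'
        exact hy ht
      have hqe : q.edges = p.edges ++ [s(v, y)] := by
        rw [hq, Walk.edges_concat, List.concat_eq_append]
      set c : F.Walk y y := Walk.cons hyu q with hc
      have hcyc : c.IsCycle := by
        rw [hc, Walk.cons_isCycle_iff]
        refine ⟨hqpath, ?_⟩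
        rw [hqe, List.mem_append, List.mem_singleton]
        rintro (hmem | heq)
        · exact hy (Walk.fst_mem_support_of_mem_edges p hmem)
        · rw [Sym2.eq_iff] at heq
          rcases heq with ⟨h1, h2⟩ | ⟨h1, h2⟩
          · exact hy (h1 ▸ p.end_mem_support)
          · exact huv h2
      have hclen : 4 ≤ c.length := by
        rw [hc, Walk.length_cons, hq, Walk.length_concat]
        omega
      have hce : c.edges = s(y, u) :: (p.edges ++ [s(v, y)]) := by
        rw [hc, Walk.edges_cons, hqe]
      have hcsupp : c.support = y :: (p.support ++ [y]) := by
        rw [hc, Walk.support_cons, hqsupp]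
      have hceadj : ∀ x z : V, c.toSubgraph.Adj x z ↔ s(x, z) ∈ c.edges := by
        intro x z
        rw [← Subgraph.mem_edgeSet, Walk.mem_edges_toSubgraph]
      -- `c` is not a hole, so it has a chord
      have hnh := hF y c
      rw [IsHole] at hnh
      push_neg at hnh
      obtain ⟨x, z, hx, hz, hxz, hnc⟩ := hnh hcyc hclen
      rw [hceadj] at hnc
      rw [hce] at hnc
      have hmem : ∀ t : V, t ∈ c.support → t = y ∨ t ∈ p.support := by
        intro t ht
        rw [hcsupp] at ht
        simp only [List.mem_cons, List.mem_append, List.mem_singleton] at ht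
        tauto
      -- the chord must join `y` to an internal vertex `w` of `p`
      have key : ∃ w, w ∈ p.support ∧ w ≠ u ∧ w ≠ v ∧ F.Adj y w := by
        rcases hmem x hx with rfl | hxp <;> rcases hmem z hz with rfl | hzp
        · exact absurd rfl hxz.ne
        · refine ⟨z, hzp, ?_, ?_, hxz⟩
          · rintro rfl
            exact hnc List.mem_cons_self
          · rintro rfl
            exact hnc (List.mem_cons_of_mem _
              (List.mem_append_right _ (List.mem_singleton.mpr Sym2.eq_swap)))
        · refine ⟨x, hxp, ?_, ?_, hxz.symm⟩
          · rintro rfl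
            exact hnc (List.mem_cons.mpr (Or.inl Sym2.eq_swap))
          · rintro rfl
            exact hnc (List.mem_cons_of_mem _
              (List.mem_append_right _ (List.mem_singleton.mpr rfl)))
        · exact absurd (List.mem_cons_of_mem _
            (List.mem_append_left _ (hind x z hxp hzp hxz))) hnc
      obtain ⟨w, hw, hwu, hwv, hyw⟩ := key
      -- split `p` at `w`
      set p1 : F.Walk u w := p.takeUntil w hw with hp1def
      set p2 : F.Walk w v := p.dropUntil w hw with hp2def
      have hspec : p1.append p2 = p := p.take_spec hw
      have hp1 : p1.IsPath := hpath.takeUntil hw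
      have hp2 : p2.IsPath := hpath.dropUntil hw
      have hlens : p1.length + p2.length = p.length := by
        rw [← Walk.length_append, hspec]
      have hl1 : 1 ≤ p1.length := by
        rcases Nat.eq_zero_or_pos p1.length with h0 | h0
        · exact absurd (Walk.eq_of_length_eq_zero h0) hwu.symm
        · exact h0
      have hl2 : 1 ≤ p2.length := by
        rcases Nat.eq_zero_or_pos p2.length with h0 | h0
        · exact absurd (Walk.eq_of_length_eq_zero h0) hwv
        · exact h0
      -- the two pieces only share the vertex `w`
      have hshare : ∀ t : V, t ∈ p1.support → t ∈ p2.support → t = w := by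
        intro t h1 h2
        by_contra hne
        have hnodup : (p1.support ++ p2.support.tail).Nodup := by
          rw [← Walk.support_append, hspec]
          exact hpath.support_nodup
        have h2' : t ∈ p2.support.tail := by
          rw [Walk.support_eq_cons] at h2
          rcases List.mem_cons.mp h2 with h2 | h2
          · exact absurd h2 hne
          · exact h2
        exact (List.nodup_append'.mp hnodup).2.2 h1 h2'
      have hedges : p.edges = p1.edges ++ p2.edges := by
        rw [← hspec, Walk.edges_append]
      -- each piece is an induced path
      have hind1 : ∀ a b : V, a ∈ p1.support → b ∈ p1.support → F.Adj a b →
          s(a, b) ∈ p1.edges := by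
        intro a b ha' hb' hab
        have h := hind a b (p.support_takeUntil_subset hw ha')
          (p.support_takeUntil_subset hw hb') hab
        rw [hedges, List.mem_append] at h
        rcases h with h | h
        · exact h
        · exfalso
          have haw := hshare a ha' (Walk.fst_mem_support_of_mem_edges p2 h)
          have hbw := hshare b hb' (Walk.snd_mem_support_of_mem_edges p2 h)
          exact hab.ne (haw.trans hbw.symm)
      have hind2 : ∀ a b : V, a ∈ p2.support → b ∈ p2.support → F.Adj a b →
          s(a, b) ∈ p2.edges := by
        intro a b ha' hb' hab
        have h := hind a b (p.support_dropUntil_subset hw ha')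
          (p.support_dropUntil_subset hw hb') hab
        rw [hedges, List.mem_append] at h
        rcases h with h | h
        · exfalso
          have haw := hshare a (Walk.fst_mem_support_of_mem_edges p1 h) ha'
          have hbw := hshare b (Walk.snd_mem_support_of_mem_edges p1 h) hb'
          exact hab.ne (haw.trans hbw.symm)
        · exact h
      have hy1 : y ∉ p1.support := fun h => hy (p.support_takeUntil_subset hw h)
      have hy2 : y ∉ p2.support := fun h => hy (p.support_dropUntil_subset hw h)
      -- apply the induction hypothesis to both pieces
      have ih1 := ih p1.length (by omega) p1 rfl hp1 hind1 hy1 hyu hyw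
      have ih2 := ih p2.length (by omega) p2 rfl hp2 hind2 hy2 hyw hyv
      rw [← hspec, Walk.mem_support_append_iff] at ha
      rcases ha with ha | ha
      · exact ih1 a ha
      · exact ih2 a ha

/-- Let `F` be a chordal graph, `p` an induced path in `F` with
endpoints `u` and `v`, and `y` a vertex not on `p` adjacent to both `u` and `v`.
Then `y` is adjacent to every vertex of `p`. -/
theorem stmt8 {V : Type*} (F : SimpleGraph V) (hF : ChordalGraph F)
    {u v : V} (p : F.Walk u v) (hpath : p.IsPath)
    (hinduced : ∀ a b : V, a ∈ p.support → b ∈ p.support → F.Adj a b →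
      p.toSubgraph.Adj a b)
    (y : V) (hy : y ∉ p.support) (hyu : F.Adj y u) (hyv : F.Adj y v) :
    ∀ a ∈ p.support, F.Adj y a := by
  classical
  refine stmt8_aux F hF y p.length p rfl hpath ?_ hy hyu hyv
  intro a b ha hb hab
  have := hinduced a b ha hb hab
  rwa [← Subgraph.mem_edgeSet, Walk.mem_edges_toSubgraph] at this
end

section
/- Let G be a simple graph and M ⊆ V(G) such that G − M is chordal. Let H be a hole of G, let A be the set of vertices of G adjacent to every vertex of H, let A_0 = A ∖ M, and let V_0 = V(G) ∖ (M ∪ A). Let u and v be two vertices of H lying in V_0. Then every vertex x lying on some induced u–v path of the induced subgraph G[V_0] is adjacent to every vertex y ∈ A_0 (or equals no vertex of A_0, since V_0 and A_0 are disjoint); that is, the set of vertices of induced u–v paths in G[V_0] is completely connected to A_0. -/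
open SimpleGraph

variable {V : Type*}

/-- On a path, `getVert` is injective on indices up to the length. -/
private lemma getVert_injOn_aux {W : Type*} {G : SimpleGraph W} {a b : W} {q : G.Walk a b}
    (hq : q.IsPath) : ∀ i j : ℕ, i ≤ q.length → j ≤ q.length →
      q.getVert i = q.getVert j → i = j := by
  induction q with
  | nil => intro i j hi hj _; simp at hi hj; omega
  | @cons a c b h p ih =>
    intro i j hi hj hij
    rw [SimpleGraph.Walk.cons_isPath_iff] at hq
    match i, j with
    | 0, 0 => rfl
    | 0, j+1 =>
      exfalso
      apply hq.2
      rw [SimpleGraph.Walk.mem_support_iff_exists_getVert]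
      refine ⟨j, ?_, ?_⟩
      · rw [← SimpleGraph.Walk.getVert_cons_succ p h, ← hij, SimpleGraph.Walk.getVert_zero]
      · simp only [SimpleGraph.Walk.length_cons] at hj; omega
    | i+1, 0 =>
      exfalso
      apply hq.2
      rw [SimpleGraph.Walk.mem_support_iff_exists_getVert]
      refine ⟨i, ?_, ?_⟩
      · rw [← SimpleGraph.Walk.getVert_cons_succ p h, hij, SimpleGraph.Walk.getVert_zero]
      · simp only [SimpleGraph.Walk.length_cons] at hi; omega
    | i+1, j+1 =>
      simp only [SimpleGraph.Walk.length_cons] at hi hj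
      rw [SimpleGraph.Walk.getVert_cons_succ, SimpleGraph.Walk.getVert_cons_succ] at hij
      have := ih hq.1 i j (by omega) (by omega) hij
      omega

/-- Extraction of a segment of a walk between two indices. -/
private lemma seg_walk {W : Type*} {G : SimpleGraph W} {a b : W} (q : G.Walk a b) :
    ∀ (d i : ℕ), i + d ≤ q.length →
      ∃ r : G.Walk (q.getVert i) (q.getVert (i + d)),
        r.length = d ∧ (∀ k, k ≤ d → r.getVert k = q.getVert (i + k)) ∧
        r.support = (List.range (d + 1)).map (fun k => q.getVert (i + k)) := by
  intro d
  induction d with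
  | zero =>
    intro i _
    refine ⟨SimpleGraph.Walk.nil, rfl, ?_, by simp [List.range_succ]⟩
    intro k hk
    interval_cases k
    simp
  | succ d ihd =>
    intro i hi
    obtain ⟨r', hlen, hget, hsup⟩ := ihd (i + 1) (by omega)
    have hadj : G.Adj (q.getVert i) (q.getVert (i + 1)) := q.adj_getVert_succ (by omega)
    have hcast : q.getVert (i + 1 + d) = q.getVert (i + (d + 1)) := by congr 1; omega
    refine ⟨(SimpleGraph.Walk.cons hadj r').copy rfl hcast, by simp [hlen], ?_, ?_⟩
    · intro k hk
      match k with
      | 0 => simp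
      | k+1 =>
        rw [SimpleGraph.Walk.getVert_copy, SimpleGraph.Walk.getVert_cons_succ,
          hget k (by omega)]
        congr 1
        omega
    · rw [SimpleGraph.Walk.support_copy, SimpleGraph.Walk.support_cons, hsup]
      conv_rhs => rw [List.range_succ_eq_map, List.map_cons, List.map_map]
      rw [show i + 0 = i from rfl]
      congr 1
      apply List.map_congr_left
      intro k _
      exact congrArg q.getVert (by omega)

/-- Let `M ⊆ V(G)` with `G − M` chordal, let `H` (the walk `c`) be
a hole of `G`, let `A` be the set of vertices adjacent to every vertex of `H`,
`A₀ = A \ M`, and `V₀ = V(G) \ (M ∪ A)`.  For vertices `u, v` of `H` lying in `V₀`,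
every vertex `x` on some induced `u`–`v` path of `G[V₀]` is adjacent to every
vertex `y ∈ A₀`; that is, the set of vertices of induced `u`–`v` paths in `G[V₀]`
is completely connected to `A₀`. -/
theorem stmt9 {V : Type*} (G : SimpleGraph V) (M : Set V)
    (hM : ChordalGraph (G.induce Mᶜ))
    {h₀ : V} (c : G.Walk h₀ h₀) (hhole : IsHole G c)
    (A : Set V) (hA : A = {z : V | ∀ w ∈ c.support, G.Adj z w})
    (V₀ : Set V) (hV₀ : V₀ = (M ∪ A)ᶜ)
    (u v : V₀) (hu : (u : V) ∈ c.support) (hv : (v : V) ∈ c.support)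
    (p : (G.induce V₀).Walk u v) (hpath : p.IsPath)
    (hinduced : ∀ a b : V₀, a ∈ p.support → b ∈ p.support →
      (G.induce V₀).Adj a b → p.toSubgraph.Adj a b)
    (x : V₀) (hx : x ∈ p.support) (y : V) (hy : y ∈ A \ M) :
    G.Adj (x : V) y := by
  classical
  have hyM : y ∉ M := hy.2
  have hyA : y ∈ A := hy.1
  have hadjall : ∀ w ∈ c.support, G.Adj y w := by rw [hA] at hyA; exact hyA
  have hsub : V₀ ⊆ Mᶜ := by
    rw [hV₀]
    intro z hz
    simp only [Set.mem_compl_iff, Set.mem_union, not_or] at hz ⊢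
    exact hz.1
  -- the inclusion homomorphism
  let f : (G.induce V₀) →g (G.induce Mᶜ) :=
    ⟨fun z => ⟨(z : V), hsub z.2⟩, fun h => h⟩
  have hfinj : Function.Injective f := fun z w h =>
    Subtype.ext (congrArg (Subtype.val : ↥Mᶜ → V) h)
  let q := p.map f
  have hqpath : q.IsPath := SimpleGraph.Walk.map_isPath_of_injective hfinj hpath
  set n := q.length with hn
  -- all vertices of q have value in V₀
  have hsupV₀ : ∀ z ∈ q.support, ((z : ↥Mᶜ) : V) ∈ V₀ := by
    intro z hz
    rw [SimpleGraph.Walk.support_map] at hz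
    obtain ⟨z', _, rfl⟩ := List.mem_map.mp hz
    exact z'.2
  have hgm : ∀ m : ℕ, q.getVert m ∈ q.support := by
    intro m
    rw [SimpleGraph.Walk.mem_support_iff_exists_getVert]
    refine ⟨min m n, ?_, min_le_right _ _⟩
    rcases le_total m n with h | h
    · rw [min_eq_left h]
    · rw [min_eq_right h, q.getVert_of_length_le (by omega : q.length ≤ m)]
      exact q.getVert_length
  have hV₀m : ∀ m : ℕ, ((q.getVert m : ↥Mᶜ) : V) ∈ V₀ := fun m => hsupV₀ _ (hgm m)
  have hneY : ∀ m : ℕ, ((q.getVert m : ↥Mᶜ) : V) ≠ y := by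
    intro m h
    have h2 := hV₀m m
    rw [h, hV₀] at h2
    exact h2 (Or.inr hyA)
  -- the adjacency-to-y predicate
  let P : ℕ → Prop := fun m => G.Adj ((q.getVert m : ↥Mᶜ) : V) y
  have hP0 : P 0 := by
    show G.Adj ((q.getVert 0 : ↥Mᶜ) : V) y
    rw [q.getVert_zero]
    exact (hadjall _ hu).symm
  have hPn : P n := by
    show G.Adj ((q.getVert n : ↥Mᶜ) : V) y
    rw [hn, q.getVert_length]
    exact (hadjall _ hv).symm
  -- induced property of q
  have hqind : ∀ z w : ↥Mᶜ, z ∈ q.support → w ∈ q.support → (G.induce Mᶜ).Adj z w →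
      q.toSubgraph.Adj z w := by
    intro z w hz hw hzw
    rw [SimpleGraph.Walk.support_map] at hz hw
    obtain ⟨z', hz', rfl⟩ := List.mem_map.mp hz
    obtain ⟨w', hw', rfl⟩ := List.mem_map.mp hw
    have h3 : p.toSubgraph.Adj z' w' := hinduced z' w' hz' hw' hzw
    have h4 : (p.map f).toSubgraph = p.toSubgraph.map f := SimpleGraph.Walk.toSubgraph_map f p
    show (p.map f).toSubgraph.Adj (f z') (f w')
    rw [h4]
    exact ⟨z', w', h3, rfl, rfl⟩
  -- chords are impossible: any G-edge between q-vertices is consecutive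
  have hchord : ∀ k k' : ℕ, k ≤ n → k' ≤ n →
      G.Adj ((q.getVert k : ↥Mᶜ) : V) ((q.getVert k' : ↥Mᶜ) : V) →
      k' = k + 1 ∨ k = k' + 1 := by
    intro k k' hk hk' hadj
    have h2 := hqind _ _ (hgm k) (hgm k') hadj
    rw [SimpleGraph.Walk.toSubgraph_adj_iff] at h2
    obtain ⟨m, hm, hmlt⟩ := h2
    rw [Sym2.eq_iff] at hm
    rcases hm with ⟨h1, h2⟩ | ⟨h1, h2⟩
    · have e1 := getVert_injOn_aux hqpath m k (by omega) hk h1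
      have e2 := getVert_injOn_aux hqpath (m+1) k' (by omega) hk' h2
      omega
    · have e1 := getVert_injOn_aux hqpath m k' (by omega) hk' h1
      have e2 := getVert_injOn_aux hqpath (m+1) k (by omega) hk h2
      omega
  -- index of x
  have hxq : f x ∈ q.support := by
    rw [SimpleGraph.Walk.support_map]
    exact List.mem_map_of_mem hx
  obtain ⟨k₀, hk₀v, hk₀n⟩ := SimpleGraph.Walk.mem_support_iff_exists_getVert.mp hxq
  by_contra hxy
  have hPk₀ : ¬ P k₀ := by
    show ¬ G.Adj ((q.getVert k₀ : ↥Mᶜ) : V) y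
    rw [hk₀v]
    exact hxy
  have hk₀0 : k₀ ≠ 0 := fun h => hPk₀ (h ▸ hP0)
  have hk₀n' : k₀ ≠ n := fun h => hPk₀ (h ▸ hPn)
  -- find the bracketing neighbors of y
  have key : ∃ i d : ℕ, 2 ≤ d ∧ i + d ≤ n ∧ P i ∧ P (i + d) ∧
      ∀ m, i < m → m < i + d → ¬ P m := by
    set i := Nat.findGreatest P k₀ with hi
    have hPi : P i := Nat.findGreatest_spec (Nat.zero_le k₀) hP0
    have hik : i ≤ k₀ := Nat.findGreatest_le k₀
    have hine : i ≠ k₀ := fun h => hPk₀ (h ▸ hPi)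
    have hiMax : ∀ m, i < m → m ≤ k₀ → ¬ P m := fun m h1 h2 =>
      Nat.findGreatest_is_greatest h1 h2
    have hex : ∃ e : ℕ, P (k₀ + 1 + e) :=
      ⟨n - (k₀ + 1), by rw [show k₀ + 1 + (n - (k₀ + 1)) = n by omega]; exact hPn⟩
    set j := k₀ + 1 + Nat.find hex with hj
    have hPj : P j := Nat.find_spec hex
    have hjn : j ≤ n := by
      have := Nat.find_min' hex (m := n - (k₀ + 1))
        (by rw [show k₀ + 1 + (n - (k₀ + 1)) = n by omega]; exact hPn)
      omega
    have hjMin : ∀ m, k₀ < m → m < j → ¬ P m := by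
      intro m h1 h2
      have h3 := Nat.find_min hex (m := m - (k₀ + 1)) (by omega)
      rw [show k₀ + 1 + (m - (k₀ + 1)) = m by omega] at h3
      exact h3
    refine ⟨i, j - i, by omega, by omega, hPi, ?_, ?_⟩
    · rw [show i + (j - i) = j by omega]; exact hPj
    · intro m h1 h2
      rw [show i + (j - i) = j by omega] at h2
      by_cases h : m ≤ k₀
      · exact hiMax m h1 h
      · exact hjMin m (by omega) h2
  obtain ⟨i, d, hd2, hdn, hPi, hPid, hbet⟩ := key
  -- build the cycle
  obtain ⟨r, hrlen, hrget, hrsup⟩ := seg_walk q d i hdn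
  let Y : ↥Mᶜ := ⟨y, hyM⟩
  have hadj1 : (G.induce Mᶜ).Adj Y (q.getVert i) := hPi.symm
  have hadj2 : (G.induce Mᶜ).Adj (q.getVert (i + d)) Y := hPid
  let e2 : (G.induce Mᶜ).Walk (q.getVert (i + d)) Y := SimpleGraph.Walk.cons hadj2 SimpleGraph.Walk.nil
  let pp : (G.induce Mᶜ).Walk (q.getVert i) Y := r.append e2
  let C : (G.induce Mᶜ).Walk Y Y := SimpleGraph.Walk.cons hadj1 pp
  -- helper facts
  have hYne : ∀ m : ℕ, q.getVert m ≠ Y := by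
    intro m h
    exact hneY m (congrArg Subtype.val h)
  have hYnr : Y ∉ r.support := by
    rw [hrsup]
    intro h
    obtain ⟨k, _, hk⟩ := List.mem_map.mp h
    exact hYne (i + k) hk
  have hrnodup : r.support.Nodup := by
    rw [hrsup]
    refine List.Nodup.map_on ?_ List.nodup_range
    intro k1 hk1 k2 hk2 he
    rw [List.mem_range] at hk1 hk2
    have := getVert_injOn_aux hqpath (i + k1) (i + k2) (by omega) (by omega) he
    omega
  have hppsup : pp.support = r.support ++ [Y] := by
    show (r.append e2).support = r.support ++ [Y]
    rw [SimpleGraph.Walk.support_append]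
    rfl
  -- membership in C's support
  have hCsup : ∀ z : ↥Mᶜ, z ∈ C.support → z = Y ∨ ∃ k, k ≤ d ∧ z = q.getVert (i + k) := by
    intro z hz
    rw [SimpleGraph.Walk.support_cons, List.mem_cons, hppsup, List.mem_append,
      List.mem_singleton] at hz
    rcases hz with h | h | h
    · exact Or.inl h
    · rw [hrsup] at h
      obtain ⟨k, hk, hk2⟩ := List.mem_map.mp h
      rw [List.mem_range] at hk
      exact Or.inr ⟨k, by omega, hk2.symm⟩
    · exact Or.inl h
  -- C's subgraph adjacency
  have hCadj : ∀ z w : ↥Mᶜ, (s(Y, q.getVert i) = s(z, w)) ∨ r.toSubgraph.Adj z w ∨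
      (s(q.getVert (i + d), Y) = s(z, w)) → C.toSubgraph.Adj z w := by
    intro z w h
    show (SimpleGraph.subgraphOfAdj _ hadj1 ⊔ (r.append e2).toSubgraph).Adj z w
    rw [SimpleGraph.Walk.toSubgraph_append, SimpleGraph.Subgraph.sup_adj,
      SimpleGraph.Subgraph.sup_adj]
    rcases h with h | h | h
    · exact Or.inl (by rw [SimpleGraph.subgraphOfAdj_adj]; exact h)
    · exact Or.inr (Or.inl h)
    · refine Or.inr (Or.inr ?_)
      show (SimpleGraph.Walk.cons hadj2 SimpleGraph.Walk.nil).toSubgraph.Adj z w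
      rw [SimpleGraph.Walk.toSubgraph_cons_nil_eq_subgraphOfAdj]
      rw [SimpleGraph.subgraphOfAdj_adj]; exact h
  -- the segment edges are in C
  have hseg_edge : ∀ k : ℕ, k < d → C.toSubgraph.Adj (q.getVert (i + k)) (q.getVert (i + (k+1))) := by
    intro k hk
    apply hCadj
    refine Or.inr (Or.inl ?_)
    have h1 := SimpleGraph.Walk.toSubgraph_adj_getVert r (by omega : k < r.length)
    rw [hrget k (by omega), hrget (k+1) (by omega)] at h1
    exact h1
  -- y-adjacency within the segment forces endpoints
  have hYseg : ∀ k : ℕ, k ≤ d → G.Adj ((q.getVert (i + k) : ↥Mᶜ) : V) y → k = 0 ∨ k = d := by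
    intro k hk hadj
    by_contra h
    push_neg at h
    exact hbet (i + k) (by omega) (by omega) hadj
  -- apply chordality
  apply hM Y C
  refine ⟨?_, ?_, ?_⟩
  · -- IsCycle
    rw [SimpleGraph.Walk.cons_isCycle_iff]
    constructor
    · rw [SimpleGraph.Walk.isPath_def, hppsup]
      rw [List.nodup_append]
      exact ⟨hrnodup, List.nodup_singleton _, by
        intro a ha b hb hab
        rw [List.mem_singleton] at hb
        subst hb
        exact hYnr (hab ▸ ha)⟩
    · intro hmem
      show False
      have : pp.edges = r.edges ++ [s(q.getVert (i + d), Y)] := by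
        show (r.append e2).edges = _
        rw [SimpleGraph.Walk.edges_append]
        rfl
      rw [this, List.mem_append, List.mem_singleton] at hmem
      rcases hmem with h | h
      · exact hYnr (SimpleGraph.Walk.fst_mem_support_of_mem_edges r h)
      · rw [Sym2.eq_iff] at h
        rcases h with ⟨h1, h2⟩ | ⟨h1, h2⟩
        · exact hYne i h2
        · have := getVert_injOn_aux hqpath i (i + d) (by omega) (by omega) h2
          omega
  · -- length
    show 4 ≤ (SimpleGraph.Walk.cons hadj1 (r.append e2)).length
    rw [SimpleGraph.Walk.length_cons, SimpleGraph.Walk.length_append, hrlen]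
    show 4 ≤ d + (SimpleGraph.Walk.cons hadj2 SimpleGraph.Walk.nil).length + 1
    rw [SimpleGraph.Walk.length_cons, SimpleGraph.Walk.length_nil]
    omega
  · -- induced
    intro z w hz hw hzw
    rcases hCsup z hz with rfl | ⟨k, hk, rfl⟩
    · rcases hCsup w hw with rfl | ⟨k', hk', rfl⟩
      · exact absurd rfl hzw.ne
      · have hadjv : G.Adj ((q.getVert (i + k') : ↥Mᶜ) : V) y := hzw.symm
        rcases hYseg k' hk' hadjv with rfl | rfl
        · exact hCadj _ _ (Or.inl rfl)
        · exact hCadj _ _ (Or.inr (Or.inr (Sym2.eq_swap)))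
    · rcases hCsup w hw with rfl | ⟨k', hk', rfl⟩
      · have hadjv : G.Adj ((q.getVert (i + k) : ↥Mᶜ) : V) y := hzw
        rcases hYseg k hk hadjv with rfl | rfl
        · exact hCadj _ _ (Or.inl Sym2.eq_swap)
        · exact hCadj _ _ (Or.inr (Or.inr rfl))
      · have hadjv : G.Adj ((q.getVert (i + k) : ↥Mᶜ) : V) ((q.getVert (i + k') : ↥Mᶜ) : V) := hzw
        rcases hchord (i + k) (i + k') (by omega) (by omega) hadjv with h | h
        · have hk'' : k' = k + 1 := by omega
          subst hk''
          exact hseg_edge k (by omega)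
        · have hk'' : k = k' + 1 := by omega
          subst hk''
          exact (hseg_edge k' (by omega)).symm
end

section
/- Let G be a simple graph containing a hole H of length ℓ ≥ 4, and let E_+ be a set of non-adjacent vertex pairs of G such that the graph G + E_+ obtained by adding all pairs of E_+ as edges is chordal. Then E_+ contains at least ℓ − 3 pairs with both elements in V(H). In particular, a hole of length greater than k + 3 cannot be made chordal by adding at most k edges. -/
open SimpleGraph

variable {V : Type*}

namespace StmtAux

variable {V : Type*} {H : SimpleGraph V}

lemma support_getElem_eq_getVert {u v : V} (p : H.Walk u v) (i : ℕ) (h : i < p.support.length) :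
    p.support[i] = p.getVert i := by
  induction p generalizing i with
  | nil => simp at h; subst h; simp
  | cons ha q ih =>
    match i with
    | 0 => simp
    | (j+1) =>
      simp only [Walk.support_cons, List.getElem_cons_succ, Walk.getVert_cons_succ]
      exact ih j (by simpa [Walk.length_support] using (by simpa [Walk.length_support] using h : j + 1 < q.support.length + 1))

/-- walk visiting `g 0, g 1, ..., g n`. -/
def pathWalk (H : SimpleGraph V) (g : ℕ → V) :
    (n : ℕ) → (∀ k < n, H.Adj (g k) (g (k+1))) → H.Walk (g 0) (g n)
  | 0, _ => Walk.nil
  | (n+1), h => (pathWalk H g n (fun k hk => h k (Nat.lt_succ_of_lt hk))).concat (h n (Nat.lt_succ_self n))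

@[simp] lemma pathWalk_length (g : ℕ → V) (n : ℕ) (h : ∀ k < n, H.Adj (g k) (g (k+1))) :
    (pathWalk H g n h).length = n := by
  induction n with
  | zero => rfl
  | succ n ih => simp [pathWalk, ih]

lemma pathWalk_getVert (g : ℕ → V) (n : ℕ) (h : ∀ k < n, H.Adj (g k) (g (k+1))) (i : ℕ) :
    (pathWalk H g n h).getVert i = g (min i n) := by
  induction n generalizing i with
  | zero => simp [pathWalk, Walk.getVert_of_length_le]
  | succ n ih =>
    rw [pathWalk, Walk.concat_eq_append, Walk.getVert_append]
    simp only [pathWalk_length]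
    by_cases hi : i < n
    · rw [if_pos hi, ih, min_eq_left hi.le, min_eq_left (by omega)]
    · rw [if_neg hi]
      rcases Nat.lt_or_ge i (n+1) with h1 | h1
      · have : i = n := by omega
        subst this
        simp [Walk.getVert, min_eq_left]
      · have : i - n ≠ 0 := by omega
        rcases Nat.exists_eq_succ_of_ne_zero this with ⟨j, hj⟩
        rw [hj]
        simp only [Walk.getVert_cons_succ]
        rw [Walk.getVert_of_length_le _ (by simp), min_eq_right h1]

lemma pathWalk_support (g : ℕ → V) (n : ℕ) (h : ∀ k < n, H.Adj (g k) (g (k+1))) :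
    (pathWalk H g n h).support = (List.range (n+1)).map g := by
  induction n with
  | zero => simp [pathWalk, List.range_succ]
  | succ n ih => simp [pathWalk, ih, List.range_succ]

lemma pathWalk_edges (g : ℕ → V) (n : ℕ) (h : ∀ k < n, H.Adj (g k) (g (k+1))) :
    (pathWalk H g n h).edges = (List.range n).map (fun k => s(g k, g (k+1))) := by
  induction n with
  | zero => rfl
  | succ n ih => simp [pathWalk, ih, List.range_succ]

lemma key (H : SimpleGraph V) (hchordal : ChordalGraph H)
    (Ep : Set (Sym2 V)) (f : ℕ → V) (ℓ : ℕ)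
    (hEpnd : ∀ e ∈ Ep, ¬ e.IsDiag)
    (hInj : ∀ i < ℓ, ∀ j < ℓ, f i = f j → i = j)
    (hEpAdj : ∀ x y : V, s(x, y) ∈ Ep → x ≠ y → H.Adj x y)
    (hHadj : ∀ i j, i < ℓ → j < ℓ → H.Adj (f i) (f j) →
      s(f i, f j) ∈ Ep ∨ j = i + 1 ∨ i = j + 1 ∨ (i = 0 ∧ j = ℓ - 1) ∨ (j = 0 ∧ i = ℓ - 1))
    (n : ℕ) : 3 ≤ n → ∀ S : ℕ → ℕ,
      (∀ k l, k < l → l < n → S k < S l) →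
      (∀ k < n, S k < ℓ) →
      (∀ k, k + 1 < n → H.Adj (f (S k)) (f (S (k+1)))) →
      H.Adj (f (S (n-1))) (f (S 0)) →
      n - 3 + {e ∈ Ep | ∃ k < n, e = s(f (S k), f (S ((k+1) % n)))}.ncard
        ≤ {e ∈ Ep | ∀ x ∈ e, ∃ k < n, x = f (S k)}.ncard := by
  induction n using Nat.strong_induction_on with
  | _ n ih =>
  intro h3 S hmono hlt hchain hwrap
  -- abbreviations
  set A : Set (Sym2 V) := {e ∈ Ep | ∀ x ∈ e, ∃ k < n, x = f (S k)} with hA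
  set B : Set (Sym2 V) := {e ∈ Ep | ∃ k < n, e = s(f (S k), f (S ((k+1) % n)))} with hB
  have hfS : ∀ k < n, ∀ k' < n, f (S k) = f (S k') → k = k' := by
    intro k hk k' hk' hf
    have := hInj _ (hlt k hk) _ (hlt k' hk') hf
    rcases lt_trichotomy k k' with h | h | h
    · exact absurd (hmono k k' h hk') (by omega)
    · exact h
    · exact absurd (hmono k' k h hk) (by omega)
  have hAfin : A.Finite := by
    have : A ⊆ (fun p : ℕ × ℕ => s(f (S p.1), f (S p.2))) '' (Set.Iio n ×ˢ Set.Iio n) := by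
      rintro e ⟨heEp, he⟩
      induction e with
      | h x y =>
        obtain ⟨k, hk, hx⟩ := he x (by simp)
        obtain ⟨k', hk', hy⟩ := he y (by simp [Sym2.mem_iff])
        exact ⟨(k, k'), ⟨hk, hk'⟩, by simp [hx, hy]⟩
    exact Set.Finite.subset (Set.Finite.image _ ((Set.finite_Iio n).prod (Set.finite_Iio n))) this
  have hBA : B ⊆ A := by
    rintro e ⟨heEp, k, hk, hek⟩
    refine ⟨heEp, ?_⟩
    intro x hx
    rw [hek] at hx
    rcases Sym2.mem_iff.mp hx with h | h
    · exact ⟨k, hk, h⟩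
    · exact ⟨(k+1) % n, Nat.mod_lt _ (by omega), h⟩
  rcases eq_or_lt_of_le h3 with h3' | h4
  · -- base case n = 3
    rw [← h3']
    simpa using Set.ncard_le_ncard hBA hAfin
  -- step case: n ≥ 4
  have hBAgen : ∀ (m : ℕ) (T : ℕ → ℕ), 0 < m →
      {e ∈ Ep | ∃ k < m, e = s(f (T k), f (T ((k+1) % m)))} ⊆
      {e ∈ Ep | ∀ x ∈ e, ∃ k < m, x = f (T k)} := by
    rintro m T hm e ⟨heEp, k, hk, hek⟩
    refine ⟨heEp, fun x hx => ?_⟩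
    rw [hek] at hx
    rcases Sym2.mem_iff.mp hx with h | h
    · exact ⟨k, hk, h⟩
    · exact ⟨(k+1) % m, Nat.mod_lt _ hm, h⟩
  -- build the polygon walk
  set g : ℕ → V := fun k => if k < n then f (S k) else f (S 0) with hg
  have hgf : ∀ k < n, g k = f (S k) := fun k hk => if_pos hk
  have hgsucc : ∀ k < n, g (k+1) = f (S ((k+1) % n)) := by
    intro k hk
    rcases eq_or_lt_of_le (show k + 1 ≤ n from hk) with h | h
    · rw [hg]
      simp only
      rw [if_neg (by omega), h, Nat.mod_self]
    · rw [hgf _ h, Nat.mod_eq_of_lt h]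
  have hadjg : ∀ k < n, H.Adj (g k) (g (k+1)) := by
    intro k hk
    rw [hgf k hk, hgsucc k hk]
    rcases eq_or_lt_of_le (show k + 1 ≤ n from hk) with h | h
    · rw [h, Nat.mod_self]
      have : k = n - 1 := by omega
      rw [this]; exact hwrap
    · rw [Nat.mod_eq_of_lt h]; exact hchain k h
  have hg0 : g 0 = f (S 0) := hgf 0 (by omega)
  have hgn : g n = f (S 0) := if_neg (lt_irrefl n)
  set w : H.Walk (f (S 0)) (f (S 0)) := (pathWalk H g n hadjg).copy hg0 hgn with hwdef
  have hwlen : w.length = n := by simp [hwdef]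
  have hwget : ∀ i, w.getVert i = g (min i n) := by
    intro i; simp [hwdef, pathWalk_getVert]
  have hwsupp : w.support = (List.range (n+1)).map g := by
    simp [hwdef, pathWalk_support]
  have hwedges : w.edges = (List.range n).map (fun k => s(g k, g (k+1))) := by
    simp [hwdef, pathWalk_edges]
  have hmodlt : ∀ k, k < n → (k+1) % n < n := fun k hk => Nat.mod_lt _ (by omega)
  have hmodinj : ∀ k < n, ∀ k' < n, (k+1) % n = (k'+1) % n → k = k' := by
    intro k hk k' hk' h
    rcases eq_or_lt_of_le (show k + 1 ≤ n from hk) with h1 | h1 <;>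
      rcases eq_or_lt_of_le (show k' + 1 ≤ n from hk') with h2 | h2
    · omega
    · rw [h1, Nat.mod_self, Nat.mod_eq_of_lt h2] at h; omega
    · rw [h2, Nat.mod_self, Nat.mod_eq_of_lt h1] at h; omega
    · rw [Nat.mod_eq_of_lt h1, Nat.mod_eq_of_lt h2] at h; omega
  have hwcycle : w.IsCycle := by
    rw [Walk.isCycle_def]
    refine ⟨?_, ?_, ?_⟩
    · rw [Walk.isTrail_def, hwedges]
      refine List.Nodup.map_on ?_ List.nodup_range
      intro k hk k' hk' he
      rw [List.mem_range] at hk hk'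
      rw [hgf k hk, hgf k' hk', hgsucc k hk, hgsucc k' hk'] at he
      rcases Sym2.eq_iff.mp he with ⟨h1, h2⟩ | ⟨h1, h2⟩
      · exact hfS k hk k' hk' h1
      · have e1 := hfS k hk _ (hmodlt k' hk') h1
        have e2 := hfS _ (hmodlt k hk) k' hk' h2
        rcases eq_or_lt_of_le (show k + 1 ≤ n from hk) with g1 | g1 <;>
          rcases eq_or_lt_of_le (show k' + 1 ≤ n from hk') with g2 | g2
        · omega
        · rw [g1, Nat.mod_self] at e2
          rw [Nat.mod_eq_of_lt g2] at e1
          omega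
        · rw [g2, Nat.mod_self] at e1
          rw [Nat.mod_eq_of_lt g1] at e2
          omega
        · rw [Nat.mod_eq_of_lt g1] at e2
          rw [Nat.mod_eq_of_lt g2] at e1
          omega
    · intro hnil
      rw [hnil] at hwlen
      simp at hwlen
      omega
    · rw [hwsupp, List.range_succ_eq_map]
      simp only [List.map_cons, List.tail_cons, List.map_map]
      refine List.Nodup.map_on ?_ List.nodup_range
      intro k hk k' hk' he
      rw [List.mem_range] at hk hk'
      simp only [Function.comp] at he
      rw [hgsucc k hk, hgsucc k' hk'] at he
      exact hmodinj k hk k' hk' (hfS _ (hmodlt k hk) _ (hmodlt k' hk') he)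
  have hsupmem : ∀ x ∈ w.support, ∃ k < n, x = f (S k) := by
    intro x hx
    rw [hwsupp, List.mem_map] at hx
    obtain ⟨m, hm, hxm⟩ := hx
    rw [List.mem_range] at hm
    rcases eq_or_lt_of_le (Nat.lt_succ_iff.mp hm) with h | h
    · exact ⟨0, by omega, by rw [← hxm, h, hgn]⟩
    · exact ⟨m, h, by rw [← hxm, hgf m h]⟩
  have hsub : ∀ k < n, w.toSubgraph.Adj (f (S k)) (f (S ((k+1) % n))) := by
    intro k hk
    rw [Walk.toSubgraph_adj_iff]
    refine ⟨k, ?_, by omega⟩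
    rw [hwget, hwget, min_eq_left hk.le, min_eq_left (by omega), hgf k hk, hgsucc k hk]
  have hchordex : ∃ x y, x ∈ w.support ∧ y ∈ w.support ∧ H.Adj x y ∧ ¬ w.toSubgraph.Adj x y := by
    by_contra hno
    push_neg at hno
    exact hchordal _ w ⟨hwcycle, by omega, fun x y hx hy hadj => hno x y hx hy hadj⟩
  have main : ∀ a b, a < b → b < n → H.Adj (f (S a)) (f (S b)) →
      ¬ w.toSubgraph.Adj (f (S a)) (f (S b)) →
      ∃ a b, a + 2 ≤ b ∧ b < n ∧ ¬(a = 0 ∧ b = n - 1) ∧ s(f (S a), f (S b)) ∈ Ep := by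
    intro a b hab hbn hadj hnadj'
    by_cases hcons : b = a + 1
    · exfalso
      apply hnadj'
      have := hsub a (by omega)
      rwa [Nat.mod_eq_of_lt (by omega : a + 1 < n), ← hcons] at this
    by_cases hwrapc : a = 0 ∧ b = n - 1
    · exfalso
      apply hnadj'
      have := hsub (n-1) (by omega)
      rw [show n - 1 + 1 = n by omega, Nat.mod_self] at this
      rw [hwrapc.1, hwrapc.2]
      exact this.symm
    rcases hHadj (S a) (S b) (hlt a (by omega)) (hlt b hbn) hadj with hEp' | hc | hc | hc | hc
    · exact ⟨a, b, by omega, hbn, hwrapc, hEp'⟩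
    · exfalso
      apply hcons
      by_contra hne'
      have h1 := hmono a (a+1) (by omega) (by omega)
      have h2 := hmono (a+1) b (by omega) hbn
      omega
    · have := hmono a b hab hbn; omega
    · exfalso
      apply hwrapc
      constructor
      · by_contra h0
        have := hmono 0 a (by omega) (by omega)
        omega
      · by_contra hb1
        have h1 := hmono b (n-1) (by omega) (by omega)
        have h2 := hlt (n-1) (by omega)
        omega
    · have := hmono a b hab hbn; omega
  have hchordfound : ∃ a b, a + 2 ≤ b ∧ b < n ∧ ¬(a = 0 ∧ b = n - 1) ∧
      s(f (S a), f (S b)) ∈ Ep := by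
    obtain ⟨x, y, hxs, hys, hxy, hnadj⟩ := hchordex
    obtain ⟨a0, ha0, hxa⟩ := hsupmem x hxs
    obtain ⟨b0, hb0, hyb⟩ := hsupmem y hys
    subst hxa; subst hyb
    have hne : a0 ≠ b0 := fun h => hxy.ne (by rw [h])
    rcases lt_or_gt_of_ne hne with h | h
    · exact main a0 b0 h hb0 hxy hnadj
    · exact main b0 a0 h ha0 hxy.symm (fun hadj => hnadj hadj.symm)
  obtain ⟨a, b, hab2, hbn, hnotwrap, hchordEp⟩ := hchordfound
  have hnw : ¬(a = 0) ∨ ¬(b = n - 1) := not_and_or.mp hnotwrap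
  set n₁ := b - a + 1 with hn1
  set n₂ := n - b + a + 1 with hn2
  set S₁ : ℕ → ℕ := fun k => S (a + k) with hS1
  set S₂ : ℕ → ℕ := fun k => if k ≤ a then S k else S (k + b - a - 1) with hS2
  have hfab : f (S a) ≠ f (S b) := by
    intro h
    have := hfS a (by omega) b hbn h
    omega
  have hchadj : H.Adj (f (S a)) (f (S b)) := hEpAdj _ _ hchordEp hfab
  have h3n1 : 3 ≤ n₁ := by omega
  have hn1lt : n₁ < n := by omega
  have h3n2 : 3 ≤ n₂ := by omega
  have hn2lt : n₂ < n := by omega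
  have hmono1 : ∀ k l, k < l → l < n₁ → S₁ k < S₁ l :=
    fun k l hkl hl => hmono (a+k) (a+l) (by omega) (by omega)
  have hlt1 : ∀ k < n₁, S₁ k < ℓ := fun k hk => hlt (a+k) (by omega)
  have hchain1 : ∀ k, k + 1 < n₁ → H.Adj (f (S₁ k)) (f (S₁ (k+1))) := by
    intro k hk
    have h := hchain (a+k) (by omega)
    simp only [hS1]
    rw [show a + (k+1) = (a+k)+1 by omega]
    exact h
  have hwrap1 : H.Adj (f (S₁ (n₁ - 1))) (f (S₁ 0)) := by
    simp only [hS1]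
    rw [show a + (n₁ - 1) = b by omega, show a + 0 = a by omega]
    exact hchadj.symm
  have IH1 := ih n₁ hn1lt h3n1 S₁ hmono1 hlt1 hchain1 hwrap1
  have hS2a : ∀ k, k ≤ a → S₂ k = S k := fun k hk => if_pos hk
  have hS2b : ∀ k, a < k → S₂ k = S (k + b - a - 1) := fun k hk => if_neg (by omega)
  have hS2idx : ∀ k, a < k → k < n₂ → k + b - a - 1 < n := by intro k h1 h2; omega
  have hmono2 : ∀ k l, k < l → l < n₂ → S₂ k < S₂ l := by
    intro k l hkl hl
    by_cases hk : k ≤ a <;> by_cases hl' : l ≤ a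
    · rw [hS2a k hk, hS2a l hl']
      exact hmono k l hkl (by omega)
    · rw [hS2a k hk, hS2b l (by omega)]
      have h1 : S k ≤ S a := by
        rcases eq_or_lt_of_le hk with h | h
        · rw [h]
        · exact (hmono k a h (by omega)).le
      have h2 : S a < S (l + b - a - 1) := by
        have hb : b ≤ l + b - a - 1 := by omega
        rcases eq_or_lt_of_le hb with h | h
        · rw [← h]; exact hmono a b (by omega) hbn
        · exact hmono a _ (by omega) (hS2idx l (by omega) hl)
      omega
    · omega
    · rw [hS2b k (by omega), hS2b l (by omega)]
      exact hmono _ _ (by omega) (hS2idx l (by omega) hl)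
  have hlt2 : ∀ k < n₂, S₂ k < ℓ := by
    intro k hk
    by_cases h : k ≤ a
    · rw [hS2a k h]; exact hlt k (by omega)
    · rw [hS2b k (by omega)]; exact hlt _ (hS2idx k (by omega) hk)
  have hchain2 : ∀ k, k + 1 < n₂ → H.Adj (f (S₂ k)) (f (S₂ (k+1))) := by
    intro k hk
    rcases lt_trichotomy k a with h | h | h
    · rw [hS2a k h.le, hS2a (k+1) h]
      exact hchain k (by omega)
    · subst h
      rw [hS2a k le_rfl, hS2b (k+1) (by omega), show k + 1 + b - k - 1 = b by omega]
      exact hchadj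
    · rw [hS2b k h, hS2b (k+1) (by omega), show k + 1 + b - a - 1 = (k + b - a - 1) + 1 by omega]
      exact hchain _ (by omega)
  have hwrap2 : H.Adj (f (S₂ (n₂ - 1))) (f (S₂ 0)) := by
    rw [hS2b (n₂ - 1) (by omega), hS2a 0 (by omega), show n₂ - 1 + b - a - 1 = n - 1 by omega]
    exact hwrap
  have IH2 := ih n₂ hn2lt h3n2 S₂ hmono2 hlt2 hchain2 hwrap2
  -- set inclusions
  have hA1A : {e ∈ Ep | ∀ x ∈ e, ∃ k < n₁, x = f (S₁ k)} ⊆ A := by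
    rintro e ⟨heEp, he⟩
    refine ⟨heEp, fun x hx => ?_⟩
    obtain ⟨k, hk, h⟩ := he x hx
    exact ⟨a + k, by omega, h⟩
  have hA2A : {e ∈ Ep | ∀ x ∈ e, ∃ k < n₂, x = f (S₂ k)} ⊆ A := by
    rintro e ⟨heEp, he⟩
    refine ⟨heEp, fun x hx => ?_⟩
    obtain ⟨k, hk, h⟩ := he x hx
    by_cases hka : k ≤ a
    · exact ⟨k, by omega, by rwa [hS2a k hka] at h⟩
    · exact ⟨k + b - a - 1, hS2idx k (by omega) hk, by rwa [hS2b k (by omega)] at h⟩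
  have hA12 : {e ∈ Ep | ∀ x ∈ e, ∃ k < n₁, x = f (S₁ k)} ∩
      {e ∈ Ep | ∀ x ∈ e, ∃ k < n₂, x = f (S₂ k)} ⊆ {s(f (S a), f (S b))} := by
    rintro e ⟨⟨heEp, he1⟩, ⟨-, he2⟩⟩
    have hmemv : ∀ x ∈ e, x = f (S a) ∨ x = f (S b) := by
      intro x hx
      obtain ⟨k, hk, h1⟩ := he1 x hx
      obtain ⟨k', hk', h2⟩ := he2 x hx
      simp only [hS1] at h1
      by_cases hka : k' ≤ a
      · rw [hS2a k' hka] at h2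
        have heq : f (S (a + k)) = f (S k') := by rw [← h1]; exact h2
        have := hfS (a+k) (by omega) k' (by omega) heq
        left
        rw [h1, show a + k = a by omega]
      · rw [hS2b k' (by omega)] at h2
        have heq : f (S (a + k)) = f (S (k' + b - a - 1)) := by rw [← h1]; exact h2
        have := hfS (a+k) (by omega) _ (hS2idx k' (by omega) hk') heq
        right
        rw [h1, show a + k = b by omega]
    induction e with
    | h x y =>
      have hxney : x ≠ y := by
        intro h
        exact hEpnd _ heEp (by rw [h]; exact Sym2.mk_isDiag_iff.mpr rfl)
      rcases hmemv x (by simp) with h1 | h1 <;> rcases hmemv y (Sym2.mem_mk_right x y) with h2 | h2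
      · exact absurd (h1.trans h2.symm) hxney
      · rw [Set.mem_singleton_iff, h1, h2]
      · rw [Set.mem_singleton_iff, h1, h2]; exact Sym2.eq_swap
      · exact absurd (h1.trans h2.symm) hxney
  have hchordB1 : s(f (S a), f (S b)) ∈
      {e ∈ Ep | ∃ k < n₁, e = s(f (S₁ k), f (S₁ ((k+1) % n₁)))} := by
    refine ⟨hchordEp, n₁ - 1, by omega, ?_⟩
    rw [show n₁ - 1 + 1 = n₁ by omega, Nat.mod_self]
    simp only [hS1]
    rw [show a + (n₁ - 1) = b by omega, show a + 0 = a by omega]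
    exact Sym2.eq_swap
  have hchordB2 : s(f (S a), f (S b)) ∈
      {e ∈ Ep | ∃ k < n₂, e = s(f (S₂ k), f (S₂ ((k+1) % n₂)))} := by
    refine ⟨hchordEp, a, by omega, ?_⟩
    rw [Nat.mod_eq_of_lt (show a + 1 < n₂ by omega), hS2a a le_rfl, hS2b (a+1) (by omega),
      show a + 1 + b - a - 1 = b by omega]
  have hBB : B ∪ {s(f (S a), f (S b))} ⊆
      {e ∈ Ep | ∃ k < n₁, e = s(f (S₁ k), f (S₁ ((k+1) % n₁)))} ∪
      {e ∈ Ep | ∃ k < n₂, e = s(f (S₂ k), f (S₂ ((k+1) % n₂)))} := by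
    rintro e (⟨heEp, k, hk, hek⟩ | he)
    · rcases lt_or_ge k a with hka | hka
      · right
        refine ⟨heEp, k, by omega, ?_⟩
        rw [Nat.mod_eq_of_lt (show k + 1 < n₂ by omega), hS2a k (by omega), hS2a (k+1) (by omega),
          hek, Nat.mod_eq_of_lt (show k + 1 < n by omega)]
      · rcases lt_or_ge k b with hkb | hkb
        · left
          refine ⟨heEp, k - a, by omega, ?_⟩
          rw [Nat.mod_eq_of_lt (show k - a + 1 < n₁ by omega)]
          simp only [hS1]
          rw [show a + (k - a) = k by omega, show a + (k - a + 1) = k + 1 by omega, hek,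
            Nat.mod_eq_of_lt (show k + 1 < n by omega)]
        · rcases lt_or_ge k (n-1) with hkn | hkn
          · right
            refine ⟨heEp, k - b + a + 1, by omega, ?_⟩
            rw [Nat.mod_eq_of_lt (show k - b + a + 1 + 1 < n₂ by omega),
              hS2b _ (by omega : a < k - b + a + 1), hS2b _ (by omega : a < k - b + a + 1 + 1),
              show k - b + a + 1 + b - a - 1 = k by omega,
              show k - b + a + 1 + 1 + b - a - 1 = k + 1 by omega, hek,
              Nat.mod_eq_of_lt (show k + 1 < n by omega)]
          · right
            have hk1 : k = n - 1 := by omega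
            refine ⟨heEp, n₂ - 1, by omega, ?_⟩
            rw [show n₂ - 1 + 1 = n₂ by omega, Nat.mod_self, hS2b (n₂ - 1) (by omega),
              hS2a 0 (by omega), show n₂ - 1 + b - a - 1 = n - 1 by omega, hek, hk1,
              show n - 1 + 1 = n by omega, Nat.mod_self]
    · rw [Set.mem_singleton_iff] at he
      subst he
      exact Or.inl hchordB1
  have hchordnB : s(f (S a), f (S b)) ∉ B := by
    rintro ⟨-, k, hk, hek⟩
    have hk1 : (k+1) % n < n := Nat.mod_lt _ (by omega)
    rcases Sym2.eq_iff.mp hek with ⟨h1, h2⟩ | ⟨h1, h2⟩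
    · have e1 := hfS a (by omega) k (by omega) h1
      have e2 := hfS b (by omega) _ hk1 h2
      rcases eq_or_lt_of_le (show k + 1 ≤ n from hk) with h | h
      · rw [h, Nat.mod_self] at e2; omega
      · rw [Nat.mod_eq_of_lt h] at e2; omega
    · have e1 := hfS a (by omega) _ hk1 h1
      have e2 := hfS b (by omega) k (by omega) h2
      rcases eq_or_lt_of_le (show k + 1 ≤ n from hk) with h | h
      · rw [h, Nat.mod_self] at e1
        exact hnotwrap ⟨by omega, by omega⟩
      · rw [Nat.mod_eq_of_lt h] at e1; omega
  -- cardinal arithmetic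
  have hA1fin := hAfin.subset hA1A
  have hA2fin := hAfin.subset hA2A
  have hB1fin := hA1fin.subset (hBAgen n₁ S₁ (by omega))
  have hB2fin := hA2fin.subset (hBAgen n₂ S₂ (by omega))
  have hBfin := hAfin.subset hBA
  have he1 : ({e ∈ Ep | ∀ x ∈ e, ∃ k < n₁, x = f (S₁ k)} ∪
        {e ∈ Ep | ∀ x ∈ e, ∃ k < n₂, x = f (S₂ k)}).ncard +
      ({e ∈ Ep | ∀ x ∈ e, ∃ k < n₁, x = f (S₁ k)} ∩
        {e ∈ Ep | ∀ x ∈ e, ∃ k < n₂, x = f (S₂ k)}).ncard =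
      {e ∈ Ep | ∀ x ∈ e, ∃ k < n₁, x = f (S₁ k)}.ncard +
      {e ∈ Ep | ∀ x ∈ e, ∃ k < n₂, x = f (S₂ k)}.ncard :=
    Set.ncard_union_add_ncard_inter _ _ hA1fin hA2fin
  have hu1 : ({e ∈ Ep | ∀ x ∈ e, ∃ k < n₁, x = f (S₁ k)} ∪
      {e ∈ Ep | ∀ x ∈ e, ∃ k < n₂, x = f (S₂ k)}).ncard ≤ A.ncard :=
    Set.ncard_le_ncard (Set.union_subset hA1A hA2A) hAfin
  have hi1 : ({e ∈ Ep | ∀ x ∈ e, ∃ k < n₁, x = f (S₁ k)} ∩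
      {e ∈ Ep | ∀ x ∈ e, ∃ k < n₂, x = f (S₂ k)}).ncard ≤ 1 := by
    have := Set.ncard_le_ncard hA12 (Set.finite_singleton _)
    simpa using this
  have he2 : ({e ∈ Ep | ∃ k < n₁, e = s(f (S₁ k), f (S₁ ((k+1) % n₁)))} ∪
        {e ∈ Ep | ∃ k < n₂, e = s(f (S₂ k), f (S₂ ((k+1) % n₂)))}).ncard +
      ({e ∈ Ep | ∃ k < n₁, e = s(f (S₁ k), f (S₁ ((k+1) % n₁)))} ∩
        {e ∈ Ep | ∃ k < n₂, e = s(f (S₂ k), f (S₂ ((k+1) % n₂)))}).ncard =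
      {e ∈ Ep | ∃ k < n₁, e = s(f (S₁ k), f (S₁ ((k+1) % n₁)))}.ncard +
      {e ∈ Ep | ∃ k < n₂, e = s(f (S₂ k), f (S₂ ((k+1) % n₂)))}.ncard :=
    Set.ncard_union_add_ncard_inter _ _ hB1fin hB2fin
  have hu2 : B.ncard + 1 ≤ ({e ∈ Ep | ∃ k < n₁, e = s(f (S₁ k), f (S₁ ((k+1) % n₁)))} ∪
      {e ∈ Ep | ∃ k < n₂, e = s(f (S₂ k), f (S₂ ((k+1) % n₂)))}).ncard := by
    have hins : insert (s(f (S a), f (S b))) B ⊆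
        {e ∈ Ep | ∃ k < n₁, e = s(f (S₁ k), f (S₁ ((k+1) % n₁)))} ∪
        {e ∈ Ep | ∃ k < n₂, e = s(f (S₂ k), f (S₂ ((k+1) % n₂)))} := by
      rw [← Set.union_singleton]
      exact hBB
    calc B.ncard + 1 = (insert (s(f (S a), f (S b))) B).ncard :=
          (Set.ncard_insert_of_notMem hchordnB hBfin).symm
      _ ≤ _ := Set.ncard_le_ncard hins (hB1fin.union hB2fin)
  have hi2 : 1 ≤ ({e ∈ Ep | ∃ k < n₁, e = s(f (S₁ k), f (S₁ ((k+1) % n₁)))} ∩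
      {e ∈ Ep | ∃ k < n₂, e = s(f (S₂ k), f (S₂ ((k+1) % n₂)))}).ncard := by
    have hmem : s(f (S a), f (S b)) ∈
        {e ∈ Ep | ∃ k < n₁, e = s(f (S₁ k), f (S₁ ((k+1) % n₁)))} ∩
        {e ∈ Ep | ∃ k < n₂, e = s(f (S₂ k), f (S₂ ((k+1) % n₂)))} := ⟨hchordB1, hchordB2⟩
    exact (Set.ncard_pos (hB1fin.inter_of_left _)).mpr ⟨_, hmem⟩
  omega


end StmtAux

open StmtAux

/-- Let `H` (the walk `c`) be a hole of `G` of length `ℓ ≥ 4`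
(automatic from `IsHole`), and let `Ep` be a set of non-adjacent vertex pairs of
`G` such that `G + Ep` is chordal.  Then `Ep` contains at least `ℓ − 3` pairs with
both elements in `V(H)`.  (In particular, a hole of length greater than `k + 3`
cannot be made chordal by adding at most `k` edges.) -/
theorem stmt11 {V : Type*} (G : SimpleGraph V)
    {h₀ : V} (c : G.Walk h₀ h₀) (hhole : IsHole G c)
    (Ep : Set (Sym2 V)) (hEp : ∀ e ∈ Ep, ¬ e.IsDiag ∧ e ∉ G.edgeSet)
    (hchordal : ChordalGraph (editGraph G ∅ Ep)) :
    c.length - 3 ≤ {e ∈ Ep | ∀ x ∈ e, x ∈ c.support}.ncard := by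
  obtain ⟨hcyc, hlen4, hholeprop⟩ := hhole
  set ℓ := c.length with hl
  set f : ℕ → V := c.getVert with hf
  have hf0 : f ℓ = f 0 := by rw [hf, hl]; simp
  have hInj : ∀ i < ℓ, ∀ j < ℓ, f i = f j → i = j := by
    have hnd := hcyc.support_nodup
    have hsl : c.support.length = ℓ + 1 := by rw [Walk.length_support]
    have htl : c.support.tail.length = ℓ := by simp [hsl]
    have hts : ∀ m (hm : m < ℓ), c.support.tail[m]'(by omega) = f (m + 1) := by
      intro m hm
      rw [List.getElem_tail, support_getElem_eq_getVert]
    have key2 : ∀ i j, i < j → j ≤ ℓ → 1 ≤ i → f i ≠ f j := by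
      intro i j hij hj hi1 h
      have h3 : i - 1 = j - 1 := by
        refine (List.Nodup.getElem_inj_iff hnd (hi := by omega) (hj := by omega)).mp ?_
        rw [hts (i-1) (by omega), hts (j-1) (by omega),
          show i - 1 + 1 = i by omega, show j - 1 + 1 = j by omega]
        exact h
      omega
    intro i hi j hj h
    rcases lt_trichotomy i j with hij | hij | hij
    · rcases Nat.eq_zero_or_pos i with h0 | h0
      · subst h0
        exact absurd (hf0 ▸ h : f ℓ = f j).symm (key2 j ℓ hj le_rfl (by omega))
      · exact absurd h (key2 i j hij (by omega) h0)
    · exact hij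
    · rcases Nat.eq_zero_or_pos j with h0 | h0
      · subst h0
        exact absurd (hf0 ▸ h.symm : f ℓ = f i).symm (key2 i ℓ hi le_rfl (by omega))
      · exact absurd h.symm (key2 j i hij (by omega) h0)
  have hmemsup : ∀ x, x ∈ c.support ↔ ∃ k < ℓ, x = f k := by
    intro x
    rw [Walk.mem_support_iff_exists_getVert]
    constructor
    · rintro ⟨k, hk, hkl⟩
      rcases eq_or_lt_of_le hkl with h | h
      · refine ⟨0, by omega, ?_⟩
        rw [← hk, h]
        exact hf0
      · exact ⟨k, h, hk.symm⟩
    · rintro ⟨k, hk, hkx⟩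
      exact ⟨k, hkx.symm, by omega⟩
  have hEpnd : ∀ e ∈ Ep, ¬ e.IsDiag := fun e he => (hEp e he).1
  have hEpAdj : ∀ x y : V, s(x, y) ∈ Ep → x ≠ y → (editGraph G ∅ Ep).Adj x y :=
    fun x y h hne => ⟨hne, Or.inr h⟩
  have hHadj : ∀ i j, i < ℓ → j < ℓ → (editGraph G ∅ Ep).Adj (f i) (f j) →
      s(f i, f j) ∈ Ep ∨ j = i + 1 ∨ i = j + 1 ∨ (i = 0 ∧ j = ℓ - 1) ∨ (j = 0 ∧ i = ℓ - 1) := by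
    intro i j hi hj hadj
    obtain ⟨hne, hadj | hEp'⟩ := hadj
    swap
    · exact Or.inl hEp'
    right
    have hsub := hholeprop (f i) (f j)
      ((hmemsup (f i)).mpr ⟨i, hi, rfl⟩) ((hmemsup (f j)).mpr ⟨j, hj, rfl⟩) hadj.1
    rw [Walk.toSubgraph_adj_iff] at hsub
    obtain ⟨m, hm, hmlt⟩ := hsub
    rw [← hl] at hmlt
    have hinej : i ≠ j := fun h => hne (by rw [h])
    rcases Sym2.eq_iff.mp hm with ⟨h1, h2⟩ | ⟨h1, h2⟩
    · have e1 := hInj m (by omega) i hi h1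
      rcases eq_or_lt_of_le (show m + 1 ≤ ℓ from hmlt) with h | h
      · have h2' : f (m+1) = f j := h2
        rw [h] at h2'
        have := hInj 0 (by omega) j hj (hf0.symm.trans h2')
        right; right; right
        exact ⟨by omega, by omega⟩
      · have e2 := hInj (m+1) h j hj h2
        left; omega
    · have e1 := hInj m (by omega) j hj h1
      rcases eq_or_lt_of_le (show m + 1 ≤ ℓ from hmlt) with h | h
      · have h1' : f (m+1) = f i := h2
        rw [h] at h1'
        have := hInj 0 (by omega) i hi (hf0.symm.trans h1')
        right; right
        left; exact ⟨by omega, by omega⟩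
      · have e2 := hInj (m+1) h i hi h2
        right; left; omega
  have harg1 : ∀ k l, k < l → l < ℓ → (id k : ℕ) < id l := fun k l hkl _ => hkl
  have harg2 : ∀ k < ℓ, (id k : ℕ) < ℓ := fun k hk => hk
  have harg3 : ∀ k, k + 1 < ℓ → (editGraph G ∅ Ep).Adj (f (id k)) (f (id (k+1))) := by
    intro k hk
    simp only [id_eq]
    refine ⟨fun h => by have := hInj k (by omega) (k+1) hk h; omega,
      Or.inl ⟨?_, Set.notMem_empty _⟩⟩
    exact c.adj_getVert_succ (by omega)
  have harg4 : (editGraph G ∅ Ep).Adj (f (id (ℓ-1))) (f (id 0)) := by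
    simp only [id_eq]
    have hadj : G.Adj (f (ℓ-1)) (f (ℓ-1+1)) := c.adj_getVert_succ (by omega)
    rw [show ℓ - 1 + 1 = ℓ by omega] at hadj
    rw [hf0] at hadj
    exact ⟨fun h => by have := hInj (ℓ-1) (by omega) 0 (by omega) h; omega,
      Or.inl ⟨hadj, Set.notMem_empty _⟩⟩
  have hkey := key (editGraph G ∅ Ep) hchordal Ep f ℓ hEpnd hInj hEpAdj hHadj ℓ (by omega)
    id harg1 harg2 harg3 harg4
  simp only [id_eq] at hkey
  have hset : {e ∈ Ep | ∀ x ∈ e, x ∈ c.support} = {e ∈ Ep | ∀ x ∈ e, ∃ k < ℓ, x = f k} := by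
    ext e
    simp only [Set.mem_setOf_eq]
    constructor
    · rintro ⟨h1, h2⟩
      exact ⟨h1, fun x hx => (hmemsup x).mp (h2 x hx)⟩
    · rintro ⟨h1, h2⟩
      exact ⟨h1, fun x hx => (hmemsup x).mpr (h2 x hx)⟩
  rw [hset]
  omega
end

section
/- Let G be a simple graph, w a vertex of G, and H_1, …, H_n holes of G such that V(H_i) ∩ V(H_j) = {w} for all i ≠ j. Then every chordal editing set (V_-, E_-, E_+) of G with w ∉ V_- satisfies |V_-| + |E_-| + |E_+| ≥ n. -/
open SimpleGraph

variable {V : Type*}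

/-- Any walk whose support lies in `s` lifts to the induced subgraph on `s`. -/
lemma exists_walk_toInduce {H : SimpleGraph V} {s : Set V} :
    ∀ {u v : V} (p : H.Walk u v) (_ : ∀ x ∈ p.support, x ∈ s) (hu : u ∈ s) (hv : v ∈ s),
      ∃ q : (H.induce s).Walk ⟨u, hu⟩ ⟨v, hv⟩,
        q.map (SimpleGraph.Embedding.induce s).toHom = p
  | _, _, .nil, _, _, _ => ⟨.nil, rfl⟩
  | u, v, .cons h p, hp, hu, hv => by
    obtain ⟨q, hq⟩ := exists_walk_toInduce p
      (fun y hy => hp y (List.mem_cons_of_mem _ hy)) (hp _ (by simp)) hv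
    exact ⟨.cons (by exact h) q, by exact congrArg (Walk.cons h) hq⟩

/-- A hole whose support lies entirely in `s` witnesses non-chordality of the
induced subgraph on `s`. -/
lemma not_chordal_induce_of_hole {H : SimpleGraph V} {s : Set V} {v : V} (p : H.Walk v v)
    (hole : IsHole H p) (hsup : ∀ x ∈ p.support, x ∈ s) :
    ¬ ChordalGraph (H.induce s) := by
  intro hch
  obtain ⟨q, hq⟩ := exists_walk_toInduce p hsup
    (hsup _ p.start_mem_support) (hsup _ p.end_mem_support)
  refine hch _ q ⟨?_, ?_, ?_⟩
  · exact (Walk.map_isCycle_iff_of_injective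
      (f := (SimpleGraph.Embedding.induce s).toHom) Subtype.val_injective).mp
      (by rw [hq]; exact hole.1)
  · have h : p.length = q.length := by
      exact (congrArg Walk.length hq.symm).trans
        (Walk.length_map (f := (SimpleGraph.Embedding.induce s).toHom) (p := q))
    have h2 := hole.2.1
    omega
  · rintro ⟨x, hxm⟩ ⟨y, hym⟩ hx hy hadj
    have hsupport : p.support = q.support.map Subtype.val := by
      conv_lhs => rw [← hq]
      exact Walk.support_map (f := (SimpleGraph.Embedding.induce s).toHom) (p := q)
    have hxs : x ∈ p.support := by rw [hsupport]; exact List.mem_map_of_mem hx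
    have hys : y ∈ p.support := by rw [hsupport]; exact List.mem_map_of_mem hy
    have hHadj : H.Adj x y := hadj
    have hps : p.toSubgraph.Adj x y := hole.2.2 x y hxs hys hHadj
    have he : s(x, y) ∈ p.edges :=
      p.mem_edges_toSubgraph.mp (Subgraph.mem_edgeSet.mpr hps)
    have hedges := Walk.edges_map q (f := (SimpleGraph.Embedding.induce s).toHom)
    rw [hq] at hedges
    replace he : s(x, y) ∈ q.edges.map (Sym2.map (SimpleGraph.Embedding.induce (G := H) s).toHom) := by
      rw [← hedges]; exact he
    obtain ⟨e', he'q, he'eq⟩ := List.mem_map.mp he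
    have he'2 : e' = s((⟨x, hxm⟩ : s), (⟨y, hym⟩ : s)) := by
      apply Sym2.map.injective Subtype.val_injective
      rw [Sym2.map_pair_eq]
      exact he'eq
    rw [he'2] at he'q
    exact Subgraph.mem_edgeSet.mp (q.mem_edges_toSubgraph.mpr he'q)

/-- Let `w` be a vertex of `G` and `H₁, …, Hₙ` holes of `G` such
that any two distinct holes intersect exactly in `{w}`.  Then every chordal
editing set `(Vm, Em, Ep)` of `G` with `w ∉ Vm` satisfies
`|Vm| + |Em| + |Ep| ≥ n`. -/
theorem stmt12 {V : Type*} (G : SimpleGraph V) (w : V) (n : ℕ)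
    (b : Fin n → V) (c : ∀ i : Fin n, G.Walk (b i) (b i))
    (hholes : ∀ i : Fin n, IsHole G (c i))
    (hint : ∀ i j : Fin n, i ≠ j →
      {x : V | x ∈ (c i).support} ∩ {x : V | x ∈ (c j).support} = {w})
    (Vm : Set V) (Em Ep : Set (Sym2 V))
    (hces : IsChordalEditingSet G Vm Em Ep) (hw : w ∉ Vm) :
    (n : ℕ∞) ≤ Vm.encard + Em.encard + Ep.encard := by
  obtain ⟨hEm, hEp, hch⟩ := hces
  have key : ∀ i : Fin n, ∃ z : V ⊕ Sym2 V,
      (∃ x, z = Sum.inl x ∧ x ∈ Vm ∧ x ∈ (c i).support) ∨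
      (∃ e, z = Sum.inr e ∧ e ∈ Em ∧ e ∈ (c i).edges) ∨
      (∃ x y, z = Sum.inr s(x, y) ∧ s(x, y) ∈ Ep ∧
        x ∈ (c i).support ∧ y ∈ (c i).support) := by
    intro i
    by_contra hcon
    have hA : ∀ x ∈ (c i).support, x ∉ Vm := fun x hs hv =>
      hcon ⟨Sum.inl x, Or.inl ⟨x, rfl, hv, hs⟩⟩
    have hB : ∀ e ∈ (c i).edges, e ∉ Em := fun e he hm =>
      hcon ⟨Sum.inr e, Or.inr (Or.inl ⟨e, rfl, hm, he⟩)⟩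
    have hC : ∀ x y, x ∈ (c i).support → y ∈ (c i).support → s(x, y) ∉ Ep :=
      fun x y hx hy hp => hcon ⟨Sum.inr s(x, y), Or.inr (Or.inr ⟨x, y, rfl, hp, hx, hy⟩)⟩
    have hE : ∀ e ∈ (c i).edges, e ∈ (editGraph G Em Ep).edgeSet := by
      intro e
      induction e using Sym2.ind with
      | _ x y =>
        intro he
        have hadj : G.Adj x y := (G.mem_edgeSet).mp ((c i).edges_subset_edgeSet he)
        exact ((editGraph G Em Ep).mem_edgeSet).mpr ⟨hadj.ne, Or.inl ⟨hadj, hB _ he⟩⟩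
    refine not_chordal_induce_of_hole ((c i).transfer _ hE) ⟨?_, ?_, ?_⟩ ?_ hch
    · exact (hholes i).1.transfer hE
    · rw [Walk.length_transfer]
      exact (hholes i).2.1
    · intro x y hx hy hadj
      rw [Walk.support_transfer] at hx hy
      rcases hadj.2 with ⟨hGadj, _⟩ | hpe
      · have hcs : (c i).toSubgraph.Adj x y := (hholes i).2.2 x y hx hy hGadj
        have he : s(x, y) ∈ (c i).edges :=
          (c i).mem_edges_toSubgraph.mp (Subgraph.mem_edgeSet.mpr hcs)
        apply Subgraph.mem_edgeSet.mp
        apply ((c i).transfer _ hE).mem_edges_toSubgraph.mpr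
        rwa [Walk.edges_transfer]
      · exact absurd hpe (hC x y hx hy)
    · intro x hx
      rw [Walk.support_transfer] at hx
      exact hA x hx
  choose f hf using key
  have hsupmem : ∀ {i j : Fin n}, i ≠ j → ∀ {x : V},
      x ∈ (c i).support → x ∈ (c j).support → x = w := by
    intro i j hij x hxi hxj
    have h := hint i j hij
    have hx : x ∈ ({x : V | x ∈ (c i).support} ∩ {x : V | x ∈ (c j).support}) := ⟨hxi, hxj⟩
    rw [h] at hx
    exact hx
  have finj : Function.Injective f := by
    intro i j hij
    by_contra hne
    rcases hf i with ⟨x, hxeq, hxVm, hxs⟩ | ⟨e, heeq, heEm, hes⟩ | ⟨x, y, heq, hep, hxs, hys⟩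
    · rcases hf j with ⟨x', hxeq', hxVm', hxs'⟩ | ⟨e', heeq', _, _⟩ | ⟨x', y', heq', _, _, _⟩
      · rw [hxeq, hxeq'] at hij
        obtain rfl : x = x' := by injection hij
        exact hw (hsupmem hne hxs hxs' ▸ hxVm)
      · rw [hxeq, heeq'] at hij; exact nomatch hij
      · rw [hxeq, heq'] at hij; exact nomatch hij
    · rcases hf j with ⟨x', hxeq', _, _⟩ | ⟨e', heeq', heEm', hes'⟩ | ⟨x', y', heq', hep', _, _⟩
      · rw [heeq, hxeq'] at hij; exact nomatch hij
      · rw [heeq, heeq'] at hij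
        obtain rfl : e = e' := by injection hij
        revert heEm hes hes'
        induction e using Sym2.ind with
        | _ a a' =>
          intro heEm hes hes'
          have ha : a = w := hsupmem hne (Walk.fst_mem_support_of_mem_edges _ hes)
            (Walk.fst_mem_support_of_mem_edges _ hes')
          have ha' : a' = w := hsupmem hne (Walk.snd_mem_support_of_mem_edges _ hes)
            (Walk.snd_mem_support_of_mem_edges _ hes')
          have hGa : G.Adj a a' := (G.mem_edgeSet).mp ((c i).edges_subset_edgeSet hes)
          exact hGa.ne (ha.trans ha'.symm)
      · rw [heeq, heq'] at hij
        obtain rfl : e = s(x', y') := by injection hij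
        exact (hEp _ hep').2 (hEm heEm)
    · rcases hf j with ⟨x', hxeq', _, _⟩ | ⟨e', heeq', heEm', hes'⟩ | ⟨x', y', heq', hep', hxs', hys'⟩
      · rw [heq, hxeq'] at hij; exact nomatch hij
      · rw [heq, heeq'] at hij
        obtain heq2 : s(x, y) = e' := by injection hij
        rw [← heq2] at hes'
        have hx : x = w := hsupmem hne hxs (Walk.fst_mem_support_of_mem_edges _ hes')
        have hy : y = w := hsupmem hne hys (Walk.snd_mem_support_of_mem_edges _ hes')
        have hGa : G.Adj x y := (G.mem_edgeSet).mp ((c j).edges_subset_edgeSet hes')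
        exact hGa.ne (hx.trans hy.symm)
      · rw [heq, heq'] at hij
        obtain heq2 : s(x, y) = s(x', y') := by injection hij
        have hx'i : x' ∈ (c i).support ∧ y' ∈ (c i).support := by
          rcases Sym2.eq_iff.mp heq2 with ⟨rfl, rfl⟩ | ⟨rfl, rfl⟩
          · exact ⟨hxs, hys⟩
          · exact ⟨hys, hxs⟩
        have hxw : x' = w := hsupmem hne hx'i.1 hxs'
        have hyw : y' = w := hsupmem hne hx'i.2 hys'
        have hnd : ¬ (s(x', y') : Sym2 V).IsDiag := (hEp _ (heq2 ▸ hep)).1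
        exact hnd (by rw [hxw, hyw]; exact Sym2.mk_isDiag_iff.mpr rfl)
  set T : Set (V ⊕ Sym2 V) := Sum.inl '' Vm ∪ Sum.inr '' (Em ∪ Ep) with hT
  have hrange : Set.range f ⊆ T := by
    rintro z ⟨i, rfl⟩
    rcases hf i with ⟨x, hxeq, hxVm, _⟩ | ⟨e, heeq, heEm, _⟩ | ⟨x, y, heq, hep, _, _⟩
    · exact Or.inl ⟨x, hxVm, hxeq.symm⟩
    · exact Or.inr ⟨e, Or.inl heEm, heeq.symm⟩
    · exact Or.inr ⟨s(x, y), Or.inr hep, heq.symm⟩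
  have hn : (n : ℕ∞) ≤ T.encard := by
    have h1 : (Set.range f).encard = (n : ℕ∞) := by
      rw [← Set.image_univ, finj.encard_image, Set.encard_univ]
      simp
    rw [← h1]
    exact Set.encard_le_encard hrange
  have hdisj1 : Disjoint (Sum.inl '' Vm : Set (V ⊕ Sym2 V)) (Sum.inr '' (Em ∪ Ep)) := by
    rw [Set.disjoint_left]
    rintro z ⟨x, _, rfl⟩ ⟨e, _, h⟩
    exact nomatch h
  have hdisj2 : Disjoint Em Ep := by
    rw [Set.disjoint_left]
    intro e heM heP
    exact (hEp e heP).2 (hEm heM)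
  have hTcard : T.encard = Vm.encard + Em.encard + Ep.encard := by
    rw [hT, Set.encard_union_eq hdisj1, Sum.inl_injective.encard_image,
      Sum.inr_injective.encard_image, Set.encard_union_eq hdisj2, add_assoc]
  rwa [hTcard] at hn
end

section
/- Let G be a simple graph, let H be a shortest hole of G, and let v_1, v_2, v_3 be three consecutive vertices of H. Let G' be the graph obtained from G by deleting all vertices of N[v_2] ∖ {v_1, v_3} other than v_1 and v_3 (in particular, v_2 is deleted). Then the minimum length of a v_1–v_3 path in G' equals |V(H)| − 2, and for any shortest v_1–v_3 path P in G', the cycle obtained from P by appending v_2 (adjacent to both v_1 and v_3) is a hole of G of length |V(H)|. -/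
open SimpleGraph

variable {V : Type*}

namespace Stmt13Aux

open SimpleGraph Walk

variable {G : SimpleGraph V}

/-- A walk of length `1` joins adjacent vertices. -/
lemma adj_of_length_eq_one {u v : V} {w : G.Walk u v} (h : w.length = 1) : G.Adj u v := by
  cases w with
  | nil => simp at h
  | cons h' q =>
    have h0 : q.length = 0 := by simpa using h
    exact (Walk.eq_of_length_eq_zero h0) ▸ h'

/-- A path from a vertex to itself has length `0`. -/
lemma length_eq_zero_of_isPath_loop {u : V} {p : G.Walk u u} (hp : p.IsPath) :
    p.length = 0 := by
  cases p with
  | nil => rfl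
  | cons h q =>
    exfalso
    have hnd := hp.support_nodup
    rw [Walk.support_cons, List.nodup_cons] at hnd
    exact hnd.1 q.end_mem_support

/-- If a path contains the edge joining its endpoints, it has length `1`. -/
lemma length_eq_one_of_endpoints_edge {u v : V} {p : G.Walk u v} (hp : p.IsPath)
    (he : s(u, v) ∈ p.edges) : p.length = 1 := by
  induction p with
  | nil => simp at he
  | @cons a c b h q ih =>
    rw [Walk.edges_cons, List.mem_cons] at he
    rcases he with he | he
    · rw [Sym2.eq_iff] at he
      rcases he with ⟨-, rfl⟩ | ⟨rfl, rfl⟩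
      · have h0 : q.length = 0 := length_eq_zero_of_isPath_loop hp.of_cons
        simp [h0]
      · exact absurd h (G.irrefl)
    · exfalso
      have := (Walk.cons_isPath_iff h q).mp hp
      exact this.2 (Walk.fst_mem_support_of_mem_edges q he)

/-- A path with a chord can be shortened. -/
lemma exists_shorter_of_chord {a b : V} (p : G.Walk a b) (hp : p.IsPath)
    {x y : V} (hx : x ∈ p.support) (hy : y ∈ p.support) (hadj : G.Adj x y)
    (he : s(x, y) ∉ p.edges) : ∃ q : G.Walk a b, q.length < p.length := by
  classical
  induction p with
  | nil =>
    rw [Walk.mem_support_nil_iff] at hx hy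
    subst hx; subst hy
    exact absurd hadj G.irrefl
  | @cons u c w h q ih =>
    have hpq : q.IsPath := hp.of_cons
    rw [Walk.support_cons, List.mem_cons] at hx hy
    rw [Walk.edges_cons, List.mem_cons, not_or] at he
    rcases hx with rfl | hx
    · rcases hy with rfl | hy
      · exact absurd hadj G.irrefl
      · have hyc : y ≠ c := by
          rintro rfl
          exact he.1 rfl
        have hlen := congrArg Walk.length (q.take_spec hy)
        rw [Walk.length_append] at hlen
        have htu : (q.takeUntil y hy).length ≠ 0 := fun h0 =>
          hyc (Walk.eq_of_length_eq_zero h0).symm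
        exact ⟨Walk.cons hadj (q.dropUntil y hy), by
          rw [Walk.length_cons, Walk.length_cons]; omega⟩
    · rcases hy with rfl | hy
      · have hxc : x ≠ c := by
          rintro rfl
          exact he.1 Sym2.eq_swap
        have hlen := congrArg Walk.length (q.take_spec hx)
        rw [Walk.length_append] at hlen
        have htu : (q.takeUntil x hx).length ≠ 0 := fun h0 =>
          hxc (Walk.eq_of_length_eq_zero h0).symm
        exact ⟨Walk.cons hadj.symm (q.dropUntil x hx), by
          rw [Walk.length_cons, Walk.length_cons]; omega⟩
      · obtain ⟨q', hq'⟩ := ih hpq hx hy (fun hmem => he.2 hmem)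
        exact ⟨Walk.cons h q', by rw [Walk.length_cons, Walk.length_cons]; omega⟩

/-- Every non-nil walk ends with an edge. -/
lemma exists_concat_decomp {a b : V} (w : G.Walk a b) (hw : ¬ w.Nil) :
    ∃ (x : V) (r : G.Walk a x) (h2 : G.Adj x b),
      w = r.append (Walk.cons h2 Walk.nil) := by
  induction w with
  | nil => simp at hw
  | @cons u c v h q ih =>
    cases q with
    | nil => exact ⟨u, Walk.nil, h, rfl⟩
    | cons h' q' =>
      obtain ⟨x, r, h2, hr⟩ := ih Walk.not_nil_cons
      exact ⟨x, Walk.cons h r, h2, by rw [Walk.cons_append, ← hr]⟩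

/-- Decomposition of a cycle: first edge, middle path, last edge. -/
lemma cycle_decomp {v : V} {d : G.Walk v v} (hd : d.IsCycle) :
    ∃ (x y : V) (h1 : G.Adj v x) (r : G.Walk x y) (h2 : G.Adj y v),
      d = Walk.cons h1 (r.append (Walk.cons h2 Walk.nil)) := by
  cases d with
  | nil => exact absurd hd Walk.IsCycle.not_of_nil
  | @cons u c v h q =>
    have h3 : 3 ≤ (Walk.cons h q).length := hd.three_le_length
    have hq : ¬ q.Nil := by
      rw [Walk.nil_iff_length_eq]
      rw [Walk.length_cons] at h3
      omega
    obtain ⟨x, r, h2, hr⟩ := exists_concat_decomp q hq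
    exact ⟨c, x, h, r, h2, by rw [hr]⟩

/-- From a hole `c` through consecutive `v₁ v₂ v₃`, extract non-adjacency of
`v₁ v₃` and the `v₁`–`v₃` path avoiding `N[v₂]` obtained by deleting `v₂`. -/
lemma hole_sidepath {h₀ v₁ v₂ v₃ : V} {c : G.Walk h₀ h₀} (hhole : IsHole G c)
    (h12 : c.toSubgraph.Adj v₁ v₂) (h23 : c.toSubgraph.Adj v₂ v₃) (h13 : v₁ ≠ v₃)
    (g21 : G.Adj v₂ v₁) (g23 : G.Adj v₂ v₃) :
    (¬ G.Adj v₁ v₃) ∧ ∃ r : G.Walk v₁ v₃, r.IsPath ∧ r.length = c.length - 2 ∧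
      v₂ ∉ r.support ∧ ∀ x ∈ r.support, G.Adj v₂ x → x = v₁ ∨ x = v₃ := by
  classical
  obtain ⟨hcyc, hlen4, hchord⟩ := hhole
  have hv2 : v₂ ∈ c.support := (Walk.mem_verts_toSubgraph c).mp h23.fst_mem
  have hv1s : v₁ ∈ c.support := (Walk.mem_verts_toSubgraph c).mp h12.fst_mem
  have hv3s : v₃ ∈ c.support := (Walk.mem_verts_toSubgraph c).mp h23.snd_mem
  set d := c.rotate v₂ hv2 with hd
  have hdc : d.IsCycle := hcyc.rotate hv2
  have hdlen : d.length = c.length := by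
    have h1' := congrArg Walk.length (c.take_spec hv2)
    rw [Walk.length_append] at h1'
    have h2' : d.length =
        ((c.dropUntil v₂ hv2).append (c.takeUntil v₂ hv2)).length := rfl
    rw [Walk.length_append] at h2'
    omega
  obtain ⟨x, y, h1, r, h2, hdec⟩ := cycle_decomp hdc
  have hedges : d.edges = s(v₂, x) :: (r.edges ++ [s(y, v₂)]) := by
    rw [hdec, Walk.edges_cons, Walk.edges_append, Walk.edges_cons, Walk.edges_nil]
  have hdc2 := hdc
  rw [hdec] at hdc2
  have hcons := (Walk.cons_isCycle_iff (r.append (Walk.cons h2 Walk.nil)) h1).mp hdc2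
  have hsupp : (r.append (Walk.cons h2 Walk.nil)).support = r.support ++ [v₂] := by
    simp [Walk.support_append]
  have hnodup : (r.support ++ [v₂]).Nodup := by
    have := hcons.1.support_nodup
    rwa [hsupp] at this
  have hrnodup : r.support.Nodup := (List.nodup_append.mp hnodup).1
  have hv2r : v₂ ∉ r.support := by
    intro hmem
    exact (List.nodup_append.mp hnodup).2.2 _ hmem _ (List.mem_singleton_self v₂) rfl
  have hrpath : r.IsPath := (Walk.isPath_def r).mpr hrnodup
  have hrlen : r.length = c.length - 2 := by
    have := congrArg Walk.length hdec
    rw [Walk.length_cons, Walk.length_append, Walk.length_cons, Walk.length_nil] at this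
    omega
  have key : ∀ z : V, G.Adj v₂ z → z ∈ c.support → z = x ∨ z = y := by
    intro z hadj hzs
    have hadj' : c.toSubgraph.Adj v₂ z := hchord _ _ hv2 hzs hadj
    have hz : s(v₂, z) ∈ c.edges :=
      (Walk.mem_edges_toSubgraph c).mp (Subgraph.mem_edgeSet.mpr hadj')
    have hz' : s(v₂, z) ∈ d.edges := ((c.rotate_edges v₂ hv2).mem_iff).mpr hz
    rw [hedges, List.mem_cons, List.mem_append, List.mem_singleton] at hz'
    rcases hz' with hz' | hz' | hz'
    · rw [Sym2.eq_iff] at hz'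
      rcases hz' with ⟨-, rfl⟩ | ⟨-, rfl⟩
      · exact Or.inl rfl
      · exact absurd hadj G.irrefl
    · exact absurd (Walk.fst_mem_support_of_mem_edges r hz') hv2r
    · rw [Sym2.eq_iff] at hz'
      rcases hz' with ⟨-, rfl⟩ | ⟨-, rfl⟩
      · exact absurd hadj G.irrefl
      · exact Or.inr rfl
  have hrsubc : ∀ z ∈ r.support, z ∈ c.support := by
    intro z hz
    have hzd : z ∈ d.support := by
      rw [hdec, Walk.support_cons, List.mem_cons]
      exact Or.inr (by rw [hsupp]; exact List.mem_append_left _ hz)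
    have hzv : z ∈ d.toSubgraph.verts := (Walk.mem_verts_toSubgraph d).mpr hzd
    rw [hd, Walk.toSubgraph_rotate] at hzv
    exact (Walk.mem_verts_toSubgraph c).mp hzv
  have noAdj : ∀ (r' : G.Walk v₁ v₃), r'.IsPath → r'.length = c.length - 2 →
      (∀ e ∈ r.edges, e ∈ r'.edges) → ¬ G.Adj v₁ v₃ := by
    intro r' hr'p hr'l hsub hadj13
    have hadj' : c.toSubgraph.Adj v₁ v₃ := hchord _ _ hv1s hv3s hadj13
    have hz : s(v₁, v₃) ∈ c.edges :=
      (Walk.mem_edges_toSubgraph c).mp (Subgraph.mem_edgeSet.mpr hadj')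
    have hz' : s(v₁, v₃) ∈ d.edges := ((c.rotate_edges v₂ hv2).mem_iff).mpr hz
    rw [hedges, List.mem_cons, List.mem_append, List.mem_singleton] at hz'
    rcases hz' with hz' | hz' | hz'
    · rw [Sym2.eq_iff] at hz'
      rcases hz' with ⟨h', -⟩ | ⟨-, h'⟩
      · exact g21.ne' h'
      · exact g23.ne' h'
    · have h1' := length_eq_one_of_endpoints_edge hr'p (hsub _ hz')
      omega
    · rw [Sym2.eq_iff] at hz'
      rcases hz' with ⟨-, h'⟩ | ⟨h', -⟩
      · exact g23.ne' h'
      · exact g21.ne' h'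
  have hx1 := key v₁ g21 hv1s
  have hx3 := key v₃ g23 hv3s
  rcases hx1 with rfl | rfl
  · rcases hx3 with h' | rfl
    · exact absurd h' (Ne.symm h13)
    · exact ⟨noAdj r hrpath hrlen (fun e he => he),
        r, hrpath, hrlen, hv2r, fun z hz hadj => key z hadj (hrsubc z hz)⟩
  · rcases hx3 with rfl | h'
    · refine ⟨noAdj r.reverse hrpath.reverse
          (by rw [Walk.length_reverse]; exact hrlen)
          (fun e he => by rw [Walk.edges_reverse]; exact List.mem_reverse.mpr he),
        r.reverse, hrpath.reverse, by rw [Walk.length_reverse]; exact hrlen, ?_, ?_⟩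
      · rw [Walk.support_reverse]
        exact fun hm => hv2r (List.mem_reverse.mp hm)
      · intro z hz hadj
        rw [Walk.support_reverse, List.mem_reverse] at hz
        rcases key z hadj (hrsubc z hz) with rfl | rfl
        · exact Or.inr rfl
        · exact Or.inl rfl
    · exact absurd h' (Ne.symm h13)

/-- Lift a walk of `G` all of whose vertices lie in `S` to `G.induce S`. -/
lemma exists_lift (S : Set V) :
    ∀ {a b : V} (w : G.Walk a b), (∀ x ∈ w.support, x ∈ S) →
    ∀ (ha : a ∈ S) (hb : b ∈ S),
    ∃ p : (G.induce S).Walk ⟨a, ha⟩ ⟨b, hb⟩,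
      p.map (Embedding.induce S).toHom = w := by
  intro a b w
  induction w with
  | nil =>
    intro _ ha hb
    exact ⟨Walk.nil, rfl⟩
  | @cons u c v h q ih =>
    intro hS ha hb
    have hc : c ∈ S := hS c (by simp)
    obtain ⟨p, hp⟩ := ih (fun x hx => hS x (by simp [hx])) hc hb
    refine ⟨Walk.cons (by exact h : (G.induce S).Adj ⟨u, ha⟩ ⟨c, hc⟩) p, ?_⟩
    erw [Walk.map_cons, hp]
    rfl

/-- Appending `v₂` to a minimum-length `v₁v₃`-path of the reduced graph yields a
hole of `G`. -/
lemma main_hole {v₁ v₂ v₃ : V} {S : Set V}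
    (g21 : G.Adj v₂ v₁) (g23 : G.Adj v₂ v₃) (h13 : v₁ ≠ v₃) (hn13 : ¬ G.Adj v₁ v₃)
    (hv2S : v₂ ∉ S) (hSN : ∀ x ∈ S, G.Adj v₂ x → x = v₁ ∨ x = v₃)
    (hv1 : v₁ ∈ S) (hv3 : v₃ ∈ S)
    (p : (G.induce S).Walk ⟨v₁, hv1⟩ ⟨v₃, hv3⟩) (hp : p.IsPath)
    (hmin : ∀ q : (G.induce S).Walk ⟨v₁, hv1⟩ ⟨v₃, hv3⟩, q.IsPath → p.length ≤ q.length) :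
    IsHole G (Walk.cons g21 ((p.map (Embedding.induce S).toHom).append
        (Walk.cons g23.symm Walk.nil))) ∧
      (Walk.cons g21 ((p.map (Embedding.induce S).toHom).append
        (Walk.cons g23.symm Walk.nil))).length = p.length + 2 := by
  classical
  set f := (Embedding.induce (G := G) S).toHom with hf
  have hinj : Function.Injective f := fun a b h => Subtype.val_injective h
  have hqsupp : ∀ z ∈ (p.map f).support, z ∈ S := by
    intro z hz
    rw [Walk.support_map] at hz
    obtain ⟨y, hy, rfl⟩ := List.mem_map.mp hz
    exact y.2
  have hqpath : (p.map f).IsPath := (Walk.map_isPath_iff_of_injective hinj).mpr hp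
  have hv2q : v₂ ∉ (p.map f).support := fun h => hv2S (hqsupp _ h)
  have hr0supp : ((p.map f).append (Walk.cons g23.symm Walk.nil)).support
      = (p.map f).support ++ [v₂] := by
    simp [Walk.support_append]
    rfl
  have hr0edges : ((p.map f).append (Walk.cons g23.symm Walk.nil)).edges
      = (p.map f).edges ++ [s(v₃, v₂)] := by
    erw [Walk.edges_append, Walk.edges_cons, Walk.edges_nil]
    rfl
  have hr0path : ((p.map f).append (Walk.cons g23.symm Walk.nil)).IsPath := by
    rw [Walk.isPath_def, hr0supp, List.nodup_append]
    exact ⟨hqpath.support_nodup, List.nodup_singleton _, by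
      intro a ha b hb hab
      rw [List.mem_singleton] at hb
      rw [hab, hb] at ha
      exact hv2q ha⟩
  have hcyc : (Walk.cons g21 ((p.map f).append (Walk.cons g23.symm Walk.nil))).IsCycle := by
    erw [Walk.cons_isCycle_iff]
    refine ⟨hr0path, ?_⟩
    erw [hr0edges, List.mem_append, List.mem_singleton]
    rintro (h | h)
    · exact hv2q (Walk.fst_mem_support_of_mem_edges _ h)
    · rw [Sym2.eq_iff] at h
      rcases h with ⟨h1, -⟩ | ⟨-, h1⟩
      · exact g23.ne h1
      · exact h13 h1
  have hlen : (Walk.cons g21 ((p.map f).append (Walk.cons g23.symm Walk.nil))).length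
      = p.length + 2 := by
    erw [Walk.length_cons, Walk.length_append, Walk.length_cons, Walk.length_nil,
      Walk.length_map]
  have hplen2 : 2 ≤ p.length := by
    by_contra hlt
    push_neg at hlt
    have h01 : p.length = 0 ∨ p.length = 1 := by omega
    rcases h01 with h0 | h0
    · have := Walk.eq_of_length_eq_zero h0
      exact h13 (congrArg Subtype.val this)
    · have hadj := adj_of_length_eq_one h0
      exact hn13 hadj
  have hedgesw : (Walk.cons g21 ((p.map f).append (Walk.cons g23.symm Walk.nil))).edges
      = s(v₂, v₁) :: ((p.map f).edges ++ [s(v₃, v₂)]) := by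
    erw [Walk.edges_cons, hr0edges]
  have hsuppw : ∀ z ∈ (Walk.cons g21 ((p.map f).append (Walk.cons g23.symm Walk.nil))).support,
      z = v₂ ∨ z ∈ (p.map f).support := by
    intro z hz
    erw [Walk.support_cons, List.mem_cons, hr0supp, List.mem_append, List.mem_singleton] at hz
    tauto
  show IsHole G (Walk.cons g21 ((p.map f).append (Walk.cons g23.symm Walk.nil))) ∧
    (Walk.cons g21 ((p.map f).append (Walk.cons g23.symm Walk.nil))).length = p.length + 2
  refine ⟨⟨hcyc, by omega, ?_⟩, hlen⟩
  intro a b haw hbw hadj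
  suffices hmem : s(a, b) ∈ (Walk.cons g21 ((p.map f).append (Walk.cons g23.symm Walk.nil))).edges by
    exact Subgraph.mem_edgeSet.mp ((Walk.mem_edges_toSubgraph _).mpr hmem)
  rcases hsuppw a haw with rfl | ha
  · rcases hsuppw b hbw with rfl | hb
    · exact absurd hadj G.irrefl
    · rcases hSN b (hqsupp b hb) hadj with rfl | rfl
      · rw [hedgesw]
        exact List.mem_cons_self
      · rw [hedgesw, List.mem_cons, List.mem_append, List.mem_singleton]
        exact Or.inr (Or.inr Sym2.eq_swap)
  · rcases hsuppw b hbw with rfl | hb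
    · rcases hSN a (hqsupp a ha) hadj.symm with rfl | rfl
      · rw [hedgesw, List.mem_cons]
        exact Or.inl Sym2.eq_swap
      · rw [hedgesw, List.mem_cons, List.mem_append, List.mem_singleton]
        exact Or.inr (Or.inr rfl)
    · rw [Walk.support_map] at ha hb
      obtain ⟨a', ha', rfl⟩ := List.mem_map.mp ha
      obtain ⟨b', hb', rfl⟩ := List.mem_map.mp hb
      by_cases hab : s(a', b') ∈ p.edges
      · rw [hedgesw, List.mem_cons, List.mem_append]
        refine Or.inr (Or.inl ?_)
        rw [Walk.edges_map]
        have := List.mem_map_of_mem (f := Sym2.map f) hab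
        rwa [Sym2.map_pair_eq] at this
      · exfalso
        have hadj' : (G.induce S).Adj a' b' := hadj
        obtain ⟨q', hq'⟩ := exists_shorter_of_chord p hp ha' hb' hadj' hab
        have hb1 := hmin q'.bypass q'.bypass_isPath
        have hb2 := q'.length_bypass_le
        omega

end Stmt13Aux

/-- Let `H` (the walk `c`) be a shortest hole of `G` and
`v₁, v₂, v₃` three consecutive vertices of `H`.  Let `G'` be obtained from `G` by
deleting all vertices of `N[v₂] \ {v₁, v₃}` (in particular `v₂` is deleted), i.e.
`G' = G.induce ((N[v₂] \ {v₁, v₃})ᶜ)`.  Then the minimum length of a `v₁`–`v₃`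
path in `G'` equals `|V(H)| − 2`, and for any shortest `v₁`–`v₃` path `P` of `G'`,
the closed walk obtained from `P` by appending `v₂` is a hole of `G` of length
`|V(H)|`. -/
theorem stmt13 {V : Type*} (G : SimpleGraph V) {h₀ : V} (c : G.Walk h₀ h₀)
    (hhole : IsHole G c)
    (hshortest : ∀ (w : V) (d : G.Walk w w), IsHole G d → c.length ≤ d.length)
    (v₁ v₂ v₃ : V)
    (h12 : c.toSubgraph.Adj v₁ v₂) (h23 : c.toSubgraph.Adj v₂ v₃) (h13 : v₁ ≠ v₃)
    (g21 : G.Adj v₂ v₁) (g23 : G.Adj v₂ v₃)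
    (hv1 : v₁ ∈ (((G.neighborSet v₂ ∪ {v₂}) \ {v₁, v₃} : Set V))ᶜ)
    (hv3 : v₃ ∈ (((G.neighborSet v₂ ∪ {v₂}) \ {v₁, v₃} : Set V))ᶜ) :
    (∃ p : (G.induce (((G.neighborSet v₂ ∪ {v₂}) \ {v₁, v₃} : Set V))ᶜ).Walk
        ⟨v₁, hv1⟩ ⟨v₃, hv3⟩, p.IsPath ∧ p.length = c.length - 2) ∧
    (∀ p : (G.induce (((G.neighborSet v₂ ∪ {v₂}) \ {v₁, v₃} : Set V))ᶜ).Walk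
        ⟨v₁, hv1⟩ ⟨v₃, hv3⟩, p.IsPath → c.length - 2 ≤ p.length) ∧
    (∀ p : (G.induce (((G.neighborSet v₂ ∪ {v₂}) \ {v₁, v₃} : Set V))ᶜ).Walk
        ⟨v₁, hv1⟩ ⟨v₃, hv3⟩, p.IsPath → p.length = c.length - 2 →
      IsHole G (SimpleGraph.Walk.cons g21
        ((p.map (SimpleGraph.Embedding.induce
          (((G.neighborSet v₂ ∪ {v₂}) \ {v₁, v₃} : Set V))ᶜ).toHom).append
          (SimpleGraph.Walk.cons g23.symm SimpleGraph.Walk.nil))) ∧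
      (SimpleGraph.Walk.cons g21
        ((p.map (SimpleGraph.Embedding.induce
          (((G.neighborSet v₂ ∪ {v₂}) \ {v₁, v₃} : Set V))ᶜ).toHom).append
          (SimpleGraph.Walk.cons g23.symm SimpleGraph.Walk.nil))).length = c.length) := by
  classical
  set S := (((G.neighborSet v₂ ∪ {v₂}) \ {v₁, v₃} : Set V))ᶜ with hS
  have h4 : 4 ≤ c.length := hhole.2.1
  have hv2S : v₂ ∉ S := by
    intro h
    rw [hS, Set.mem_compl_iff] at h
    refine h ⟨Or.inr rfl, ?_⟩
    intro hm
    rcases hm with h' | h'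
    · exact g21.ne h'
    · exact g23.ne h'
  have hSN : ∀ x ∈ S, G.Adj v₂ x → x = v₁ ∨ x = v₃ := by
    intro x hx hadj
    rw [hS, Set.mem_compl_iff, Set.mem_diff, not_and, not_not] at hx
    have := hx (Or.inl hadj)
    simpa using this
  have hinS : ∀ x : V, x ≠ v₂ → (G.Adj v₂ x → x = v₁ ∨ x = v₃) → x ∈ S := by
    intro x hx1 hx2
    rw [hS, Set.mem_compl_iff, Set.mem_diff, not_and, not_not]
    rintro (hadj | rfl)
    · simpa using hx2 hadj
    · exact absurd rfl hx1
  obtain ⟨hn13, r, hrpath, hrlen, hrv2, hrN⟩ :=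
    Stmt13Aux.hole_sidepath hhole h12 h23 h13 g21 g23
  have hrS : ∀ x ∈ r.support, x ∈ S :=
    fun x hx => hinS x (fun h => hrv2 (h ▸ hx)) (hrN x hx)
  obtain ⟨p₁, hp₁⟩ := Stmt13Aux.exists_lift S r hrS hv1 hv3
  have hinj : Function.Injective (SimpleGraph.Embedding.induce (G := G) S).toHom :=
    fun a b h => Subtype.val_injective h
  have hp₁path : p₁.IsPath := by
    rw [← hp₁] at hrpath
    exact (Walk.map_isPath_iff_of_injective hinj).mp hrpath
  have hp₁len : p₁.length = c.length - 2 := by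
    have := congrArg Walk.length hp₁
    rw [Walk.length_map] at this
    exact this.trans hrlen
  have hTne : {n : ℕ | ∃ q0 : (G.induce S).Walk ⟨v₁, hv1⟩ ⟨v₃, hv3⟩,
      q0.IsPath ∧ q0.length = n}.Nonempty := ⟨p₁.length, p₁, hp₁path, rfl⟩
  obtain ⟨p₀, hp₀path, hp₀len⟩ := Nat.sInf_mem hTne
  have hmin₀ : ∀ q0 : (G.induce S).Walk ⟨v₁, hv1⟩ ⟨v₃, hv3⟩,
      q0.IsPath → p₀.length ≤ q0.length := by
    intro q0 hq0
    rw [hp₀len]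
    exact Nat.sInf_le ⟨q0, hq0, rfl⟩
  obtain ⟨hhole₀, hlen₀⟩ :=
    Stmt13Aux.main_hole g21 g23 h13 hn13 hv2S hSN hv1 hv3 p₀ hp₀path hmin₀
  have hub : c.length ≤ p₀.length + 2 := by
    rw [← hlen₀]
    exact hshortest v₂ _ hhole₀
  have hlb : p₀.length ≤ c.length - 2 := by
    have := hmin₀ p₁ hp₁path
    omega
  refine ⟨⟨p₁, hp₁path, hp₁len⟩, ?_, ?_⟩
  · intro p hp
    have := hmin₀ p hp
    omega
  · intro p hp hplen
    have hminp : ∀ q0 : (G.induce S).Walk ⟨v₁, hv1⟩ ⟨v₃, hv3⟩,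
        q0.IsPath → p.length ≤ q0.length := by
      intro q0 hq0
      have := hmin₀ q0 hq0
      omega
    obtain ⟨hh, hl⟩ :=
      Stmt13Aux.main_hole g21 g23 h13 hn13 hv2S hSN hv1 hv3 p hp hminp
    exact ⟨hh, by rw [hl, hplen]; omega⟩
end
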